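/- arXiv:1707.02437 — 8 statements merged into one kernel-verified Lean document; each statement's English description precedes it below -/
import Mathlib

section
/- Let f : ℝ^n → ℝ^n be a smooth (continuously differentiable) vector field that is quasimonotone increasing, i.e., for each i and all x, and all a_1,...,a_n ≥ 0, f_i(x_1+a_1,...,x_{i-1}+a_{i-1}, x_i, x_{i+1}+a_{i+1},...,x_n+a_n) ≥ f_i(x). If x(t) solves x' = f(x), y(t) satisfies y'(t) ≤ f(y(t)) componentwise, and x(0) = y(0), then y(t) ≤ x(t) componentwise for all t ≥ 0. -/
/-- Chaplygin comparison lemma (lower/subsolution half): for a smooth quasimonotone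
increasing vector field `f`, a subsolution `y` starting at the same point as a solution
`x` stays componentwise below `x` for all `t ≥ 0`. -/
theorem chaplygin_subsolution {n : ℕ} (f : (Fin n → ℝ) → (Fin n → ℝ))
    (hf : ContDiff ℝ 1 f)
    (hquasi : ∀ (i : Fin n) (u : Fin n → ℝ) (a : Fin n → ℝ), (∀ j, 0 ≤ a j) →
      f u i ≤ f (fun j => if j = i then u j else u j + a j) i)
    (x y : ℝ → Fin n → ℝ) (y' : ℝ → Fin n → ℝ)
    (hx : ∀ t, 0 ≤ t → HasDerivAt x (f (x t)) t)
    (hy : ∀ t, 0 ≤ t → HasDerivAt y (y' t) t)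
    (hy' : ∀ t, 0 ≤ t → ∀ i, y' t i ≤ f (y t) i)
    (h0 : y 0 = x 0) :
    ∀ t, 0 ≤ t → ∀ i, y t i ≤ x t i := by
  intro T hT i0
  -- continuity of x and y on [0, T]
  have hxc : ContinuousOn x (Set.Icc 0 T) := fun t ht =>
    (hx t ht.1).continuousAt.continuousWithinAt
  have hyc : ContinuousOn y (Set.Icc 0 T) := fun t ht =>
    (hy t ht.1).continuousAt.continuousWithinAt
  -- bound on ‖x t‖ on [0, T]
  obtain ⟨R, hR⟩ := isCompact_Icc.exists_bound_of_continuousOn hxc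
  -- Lipschitz constant of f on closedBall 0 (R + 1)
  obtain ⟨C, hC⟩ := (isCompact_closedBall (0 : Fin n → ℝ) (R + 1)).exists_bound_of_continuousOn
    ((hf.continuous_fderiv one_ne_zero).continuousOn)
  set L : ℝ := max C 0 with hLdef
  have hL0 : 0 ≤ L := le_max_right _ _
  have hLip : ∀ u v : Fin n → ℝ, u ∈ Metric.closedBall (0 : Fin n → ℝ) (R + 1) →
      v ∈ Metric.closedBall (0 : Fin n → ℝ) (R + 1) → ‖f v - f u‖ ≤ L * ‖v - u‖ := by
    intro u v hu hv
    exact Convex.norm_image_sub_le_of_norm_fderiv_le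
      (fun z _ => hf.differentiable one_ne_zero z)
      (fun z hz => le_trans (hC z hz) (le_max_left _ _))
      (convex_closedBall _ _) hu hv
  set K : ℝ := L + 1 with hKdef
  have hK0 : 0 < K := by positivity
  -- key claim
  have key : ∀ ε : ℝ, 0 < ε → ε * Real.exp (K * T) ≤ 1 →
      ∀ t ∈ Set.Icc (0:ℝ) T, ∀ i, y t i - x t i < ε * Real.exp (K * t) := by
    intro ε hε hεT
    by_contra hcon
    push_neg at hcon
    obtain ⟨t₁, ht₁, i₁, hi₁⟩ := hcon
    set S : Set ℝ := ⋃ i : Fin n, (Set.Icc (0:ℝ) T ∩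
        (fun t => y t i - x t i - ε * Real.exp (K * t)) ⁻¹' Set.Ici 0) with hSdef
    have hSsub : S ⊆ Set.Icc 0 T := by
      intro t ht
      simp only [hSdef, Set.mem_iUnion] at ht
      obtain ⟨i, ht, _⟩ := ht
      exact ht
    have hSclosed : IsClosed S := by
      apply isClosed_iUnion_of_finite
      intro i
      refine ContinuousOn.preimage_isClosed_of_isClosed ?_ isClosed_Icc isClosed_Ici
      exact (((continuous_apply i).comp_continuousOn hyc).sub ((continuous_apply i).comp_continuousOn hxc)).sub
        (continuousOn_const.mul ((Real.continuous_exp.comp (continuous_const.mul continuous_id)).continuousOn))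
    have hSne : S.Nonempty := by
      refine ⟨t₁, ?_⟩
      simp only [hSdef, Set.mem_iUnion]
      exact ⟨i₁, ht₁, by simpa using sub_nonneg.2 hi₁⟩
    have hSbdd : BddBelow S := ⟨0, fun t ht => (hSsub ht).1⟩
    set t₀ : ℝ := sInf S with ht₀def
    have ht₀S : t₀ ∈ S := hSclosed.csInf_mem hSne hSbdd
    have ht₀Icc : t₀ ∈ Set.Icc (0:ℝ) T := hSsub ht₀S
    -- 0 ∉ S
    have h0S : (0:ℝ) ∉ S := by
      intro h
      simp only [hSdef, Set.mem_iUnion, Set.mem_inter_iff, Set.mem_preimage, Set.mem_Ici] at h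
      obtain ⟨i, -, hi⟩ := h
      rw [h0] at hi
      simp at hi
      nlinarith [Real.exp_pos (K * 0)]
    have ht₀pos : 0 < t₀ := lt_of_le_of_ne ht₀Icc.1 (fun h => h0S (h ▸ ht₀S))
    -- before t₀ everything is strictly below
    have hbefore : ∀ t ∈ Set.Ico (0:ℝ) t₀, ∀ j, y t j - x t j - ε * Real.exp (K * t) < 0 := by
      intro t ht j
      by_contra h
      push_neg at h
      have : t ∈ S := by
        simp only [hSdef, Set.mem_iUnion]
        exact ⟨j, ⟨ht.1, le_trans (le_of_lt ht.2) ht₀Icc.2⟩, h⟩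
      exact absurd (csInf_le hSbdd this) (not_le.2 ht.2)
    set φ : ℝ := ε * Real.exp (K * t₀) with hφdef
    have hφpos : 0 < φ := by positivity
    have hφ1 : φ ≤ 1 := by
      refine le_trans ?_ hεT
      have := Real.exp_le_exp.2 (mul_le_mul_of_nonneg_left ht₀Icc.2 hK0.le)
      nlinarith
    -- at t₀, all components satisfy y - x ≤ φ
    have hle : ∀ j, y t₀ j - x t₀ j ≤ φ := by
      intro j
      have hcl : t₀ ∈ closure (Set.Ico (0:ℝ) t₀) := by
        rw [closure_Ico (ne_of_lt ht₀pos)]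
        exact ⟨ht₀pos.le, le_rfl⟩
      have hne : (nhdsWithin t₀ (Set.Ico (0:ℝ) t₀)).NeBot :=
        mem_closure_iff_nhdsWithin_neBot.1 hcl
      have hcont : Filter.Tendsto (fun t => y t j - x t j - ε * Real.exp (K * t))
          (nhdsWithin t₀ (Set.Ico (0:ℝ) t₀)) (nhds (y t₀ j - x t₀ j - ε * Real.exp (K * t₀))) := by
        have : ContinuousWithinAt (fun t => y t j - x t j - ε * Real.exp (K * t))
            (Set.Icc 0 T) t₀ :=
          ((((continuous_apply j).comp_continuousOn hyc).sub ((continuous_apply j).comp_continuousOn hxc)).sub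
            (continuousOn_const.mul ((Real.continuous_exp.comp
              (continuous_const.mul continuous_id)).continuousOn))) t₀ ht₀Icc
        exact this.mono (fun t ht => ⟨ht.1, le_trans ht.2.le ht₀Icc.2⟩)
      have := le_of_tendsto hcont (Filter.eventually_of_mem self_mem_nhdsWithin
        (fun t ht => (hbefore t ht j).le))
      linarith
    -- t₀ ∈ S: some component reaches φ
    obtain ⟨i, hiIcc, hi⟩ : ∃ i, t₀ ∈ Set.Icc (0:ℝ) T ∧
        0 ≤ y t₀ i - x t₀ i - ε * Real.exp (K * t₀) := by
      simp only [hSdef, Set.mem_iUnion, Set.mem_inter_iff, Set.mem_preimage, Set.mem_Ici] at ht₀S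
      obtain ⟨i, h1, h2⟩ := ht₀S
      exact ⟨i, h1, h2⟩
    have heq : y t₀ i - x t₀ i = φ := le_antisymm (hle i) (by linarith)
    -- derivative of g := y i - x i - ε exp(K t) at t₀
    set d : ℝ := y' t₀ i - f (x t₀) i - ε * (Real.exp (K * t₀) * K) with hddef
    have hgder : HasDerivAt (fun t => y t i - x t i - ε * Real.exp (K * t)) d t₀ := by
      have h1 : HasDerivAt (fun t => y t i) (y' t₀ i) t₀ :=
        hasDerivAt_pi.1 (hy t₀ ht₀pos.le) i
      have h2 : HasDerivAt (fun t => x t i) (f (x t₀) i) t₀ :=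
        hasDerivAt_pi.1 (hx t₀ ht₀pos.le) i
      have h3 : HasDerivAt (fun t : ℝ => K * t) K t₀ := by
        simpa using (hasDerivAt_id t₀).const_mul K
      have h4 : HasDerivAt (fun t : ℝ => ε * Real.exp (K * t))
          (ε * (Real.exp (K * t₀) * K)) t₀ := (h3.exp).const_mul ε
      exact (h1.sub h2).sub h4
    -- d ≥ 0 from the left
    have hd0 : 0 ≤ d := by
      have hcl : t₀ ∈ closure (Set.Ioo (0:ℝ) t₀) := by
        rw [closure_Ioo (ne_of_lt ht₀pos)]
        exact ⟨ht₀pos.le, le_rfl⟩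
      have hne : (nhdsWithin t₀ (Set.Ioo (0:ℝ) t₀)).NeBot :=
        mem_closure_iff_nhdsWithin_neBot.1 hcl
      have hslope : Filter.Tendsto (slope (fun t => y t i - x t i - ε * Real.exp (K * t)) t₀)
          (nhdsWithin t₀ (Set.Ioo (0:ℝ) t₀)) (nhds d) :=
        (hasDerivAt_iff_tendsto_slope.1 hgder).mono_left
          (nhdsWithin_mono _ (fun t ht => ne_of_lt ht.2))
      refine ge_of_tendsto hslope (Filter.eventually_of_mem self_mem_nhdsWithin ?_)
      intro t ht
      have hgt : y t i - x t i - ε * Real.exp (K * t) < 0 :=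
        hbefore t ⟨ht.1.le, ht.2⟩ i
      have hgt₀ : y t₀ i - x t₀ i - ε * Real.exp (K * t₀) = 0 := by
        rw [heq]; ring
      rw [slope_def_field]
      rw [div_nonneg_iff]
      right
      constructor
      · rw [hgt₀]; linarith
      · linarith [ht.2]
    -- d < 0 from the quasimonotonicity and Lipschitz bound
    have hxball : x t₀ ∈ Metric.closedBall (0 : Fin n → ℝ) (R + 1) := by
      rw [Metric.mem_closedBall, dist_zero_right]
      linarith [hR t₀ ht₀Icc]
    set w : Fin n → ℝ := fun j => x t₀ j + φ with hwdef
    have hwball : w ∈ Metric.closedBall (0 : Fin n → ℝ) (R + 1) := by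
      rw [Metric.mem_closedBall, dist_zero_right]
      have h1 : ‖w - x t₀‖ ≤ φ := by
        refine (pi_norm_le_iff_of_nonneg hφpos.le).2 ?_
        intro j
        simp [hwdef, abs_of_nonneg hφpos.le]
      calc ‖w‖ ≤ ‖x t₀‖ + ‖w - x t₀‖ := by
            have := norm_add_le (x t₀) (w - x t₀); simpa using this
        _ ≤ R + 1 := by have := hR t₀ ht₀Icc; linarith
    have hquasi' : f (y t₀) i ≤ f w i := by
      have ha : ∀ j, 0 ≤ x t₀ j + φ - y t₀ j := fun j => by linarith [hle j]
      have h := hquasi i (y t₀) (fun j => x t₀ j + φ - y t₀ j) ha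
      have hew : (fun j => if j = i then y t₀ j else y t₀ j + (fun j => x t₀ j + φ - y t₀ j) j) = w := by
        funext j
        by_cases hj : j = i
        · subst hj; simp only [eq_self_iff_true, if_true, hwdef]; linarith [heq]
        · simp only [if_neg hj, hwdef]; ring
      rwa [hew] at h
    have hwx : ‖w - x t₀‖ ≤ φ := by
      refine (pi_norm_le_iff_of_nonneg hφpos.le).2 ?_
      intro j
      simp [hwdef, abs_of_nonneg hφpos.le]
    have hfw : f w i - f (x t₀) i ≤ L * φ := by
      calc f w i - f (x t₀) i ≤ |f w i - f (x t₀) i| := le_abs_self _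
        _ = ‖(f w - f (x t₀)) i‖ := by simp [Real.norm_eq_abs]
        _ ≤ ‖f w - f (x t₀)‖ := norm_le_pi_norm _ i
        _ ≤ L * ‖w - x t₀‖ := hLip _ _ hxball hwball
        _ ≤ L * φ := mul_le_mul_of_nonneg_left hwx hL0
    have hdneg : d < 0 := by
      have h1 : y' t₀ i ≤ f (y t₀) i := hy' t₀ ht₀pos.le i
      have h2 : ε * (Real.exp (K * t₀) * K) = K * φ := by rw [hφdef]; ring
      have : d ≤ L * φ - K * φ := by
        rw [hddef, h2]
        linarith
      have hK : L * φ - K * φ = -φ := by rw [hKdef]; ring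
      linarith
    linarith
  -- conclude: take ε → 0
  by_contra hcon
  push_neg at hcon
  set c : ℝ := y T i0 - x T i0 with hcdef
  have hc : 0 < c := by linarith
  set ε : ℝ := min (Real.exp (-(K * T))) (c * Real.exp (-(K * T)) / 2) with hεdef
  have hε : 0 < ε := lt_min (Real.exp_pos _) (by positivity)
  have h1 : ε * Real.exp (K * T) ≤ 1 := by
    have := min_le_left (Real.exp (-(K * T))) (c * Real.exp (-(K * T)) / 2)
    calc ε * Real.exp (K * T) ≤ Real.exp (-(K * T)) * Real.exp (K * T) :=
          mul_le_mul_of_nonneg_right this (Real.exp_pos _).le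
      _ = 1 := by rw [← Real.exp_add]; simp
  have h2 := key ε hε h1 T ⟨hT, le_rfl⟩ i0
  have h3 : ε * Real.exp (K * T) ≤ c / 2 := by
    have := min_le_right (Real.exp (-(K * T))) (c * Real.exp (-(K * T)) / 2)
    calc ε * Real.exp (K * T) ≤ (c * Real.exp (-(K * T)) / 2) * Real.exp (K * T) :=
          mul_le_mul_of_nonneg_right this (Real.exp_pos _).le
      _ = c / 2 * (Real.exp (-(K * T)) * Real.exp (K * T)) := by ring
      _ = c / 2 := by rw [← Real.exp_add]; simp
  linarith
end

section
/- Let f : ℝ^n → ℝ^n be a smooth quasimonotone increasing vector field. If x(t) solves x' = f(x), z(t) satisfies z'(t) ≥ f(z(t)) componentwise, and z(0) = x(0), then z(t) ≥ x(t) componentwise for all t ≥ 0. -/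
open Set Metric Filter Real

/-- Chaplygin comparison lemma (upper/supersolution half): for a smooth quasimonotone
increasing vector field `f`, a supersolution `z` starting at the same point as a solution
`x` stays componentwise above `x` for all `t ≥ 0`. -/
theorem chaplygin_supersolution {n : ℕ} (f : (Fin n → ℝ) → (Fin n → ℝ))
    (hf : ContDiff ℝ 1 f)
    (hquasi : ∀ (i : Fin n) (u : Fin n → ℝ) (a : Fin n → ℝ), (∀ j, 0 ≤ a j) →
      f u i ≤ f (fun j => if j = i then u j else u j + a j) i)
    (x z : ℝ → Fin n → ℝ) (z' : ℝ → Fin n → ℝ)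
    (hx : ∀ t, 0 ≤ t → HasDerivAt x (f (x t)) t)
    (hz : ∀ t, 0 ≤ t → HasDerivAt z (z' t) t)
    (hz' : ∀ t, 0 ≤ t → ∀ i, f (z t) i ≤ z' t i)
    (h0 : z 0 = x 0) :
    ∀ t, 0 ≤ t → ∀ i, x t i ≤ z t i := by
  intro T hT
  -- continuity of x and z on [0, T]
  have hxc : ContinuousOn x (Icc 0 T) := fun t ht => (hx t ht.1).continuousAt.continuousWithinAt
  have hzc : ContinuousOn z (Icc 0 T) := fun t ht => (hz t ht.1).continuousAt.continuousWithinAt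
  -- a big closed ball containing everything in sight
  obtain ⟨R, hR⟩ := ((isCompact_Icc.image_of_continuousOn hxc).isBounded.union
    (isCompact_Icc.image_of_continuousOn hzc).isBounded).subset_closedBall (0 : Fin n → ℝ)
  set R1 : ℝ := max R 0 + 1 with hR1def
  have hRR1 : Metric.closedBall (0 : Fin n → ℝ) R ⊆ Metric.closedBall 0 R1 :=
    Metric.closedBall_subset_closedBall (by simp [hR1def]; linarith [le_max_left R 0])
  -- Lipschitz constant for f on the big ball
  obtain ⟨y0, -, hy0⟩ := (isCompact_closedBall (0 : Fin n → ℝ) R1).exists_isMaxOn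
    ⟨0, Metric.mem_closedBall_self (by positivity)⟩
    ((hf.continuous_fderiv one_ne_zero).norm.continuousOn)
  set L : NNReal := ‖fderiv ℝ f y0‖₊ with hLdef
  have hLip : LipschitzOnWith L f (Metric.closedBall (0 : Fin n → ℝ) R1) := by
    refine Convex.lipschitzOnWith_of_nnnorm_hasFDerivWithin_le (f' := fderiv ℝ f)
      (fun y _ => ((hf.differentiable one_ne_zero) y).hasFDerivAt.hasFDerivWithinAt)
      (fun y hy => ?_) (convex_closedBall _ _)
    rw [hLdef, ← NNReal.coe_le_coe]
    simpa using hy0 hy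
  set C : ℝ := (L : ℝ) + 1 with hCdef
  have hC0 : 0 ≤ C := by positivity
  -- key claim
  have key : ∀ ε : ℝ, 0 < ε → ε * Real.exp (C * T) ≤ 1 →
      ∀ t ∈ Icc (0:ℝ) T, ∀ i, x t i < z t i + ε * Real.exp (C * t) := by
    intro ε hε hε1
    by_contra hcon
    push_neg at hcon
    set u : Fin n → ℝ → ℝ := fun j t => z t j - x t j + ε * Real.exp (C * t) with hudef
    set B : Set ℝ := Icc 0 T ∩ ⋃ j, {t | u j t ≤ 0} with hBdef
    have hBne : B.Nonempty := by
      obtain ⟨t, ht, i, hi⟩ := hcon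
      exact ⟨t, ht, Set.mem_iUnion.2 ⟨i, by simp [hudef]; linarith⟩⟩
    have hucont : ∀ j, ContinuousOn (u j) (Icc 0 T) := by
      intro j
      apply ContinuousOn.add (ContinuousOn.sub ((continuous_apply j).comp_continuousOn hzc)
        ((continuous_apply j).comp_continuousOn hxc))
      exact (continuous_const.mul (Real.continuous_exp.comp
        (continuous_const.mul continuous_id))).continuousOn
    have hBclosed : IsClosed B := by
      rw [hBdef, Set.inter_iUnion]
      exact isClosed_iUnion_of_finite fun j =>
        (hucont j).preimage_isClosed_of_isClosed isClosed_Icc isClosed_Iic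
    have hBdd : BddBelow B := ⟨0, fun t ht => ht.1.1⟩
    set t₀ : ℝ := sInf B with ht₀def
    have ht₀B : t₀ ∈ B := hBclosed.csInf_mem hBne hBdd
    have ht₀Icc : t₀ ∈ Icc (0:ℝ) T := ht₀B.1
    obtain ⟨i, hi⟩ : ∃ i, u i t₀ ≤ 0 := by
      have := ht₀B.2; rw [Set.mem_iUnion] at this; exact this
    have hu0 : ∀ j, u j 0 = ε := by
      intro j; simp [hudef, h0]
    have ht₀pos : 0 < t₀ := by
      rcases lt_or_eq_of_le ht₀Icc.1 with h | h
      · exact h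
      · exfalso; rw [← h] at hi; rw [hu0 i] at hi; linarith
    have hpos : ∀ t, 0 ≤ t → t < t₀ → ∀ j, 0 < u j t := by
      intro t ht0 htt j
      by_contra hle
      push_neg at hle
      have : t ∈ B := ⟨⟨ht0, htt.le.trans ht₀Icc.2⟩, Set.mem_iUnion.2 ⟨j, hle⟩⟩
      exact absurd (csInf_le hBdd this) (not_le.2 htt)
    -- continuity of u j at t₀
    have hucontAt : ∀ j, ContinuousAt (u j) t₀ := by
      intro j
      apply ContinuousAt.add (ContinuousAt.sub
        ((continuous_apply j).continuousAt.comp (hz t₀ ht₀Icc.1).continuousAt)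
        ((continuous_apply j).continuousAt.comp (hx t₀ ht₀Icc.1).continuousAt))
      exact (continuous_const.mul (Real.continuous_exp.comp
        (continuous_const.mul continuous_id))).continuousAt
    have hnonneg : ∀ j, 0 ≤ u j t₀ := by
      intro j
      have htend : Tendsto (u j) (nhdsWithin t₀ (Iio t₀)) (nhds (u j t₀)) :=
        (hucontAt j).tendsto.mono_left nhdsWithin_le_nhds
      refine ge_of_tendsto htend ?_
      filter_upwards [Ioo_mem_nhdsLT ht₀pos] with t ht
      exact (hpos t ht.1.le ht.2 j).le
    have hi0 : u i t₀ = 0 := le_antisymm hi (hnonneg i)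
    -- derivative of u i at t₀
    set d : ℝ := z' t₀ i - f (x t₀) i + ε * (C * Real.exp (C * t₀)) with hddef
    have hderiv : HasDerivAt (u i) d t₀ := by
      have h1 : HasDerivAt (fun t => z t i) (z' t₀ i) t₀ :=
        hasDerivAt_pi.1 (hz t₀ ht₀Icc.1) i
      have h2 : HasDerivAt (fun t => x t i) (f (x t₀) i) t₀ :=
        hasDerivAt_pi.1 (hx t₀ ht₀Icc.1) i
      have h3 : HasDerivAt (fun t : ℝ => C * t) C t₀ := by
        simpa using (hasDerivAt_id t₀).const_mul C
      have h4 : HasDerivAt (fun t : ℝ => Real.exp (C * t)) (Real.exp (C * t₀) * C) t₀ :=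
        (Real.hasDerivAt_exp (C * t₀)).comp t₀ h3
      have : HasDerivAt (u i) (z' t₀ i - f (x t₀) i + ε * (Real.exp (C * t₀) * C)) t₀ :=
        ((h1.sub h2).add ((h4.const_mul ε)))
      convert this using 1
      rw [hddef]; ring
    -- d ≤ 0 by the first-crossing property
    have hd0 : d ≤ 0 := by
      have hslope : Tendsto (slope (u i) t₀) (nhdsWithin t₀ (Iio t₀)) (nhds d) :=
        (hasDerivAt_iff_tendsto_slope.1 hderiv).mono_left
          (nhdsWithin_mono _ fun t ht => ne_of_lt ht)
      refine le_of_tendsto hslope ?_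
      filter_upwards [Ioo_mem_nhdsLT ht₀pos] with t ht
      rw [slope_def_field, hi0, sub_zero]
      exact div_nonpos_of_nonneg_of_nonpos (hpos t ht.1.le ht.2 i).le (by linarith [ht.2])
    -- d > 0 by quasimonotonicity + Lipschitz
    have hd1 : 0 < d := by
      set E : ℝ := ε * Real.exp (C * t₀) with hEdef
      have hexp : (0:ℝ) < Real.exp (C * t₀) := Real.exp_pos _
      have hEpos : 0 < E := by positivity
      have hE1 : E ≤ 1 := by
        have : Real.exp (C * t₀) ≤ Real.exp (C * T) :=
          Real.exp_le_exp.2 (mul_le_mul_of_nonneg_left ht₀Icc.2 hC0)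
        nlinarith
      have hxball : x t₀ ∈ Metric.closedBall (0 : Fin n → ℝ) R1 :=
        hRR1 (hR (Or.inl ⟨t₀, ht₀Icc, rfl⟩))
      set p : Fin n → ℝ := fun j => x t₀ j - E with hpdef
      have hpz : ∀ j, p j ≤ z t₀ j := by
        intro j; have := hnonneg j; simp only [hudef] at this
        simp only [hpdef]; linarith
      have hpi : p i = z t₀ i := by
        simp only [hudef] at hi0; simp only [hpdef]; linarith
      have hpball : p ∈ Metric.closedBall (0 : Fin n → ℝ) R1 := by
        rw [Metric.mem_closedBall]
        have hdist : dist p (x t₀) ≤ E := by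
          rw [dist_pi_le_iff hEpos.le]
          intro j
          simp [hpdef, Real.dist_eq, abs_of_nonneg hEpos.le]
        have hx1 : dist (x t₀) (0 : Fin n → ℝ) ≤ R := Metric.mem_closedBall.1 (hR (Or.inl ⟨t₀, ht₀Icc, rfl⟩))
        calc dist p 0 ≤ dist p (x t₀) + dist (x t₀) 0 := dist_triangle _ _ _
          _ ≤ E + R := add_le_add hdist hx1
          _ ≤ R1 := by rw [hR1def]; have := le_max_left R 0; linarith
      have hq : f p i ≤ f (z t₀) i := by
        have h := hquasi i p (fun j => z t₀ j - p j) (fun j => sub_nonneg.2 (hpz j))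
        have heq : (fun j => if j = i then p j else p j + (z t₀ j - p j)) = z t₀ := by
          funext j
          by_cases hji : j = i
          · simp [hji, hpi]
          · simp [hji]
        rwa [heq] at h
      have hlipest : f (x t₀) i - f p i ≤ (L : ℝ) * E := by
        have h1 : dist (f p) (f (x t₀)) ≤ (L : ℝ) * dist p (x t₀) :=
          hLip.dist_le_mul p hpball (x t₀) hxball
        have h2 : dist p (x t₀) ≤ E := by
          rw [dist_pi_le_iff hEpos.le]
          intro j
          simp [hpdef, Real.dist_eq, abs_of_nonneg hEpos.le]
        have h3 : |f p i - f (x t₀) i| ≤ dist (f p) (f (x t₀)) := by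
          rw [dist_eq_norm]
          have := norm_le_pi_norm (f p - f (x t₀)) i
          simpa [Real.norm_eq_abs] using this
        have h4 : (L:ℝ) * dist p (x t₀) ≤ (L:ℝ) * E :=
          mul_le_mul_of_nonneg_left h2 L.coe_nonneg
        have := abs_le.1 h3
        linarith [this.1]
      have hzlb : f (z t₀) i ≤ z' t₀ i := hz' t₀ ht₀Icc.1 i
      have : ε * (C * Real.exp (C * t₀)) = C * E := by rw [hEdef]; ring
      rw [hddef, this, hCdef]
      nlinarith
    linarith
  -- conclude from key
  intro i
  have hexpT : (0:ℝ) < Real.exp (C * T) := Real.exp_pos _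
  by_contra hcon
  push_neg at hcon
  set δ : ℝ := x T i - z T i with hδdef
  have hδpos : 0 < δ := by simp [hδdef]; linarith
  set ε : ℝ := min (Real.exp (C * T))⁻¹ (δ / (2 * Real.exp (C * T))) with hεdef
  have hεpos : 0 < ε := lt_min (by positivity) (by positivity)
  have h1 : ε * Real.exp (C * T) ≤ 1 := by
    have : ε ≤ (Real.exp (C * T))⁻¹ := min_le_left _ _
    calc ε * Real.exp (C * T) ≤ (Real.exp (C * T))⁻¹ * Real.exp (C * T) :=
          mul_le_mul_of_nonneg_right this hexpT.le
      _ = 1 := inv_mul_cancel₀ hexpT.ne'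
  have h2 : ε * Real.exp (C * T) ≤ δ / 2 := by
    have : ε ≤ δ / (2 * Real.exp (C * T)) := min_le_right _ _
    calc ε * Real.exp (C * T) ≤ δ / (2 * Real.exp (C * T)) * Real.exp (C * T) :=
          mul_le_mul_of_nonneg_right this hexpT.le
      _ = δ / 2 := by field_simp
  have := key ε hεpos h1 T ⟨le_refl 0 |>.trans hT, le_refl T⟩ i
  simp only [hδdef] at h2
  linarith
end

section
/- The hypercube [0,1]^N is positively invariant for the SCS model: if C(0) ∈ [0,1]^N, then the solution C(t) of the SCS system satisfies C(t) ∈ [0,1]^N for all t in its interval of existence with t ≥ 0. -/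
open Set Filter

lemma hasDerivAt_max_sq (x : ℝ) :
    HasDerivAt (fun y : ℝ => max y 0 ^ 2) (2 * max x 0) x := by
  rcases lt_trichotomy x 0 with h | h | h
  · have he : (fun y : ℝ => max y 0 ^ 2) =ᶠ[nhds x] fun _ => (0:ℝ) := by
      filter_upwards [Iio_mem_nhds h] with y hy
      have : y < 0 := hy
      simp [max_eq_right this.le]
    rw [max_eq_right h.le, mul_zero]
    exact (hasDerivAt_const x (0:ℝ)).congr_of_eventuallyEq he
  · subst h
    rw [max_self, mul_zero]
    rw [hasDerivAt_iff_isLittleO]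
    refine Asymptotics.isLittleO_iff.2 fun c hc => ?_
    filter_upwards [Metric.ball_mem_nhds (0:ℝ) hc] with y hy
    have hy' : |y| < c := by simpa [Real.dist_eq] using hy
    have h1 : (0:ℝ) ≤ max y 0 := le_max_right _ _
    have h2 : max y 0 ≤ |y| := max_le (le_abs_self y) (abs_nonneg y)
    have h3 : max y 0 ^ 2 ≤ c * |y| := by nlinarith [abs_nonneg y]
    have h4 : ‖max y 0 ^ 2 - max (0:ℝ) 0 ^ 2 - (y - 0) • (0:ℝ)‖ = max y 0 ^ 2 := by
      simp [abs_of_nonneg (by positivity : (0:ℝ) ≤ max y 0 ^ 2)]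
    rw [h4]
    simpa using h3
  · have he : (fun y : ℝ => max y 0 ^ 2) =ᶠ[nhds x] fun y => y ^ 2 := by
      filter_upwards [Ioi_mem_nhds h] with y hy
      have : (0:ℝ) < y := hy
      simp [max_eq_left this.le]
    rw [max_eq_left h.le]
    have h2 : HasDerivAt (fun y : ℝ => y ^ 2) (2 * x) x := by
      simpa using hasDerivAt_pow 2 x
    exact h2.congr_of_eventuallyEq he

/-- The right-hand side of the SCS model. -/
noncomputable def scsF {N : ℕ} (a : Fin N → Fin N → ℝ) (w x : Fin N → ℝ) (α β δ γ : ℝ)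
    (C : Fin N → ℝ) : Fin N → ℝ :=
  fun i => (1 / (δ * w i)) * (α * x i + β * ∑ j, a j i * C j) * (1 - C i) - γ * w i * C i

set_option maxHeartbeats 1000000 in
/-- Positive invariance of the hypercube `[0,1]^N` for the SCS model: a solution
starting in `[0,1]^N` stays in `[0,1]^N` on its interval of existence `[0, Tmax)`. -/
theorem scs_invariance {N : ℕ} (a : Fin N → Fin N → ℝ) (w x : Fin N → ℝ)
    (α β δ γ : ℝ) (hα : 0 < α) (hβ : 0 < β) (hδ : 0 < δ) (hγ : 0 < γ)
    (hx : ∀ i, 0 ≤ x i) (hw : ∀ i, 0 < w i)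
    (ha : ∀ i j, a i j = 0 ∨ a i j = 1)
    (Tmax : ℝ) (hT : 0 < Tmax) (C : ℝ → Fin N → ℝ)
    (hC : ∀ t ∈ Set.Ico (0 : ℝ) Tmax, HasDerivAt C (scsF a w x α β δ γ (C t)) t)
    (h0 : ∀ i, C 0 i ∈ Set.Icc (0 : ℝ) 1) :
    ∀ t ∈ Set.Ico (0 : ℝ) Tmax, ∀ i, C t i ∈ Set.Icc (0 : ℝ) 1 := by
  classical
  set F : (Fin N → ℝ) → Fin N → ℝ := scsF a w x α β δ γ with hFdef
  have hCi : ∀ (i : Fin N), ∀ s ∈ Set.Ico (0:ℝ) Tmax,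
      HasDerivAt (fun u => C u i) (F (C s) i) s :=
    fun i s hs => hasDerivAt_pi.1 (hC s hs) i
  set p : ℝ → Fin N → ℝ := fun s i => max (-(C s i)) 0 with hpdef
  set q : ℝ → Fin N → ℝ := fun s i => max (C s i - 1) 0 with hqdef
  set g : ℝ → ℝ := fun s => ∑ i, (p s i ^ 2 + q s i ^ 2) with hgdef
  set G : ℝ → ℝ := fun s => ∑ i, (2 * p s i * (-(F (C s) i)) + 2 * q s i * (F (C s) i))
    with hGdef
  have hp_nonneg : ∀ s i, 0 ≤ p s i := fun s i => le_max_right _ _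
  have hq_nonneg : ∀ s i, 0 ≤ q s i := fun s i => le_max_right _ _
  have hg_nonneg : ∀ s, 0 ≤ g s := fun s =>
    Finset.sum_nonneg fun i _ => by positivity
  -- derivative of g
  have hg' : ∀ s ∈ Set.Ico (0:ℝ) Tmax, HasDerivAt g (G s) s := by
    intro s hs
    apply HasDerivAt.fun_sum
    intro i _
    have h1 : HasDerivAt (fun u => p u i ^ 2) (2 * p s i * (-(F (C s) i))) s := by
      have hcomp := (hasDerivAt_max_sq (-(C s i))).comp s ((hCi i s hs).neg)
      simpa [hpdef, Function.comp_def, mul_assoc] using hcomp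
    have h2 : HasDerivAt (fun u => q u i ^ 2) (2 * q s i * (F (C s) i)) s := by
      have hcomp := (hasDerivAt_max_sq (C s i - 1)).comp s ((hCi i s hs).sub_const 1)
      simpa [hqdef, Function.comp_def, mul_assoc] using hcomp
    exact h1.add h2
  have hg0 : g 0 = 0 := by
    apply Finset.sum_eq_zero
    intro i _
    obtain ⟨h1, h2⟩ := h0 i
    have : p 0 i = 0 := max_eq_right (by linarith)
    have h3 : q 0 i = 0 := max_eq_right (by linarith)
    rw [this, h3]; ring
  -- the key differential inequality
  set K : ℝ := ∑ i : Fin N, 2 * (2 * β / (δ * w i)) * (N + 1) with hKdef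
  have hbound : ∀ s, (∀ j, p s j ≤ 1) → G s ≤ K * g s := by
    intro s hp1
    set P : ℝ := ∑ j, p s j with hPdef
    have hP0 : 0 ≤ P := Finset.sum_nonneg fun j _ => hp_nonneg s j
    have hPN : P ≤ (N : ℝ) := by
      calc P ≤ ∑ _j : Fin N, (1:ℝ) := Finset.sum_le_sum fun j _ => hp1 j
      _ = N := by simp
    have hgs0 := hg_nonneg s
    have hsq_p : ∀ i, p s i ^ 2 ≤ g s := by
      intro i
      have h1 : p s i ^ 2 + q s i ^ 2 ≤ g s :=
        Finset.single_le_sum (f := fun i => p s i ^ 2 + q s i ^ 2)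
          (fun i _ => by positivity) (Finset.mem_univ i)
      nlinarith [sq_nonneg (q s i)]
    have hsq_q : ∀ i, q s i ^ 2 ≤ g s := by
      intro i
      have h1 : p s i ^ 2 + q s i ^ 2 ≤ g s :=
        Finset.single_le_sum (f := fun i => p s i ^ 2 + q s i ^ 2)
          (fun i _ => by positivity) (Finset.mem_univ i)
      nlinarith [sq_nonneg (p s i)]
    have hsum_p : ∑ j, p s j ^ 2 ≤ g s :=
      Finset.sum_le_sum fun j _ => by nlinarith [sq_nonneg (q s j)]
    have hP2 : P ^ 2 ≤ (N : ℝ) * g s := by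
      have h1 := sq_sum_le_card_mul_sum_sq (s := (Finset.univ : Finset (Fin N))) (f := p s)
      rw [Finset.card_univ, Fintype.card_fin] at h1
      rw [hPdef]
      nlinarith [Nat.cast_nonneg (α := ℝ) N]
    have hppP : ∀ i, p s i * P ≤ ((N:ℝ) + 1) / 2 * g s := by
      intro i
      nlinarith [sq_nonneg (p s i - P), hsq_p i, hP2]
    have hqqP : ∀ i, q s i ^ 2 * P ≤ (N : ℝ) * g s := by
      intro i
      nlinarith [hsq_q i, mul_le_mul_of_nonneg_right (hsq_q i) hP0,
        mul_le_mul_of_nonneg_left hPN (hg_nonneg s)]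
    -- lower bound on the interaction sum
    have hS : ∀ i : Fin N, -P ≤ ∑ j, a j i * C s j := by
      intro i
      have hterm : ∀ j : Fin N, -(p s j) ≤ a j i * C s j := by
        intro j
        rcases ha j i with h | h
        · rw [h, zero_mul]; linarith [hp_nonneg s j]
        · rw [h, one_mul]
          have : -(C s j) ≤ p s j := le_max_left _ _
          linarith
      have : -P = ∑ j, -(p s j) := by rw [hPdef]; exact (Finset.sum_neg_distrib _).symm
      rw [this]
      exact Finset.sum_le_sum fun j _ => hterm j
    -- per-coordinate bounds
    have hTermA : ∀ i, p s i * (-(F (C s) i)) ≤ 2 * β / (δ * w i) * (p s i * P) := by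
      intro i
      rcases eq_or_lt_of_le (hp_nonneg s i) with h | h
      · rw [← h]; simp
      · have hci : C s i = -(p s i) := by
          have hneg : -(C s i) > 0 := by
            by_contra hcon
            push_neg at hcon
            have : p s i = 0 := max_eq_right hcon
            linarith
          have : p s i = -(C s i) := max_eq_left hneg.le
          linarith
        have hwi := hw i
        have hD : (0:ℝ) < 1 / (δ * w i) := by positivity
        set D : ℝ := 1 / (δ * w i) with hDdef
        set S : ℝ := ∑ j, a j i * C s j with hSdef
        have hFi : F (C s) i = D * (α * x i + β * S) * (1 - C s i) - γ * w i * C s i := rfl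
        have hcoef : 2 * β / (δ * w i) = 2 * β * D := by rw [hDdef]; ring
        rw [hFi, hcoef, hci]
        have hSi := hS i
        rw [← hSdef] at hSi
        have hpi1 := hp1 i
        have hE1 : 0 ≤ p s i * (D * (α * x i) * (1 + p s i)) := by
          have : (0:ℝ) ≤ α * x i := mul_nonneg hα.le (hx i)
          have h1 : (0:ℝ) ≤ 1 + p s i := by linarith
          positivity
        have hE2 : 0 ≤ (p s i * (D * β * (1 + p s i))) * (S + P) := by
          have h1 : (0:ℝ) ≤ 1 + p s i := by linarith
          have h2 : 0 ≤ S + P := by linarith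
          have h3 : 0 ≤ p s i * (D * β * (1 + p s i)) := by positivity
          exact mul_nonneg h3 h2
        have hE3 : 0 ≤ (p s i * (D * β * P)) * (1 - p s i) := by
          have h1 : 0 ≤ p s i * (D * β * P) := by positivity
          have h2 : 0 ≤ 1 - p s i := by linarith
          exact mul_nonneg h1 h2
        have hE4 : 0 ≤ γ * w i * (p s i * p s i) := by positivity
        nlinarith [hE1, hE2, hE3, hE4]
    have hTermB : ∀ i, q s i * F (C s) i ≤ β / (δ * w i) * (q s i ^ 2 * P) := by
      intro i
      rcases eq_or_lt_of_le (hq_nonneg s i) with h | h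
      · rw [← h]; simp
      · have hci : C s i = 1 + q s i := by
          have hpos : C s i - 1 > 0 := by
            by_contra hcon
            push_neg at hcon
            have : q s i = 0 := max_eq_right (by linarith)
            linarith
          have : q s i = C s i - 1 := max_eq_left (by linarith)
          linarith
        have hwi := hw i
        have hD : (0:ℝ) < 1 / (δ * w i) := by positivity
        set D : ℝ := 1 / (δ * w i) with hDdef
        set S : ℝ := ∑ j, a j i * C s j with hSdef
        have hFi : F (C s) i = D * (α * x i + β * S) * (1 - C s i) - γ * w i * C s i := rfl
        have hcoef : β / (δ * w i) = β * D := by rw [hDdef]; ring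
        rw [hFi, hcoef, hci]
        have hSi := hS i
        rw [← hSdef] at hSi
        have hE1 : 0 ≤ (q s i * (D * (α * x i))) * q s i := by
          have : (0:ℝ) ≤ α * x i := mul_nonneg hα.le (hx i)
          positivity
        have hE2 : 0 ≤ (q s i * (D * β) * q s i) * (S + P) := by
          have h2 : 0 ≤ S + P := by linarith
          have h3 : 0 ≤ q s i * (D * β) * q s i := by positivity
          exact mul_nonneg h3 h2
        have hE4 : 0 ≤ γ * w i * (1 + q s i) * q s i := by positivity
        nlinarith [hE1, hE2, hE4]
    -- combine
    have hper : ∀ i : Fin N,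
        2 * p s i * (-(F (C s) i)) + 2 * q s i * F (C s) i
          ≤ 2 * (2 * β / (δ * w i)) * ((N:ℝ) + 1) * g s := by
      intro i
      have hwi := hw i
      have hDpos : (0:ℝ) < β / (δ * w i) := by positivity
      set B : ℝ := β / (δ * w i) with hBdef
      have e1 : 2 * β / (δ * w i) = 2 * B := by rw [hBdef]; ring
      have h1 := hTermA i
      have h2 := hTermB i
      rw [e1] at h1
      rw [e1]
      have h3 := mul_le_mul_of_nonneg_left (hppP i)
        (by positivity : (0:ℝ) ≤ 2 * B)
      have h4 := mul_le_mul_of_nonneg_left (hqqP i) hDpos.le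
      have h5 : (0:ℝ) ≤ B * g s := mul_nonneg hDpos.le hgs0
      have e2 : 2 * (2 * B * (((N:ℝ) + 1) / 2 * g s)) + 2 * (B * ((N:ℝ) * g s))
          = 2 * (2 * B) * ((N:ℝ) + 1) * g s - 2 * (B * g s) := by ring
      linarith [h1, h2, h3, h4, h5, e2]
    calc G s = ∑ i, (2 * p s i * (-(F (C s) i)) + 2 * q s i * F (C s) i) := rfl
    _ ≤ ∑ i, (2 * (2 * β / (δ * w i)) * ((N:ℝ) + 1) * g s) :=
        Finset.sum_le_sum fun i _ => hper i
    _ = K * g s := by rw [hKdef, Finset.sum_mul]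
  -- the first-exit argument
  intro t ht
  set A : Set ℝ := {s | s ∈ Icc 0 t ∧ ∀ u ∈ Icc 0 s, g u ≤ 1} with hAdef
  have h0A : (0:ℝ) ∈ A := by
    refine ⟨⟨le_refl 0, ht.1⟩, fun u hu => ?_⟩
    have : u = 0 := le_antisymm hu.2 hu.1
    rw [this, hg0]; norm_num
  have hbdd : BddAbove A := ⟨t, fun s hs => hs.1.2⟩
  set m : ℝ := sSup A with hmdef
  have hm0 : 0 ≤ m := le_csSup hbdd h0A
  have hmt : m ≤ t := csSup_le ⟨0, h0A⟩ fun s hs => hs.1.2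
  have hmT : m < Tmax := lt_of_le_of_lt hmt ht.2
  have hgc : ∀ s ∈ Icc (0:ℝ) t, ContinuousAt g s := fun s hs =>
    (hg' s ⟨hs.1, lt_of_le_of_lt hs.2 ht.2⟩).continuousAt
  have hA1 : ∀ u ∈ Ico (0:ℝ) m, g u ≤ 1 := by
    intro u hu
    obtain ⟨s, hsA, hus⟩ := exists_lt_of_lt_csSup ⟨0, h0A⟩ hu.2
    exact hsA.2 u ⟨hu.1, hus.le⟩
  have hAm : ∀ u ∈ Icc (0:ℝ) m, g u ≤ 1 := by
    intro u hu
    rcases lt_or_eq_of_le hu.2 with h | h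
    · exact hA1 u ⟨hu.1, h⟩
    · rw [h]
      rcases eq_or_lt_of_le hm0 with h' | h'
      · rw [← h', hg0]; norm_num
      · have hcw : ContinuousWithinAt g (Iio m) m :=
          (hgc m ⟨hm0, hmt⟩).continuousWithinAt
        refine le_of_tendsto hcw ?_
        filter_upwards [Ioo_mem_nhdsLT_of_mem (⟨h', le_refl m⟩ : m ∈ Ioc (0:ℝ) m)]
          with v hv
        exact hA1 v ⟨hv.1.le, hv.2⟩
  -- Gronwall on [0, m]
  have hgron : ∀ u ∈ Icc (0:ℝ) m, g u ≤ gronwallBound 0 K 0 (u - 0) := by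
    apply le_gronwallBound_of_liminf_deriv_right_le (f' := G)
    · exact fun s hs => (hgc s ⟨hs.1, le_trans hs.2 hmt⟩).continuousWithinAt
    · intro s hs r hr
      exact ((hg' s ⟨hs.1, lt_of_lt_of_le hs.2 (le_of_lt hmT)⟩).hasDerivWithinAt).liminf_right_slope_le hr
    · rw [hg0]
    · intro s hs
      rw [add_zero]
      apply hbound
      intro j
      have hgs : g s ≤ 1 := hAm s ⟨hs.1, hs.2.le⟩
      have h1 : p s j ^ 2 + q s j ^ 2 ≤ g s :=
        Finset.single_le_sum (f := fun i => p s i ^ 2 + q s i ^ 2)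
          (fun i _ => by positivity) (Finset.mem_univ j)
      nlinarith [hp_nonneg s j, hq_nonneg s j, sq_nonneg (q s j)]
  have hgzero : ∀ u ∈ Icc (0:ℝ) m, g u = 0 := by
    intro u hu
    have := hgron u hu
    rw [gronwallBound_ε0_δ0] at this
    exact le_antisymm this (hg_nonneg u)
  -- m = t
  have hmeq : m = t := by
    by_contra hne
    have hmlt : m < t := lt_of_le_of_ne hmt hne
    obtain ⟨d, hd, hball⟩ := Metric.continuousAt_iff.1 (hgc m ⟨hm0, hmt⟩) 1 one_pos
    set s' : ℝ := min t (m + d / 2) with hs'def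
    have hms' : m < s' := lt_min hmlt (by linarith)
    have hs'A : s' ∈ A := by
      refine ⟨⟨le_trans hm0 hms'.le, min_le_left _ _⟩, fun u hu => ?_⟩
      rcases le_or_gt u m with h | h
      · rw [hgzero u ⟨hu.1, h⟩]; norm_num
      · have hud : dist u m < d := by
          rw [Real.dist_eq, abs_of_pos (by linarith)]
          have : u ≤ m + d / 2 := le_trans hu.2 (min_le_right _ _)
          linarith
        have := hball hud
        rw [Real.dist_eq, hgzero m ⟨hm0, le_refl m⟩, sub_zero] at this
        exact le_of_lt (lt_of_le_of_lt (le_abs_self _) this)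
    exact absurd (le_csSup hbdd hs'A) (not_le.2 hms')
  have hgt : g t = 0 := hgzero t (by rw [hmeq]; exact ⟨ht.1, le_refl t⟩)
  -- conclude
  intro i
  have hterm : p t i ^ 2 + q t i ^ 2 = 0 := by
    have h1 : p t i ^ 2 + q t i ^ 2 ≤ g t :=
      Finset.single_le_sum (f := fun i => p t i ^ 2 + q t i ^ 2)
        (fun i _ => by positivity) (Finset.mem_univ i)
    have h2 : (0:ℝ) ≤ p t i ^ 2 + q t i ^ 2 := by positivity
    rw [hgt] at h1
    linarith
  have hp0 : p t i = 0 := by nlinarith [hp_nonneg t i, hq_nonneg t i]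
  have hq0 : q t i = 0 := by nlinarith [hp_nonneg t i, hq_nonneg t i]
  constructor
  · have : -(C t i) ≤ p t i := le_max_left _ _
    rw [hp0] at this; linarith
  · have : C t i - 1 ≤ q t i := le_max_left _ _
    rw [hq0] at this; linarith
end

section
/- Adding edges to the network increases expected compromise probabilities: let G₁ = (V, E₁) and G₂ = (V, E₂) with E₁ ⊆ E₂, and let C^{(1)}(t) and C^{(2)}(t) be solutions of the SCS models with adjacency matrices A(G₁) and A(G₂) respectively, with the same parameters α, β, δ, γ, the same attack strategy x, and the same initial condition in [0,1]^N. Then C_i^{(1)}(t) ≤ C_i^{(2)}(t) for all i and all t ∈ [0, T]. -/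
section helpers
open Set Filter

lemma scs_no_touch {f : ℝ → ℝ} {τ d : ℝ} (hτ : 0 < τ)
    (hf : ∀ s ∈ Set.Ico 0 τ, f s ≤ 0) (hfτ : f τ = 0)
    (hd : HasDerivAt f d τ) (hneg : d < 0) : False := by
  have h := hasDerivAt_iff_tendsto_slope.mp hd
  have h' : Tendsto (slope f τ) (nhdsWithin τ (Set.Iio τ)) (nhds d) :=
    h.mono_left (nhdsWithin_mono _ (fun s hs => ne_of_lt hs))
  have hd0 : 0 ≤ d := by
    refine ge_of_tendsto h' ?_
    filter_upwards [Ioo_mem_nhdsLT hτ] with s hs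
    have hfs : f s ≤ 0 := hf s ⟨hs.1.le, hs.2⟩
    have hden : s - τ < 0 := by linarith [hs.2]
    have hnum : f s - f τ ≤ 0 := by rw [hfτ]; linarith
    have : 0 ≤ (-(f s - f τ)) / (-(s - τ)) :=
      div_nonneg (by linarith) (by linarith)
    rw [neg_div_neg_eq] at this
    simpa [slope_def_field, div_eq_iff, sub_eq_zero] using this
  linarith

lemma scs_le_lim {f : ℝ → ℝ} {τ : ℝ} (hτ : 0 < τ) (hc : ContinuousAt f τ)
    (h : ∀ s ∈ Set.Ico 0 τ, f s ≤ 0) : f τ ≤ 0 := by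
  have ht : Tendsto f (nhdsWithin τ (Set.Iio τ)) (nhds (f τ)) :=
    hc.continuousWithinAt.tendsto
  refine le_of_tendsto ht ?_
  filter_upwards [Ioo_mem_nhdsLT hτ] with s hs
  exact h s ⟨hs.1.le, hs.2⟩

end helpers

lemma scsF_upper_bound {N : ℕ} (a : Fin N → Fin N → ℝ)
    (ha : ∀ i j, a i j = 0 ∨ a i j = 1)
    (w x : Fin N → ℝ) (α β δ γ : ℝ)
    (hα : 0 < α) (hβ : 0 < β) (hδ : 0 < δ) (hγ : 0 < γ)
    (hx : ∀ i, 0 ≤ x i) (hw : ∀ i, 0 < w i)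
    (c : Fin N → ℝ) (E : ℝ) (hE : 0 < E) (hE1 : E ≤ 1)
    (hbox : ∀ j, -E ≤ c j ∧ c j ≤ 1 + E) (i : Fin N) (hi : c i = 1 + E) :
    scsF a w x α β δ γ c i ≤ 1 / (δ * w i) * (α * x i + 9 * β * N) * E := by
  have hδw : 0 < δ * w i := mul_pos hδ (hw i)
  have hP : 0 < 1 / (δ * w i) := one_div_pos.mpr hδw
  have hN : (0:ℝ) ≤ N := Nat.cast_nonneg N
  simp only [scsF]
  have hterm : ∀ j, -E ≤ a j i * c j := by
    intro j
    rcases ha j i with h | h <;> rw [h]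
    · simpa using hE.le
    · simpa using (hbox j).1
  have hsum : -(E * N) ≤ ∑ j, a j i * c j := by
    calc -(E * N) = ∑ _j : Fin N, -E := by
          simp [Finset.sum_const, Finset.card_univ, mul_comm]
      _ ≤ _ := Finset.sum_le_sum fun j _ => hterm j
  set S := ∑ j, a j i * c j with hSdef
  have hβS : β * (-(E * N)) ≤ β * S := mul_le_mul_of_nonneg_left hsum hβ.le
  have hxi : 0 ≤ α * x i := mul_nonneg hα.le (hx i)
  have hSlow : -(α * x i + 9 * β * N) ≤ α * x i + β * S := by
    nlinarith [mul_nonneg (mul_nonneg hβ.le hN) (by linarith : (0:ℝ) ≤ 1 - E),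
      mul_nonneg (mul_nonneg hβ.le hN) hE.le]
  have hmain : 1 / (δ * w i) * (α * x i + β * S) * (1 - c i)
      ≤ 1 / (δ * w i) * (α * x i + 9 * β * N) * E := by
    rw [hi]
    have h2 : (α * x i + β * S) * (1 - (1 + E)) ≤ (α * x i + 9 * β * N) * E := by
      nlinarith [mul_le_mul_of_nonneg_right hSlow hE.le]
    calc 1 / (δ * w i) * (α * x i + β * S) * (1 - (1 + E))
        = 1 / (δ * w i) * ((α * x i + β * S) * (1 - (1 + E))) := by ring
      _ ≤ 1 / (δ * w i) * ((α * x i + 9 * β * N) * E) :=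
          mul_le_mul_of_nonneg_left h2 hP.le
      _ = 1 / (δ * w i) * (α * x i + 9 * β * N) * E := by ring
  have hγw : 0 ≤ γ * w i * c i := by
    rw [hi]; exact mul_nonneg (mul_nonneg hγ.le (hw i).le) (by linarith)
  linarith

lemma scsF_lower_bound {N : ℕ} (a : Fin N → Fin N → ℝ)
    (ha : ∀ i j, a i j = 0 ∨ a i j = 1)
    (w x : Fin N → ℝ) (α β δ γ : ℝ)
    (hα : 0 < α) (hβ : 0 < β) (hδ : 0 < δ) (hγ : 0 < γ)
    (hx : ∀ i, 0 ≤ x i) (hw : ∀ i, 0 < w i)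
    (c : Fin N → ℝ) (E : ℝ) (hE : 0 < E) (hE1 : E ≤ 1)
    (hbox : ∀ j, -E ≤ c j ∧ c j ≤ 1 + E) (i : Fin N) (hi : c i = -E) :
    -(1 / (δ * w i) * (α * x i + 9 * β * N) * E) ≤ scsF a w x α β δ γ c i := by
  have hδw : 0 < δ * w i := mul_pos hδ (hw i)
  have hP : 0 < 1 / (δ * w i) := one_div_pos.mpr hδw
  have hN : (0:ℝ) ≤ N := Nat.cast_nonneg N
  simp only [scsF]
  have hterm : ∀ j, -E ≤ a j i * c j := by
    intro j
    rcases ha j i with h | h <;> rw [h]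
    · simpa using hE.le
    · simpa using (hbox j).1
  have hsum : -(E * N) ≤ ∑ j, a j i * c j := by
    calc -(E * N) = ∑ _j : Fin N, -E := by
          simp [Finset.sum_const, Finset.card_univ, mul_comm]
      _ ≤ _ := Finset.sum_le_sum fun j _ => hterm j
  set S := ∑ j, a j i * c j with hSdef
  have hβS : β * (-(E * N)) ≤ β * S := mul_le_mul_of_nonneg_left hsum hβ.le
  have hxi : 0 ≤ α * x i := mul_nonneg hα.le (hx i)
  have hT : -(β * N * E) ≤ α * x i + β * S := by nlinarith
  have h2 : -((α * x i + 9 * β * N) * E) ≤ (α * x i + β * S) * (1 - (-E)) := by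
    nlinarith [mul_le_mul_of_nonneg_right hT (by linarith : (0:ℝ) ≤ 1 + E),
      mul_nonneg (mul_nonneg (mul_nonneg hβ.le hN) hE.le) (by linarith : (0:ℝ) ≤ 1 - E),
      mul_nonneg hxi hE.le,
      mul_nonneg (mul_nonneg (mul_nonneg hβ.le hN) hE.le) (by norm_num : (0:ℝ) ≤ 7)]
  have hmain : -(1 / (δ * w i) * (α * x i + 9 * β * N) * E)
      ≤ 1 / (δ * w i) * (α * x i + β * S) * (1 - c i) := by
    rw [hi]
    calc -(1 / (δ * w i) * (α * x i + 9 * β * N) * E)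
        = 1 / (δ * w i) * (-((α * x i + 9 * β * N) * E)) := by ring
      _ ≤ 1 / (δ * w i) * ((α * x i + β * S) * (1 - (-E))) :=
          mul_le_mul_of_nonneg_left h2 hP.le
      _ = 1 / (δ * w i) * (α * x i + β * S) * (1 - (-E)) := by ring
  have hγw : γ * w i * c i ≤ 0 := by
    rw [hi]
    have h3 : 0 ≤ γ * w i * E := mul_nonneg (mul_nonneg hγ.le (hw i).le) hE.le
    linarith
  linarith

lemma scsF_compare_bound {N : ℕ} (a1 a2 : Fin N → Fin N → ℝ)
    (ha1 : ∀ i j, a1 i j = 0 ∨ a1 i j = 1) (ha2 : ∀ i j, a2 i j = 0 ∨ a2 i j = 1)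
    (h12 : ∀ i j, a1 i j ≤ a2 i j)
    (w x : Fin N → ℝ) (α β δ γ : ℝ)
    (hα : 0 < α) (hβ : 0 < β) (hδ : 0 < δ) (hγ : 0 < γ)
    (hx : ∀ i, 0 ≤ x i) (hw : ∀ i, 0 < w i)
    (c d : Fin N → ℝ) (E : ℝ) (hE : 0 < E) (hE1 : E ≤ 1)
    (hboxc : ∀ j, -E ≤ c j ∧ c j ≤ 1 + E) (hboxd : ∀ j, -E ≤ d j ∧ d j ≤ 1 + E)
    (hcd : ∀ j, c j ≤ d j + E) (i : Fin N) (hi : c i = d i + E) :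
    scsF a1 w x α β δ γ c i - scsF a2 w x α β δ γ d i
      ≤ 1 / (δ * w i) * (α * x i + 9 * β * N) * E := by
  have hδw : 0 < δ * w i := mul_pos hδ (hw i)
  have hP : 0 < 1 / (δ * w i) := one_div_pos.mpr hδw
  have hN : (0:ℝ) ≤ N := Nat.cast_nonneg N
  have hxi : 0 ≤ α * x i := mul_nonneg hα.le (hx i)
  have hβN : 0 ≤ β * N := mul_nonneg hβ.le hN
  simp only [scsF]
  set s1 := ∑ j, a1 j i * c j with hs1def
  set s2 := ∑ j, a2 j i * d j with hs2def
  have hterm_up : ∀ j, a1 j i * c j - a2 j i * d j ≤ 2 * E := by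
    intro j
    have h12' := h12 j i
    have hd1 := (hboxd j).1
    have hcdj := hcd j
    rcases ha1 j i with h | h <;> rcases ha2 j i with h' | h' <;>
      rw [h, h'] at h12' ⊢ <;> simp only [one_mul, zero_mul] <;> linarith
  have hterm_lo : ∀ j, -4 ≤ a1 j i * c j - a2 j i * d j := by
    intro j
    have hc1 := (hboxc j).1; have hc2 := (hboxc j).2
    have hd1 := (hboxd j).1; have hd2 := (hboxd j).2
    rcases ha1 j i with h | h <;> rcases ha2 j i with h' | h' <;>
      rw [h, h'] <;> simp only [one_mul, zero_mul] <;> linarith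
  have hdiff_up : s1 - s2 ≤ N * (2 * E) := by
    calc s1 - s2 = ∑ j, (a1 j i * c j - a2 j i * d j) := by
          rw [hs1def, hs2def, ← Finset.sum_sub_distrib]
      _ ≤ ∑ _j : Fin N, 2 * E := Finset.sum_le_sum fun j _ => hterm_up j
      _ = N * (2 * E) := by simp [Finset.sum_const, Finset.card_univ, mul_comm]
  have hdiff_lo : -((N : ℝ) * 4) ≤ s1 - s2 := by
    calc -((N:ℝ) * 4) = ∑ _j : Fin N, (-4 : ℝ) := by
          simp [Finset.sum_const, Finset.card_univ]
      _ ≤ ∑ j, (a1 j i * c j - a2 j i * d j) := Finset.sum_le_sum fun j _ => hterm_lo j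
      _ = s1 - s2 := by rw [hs1def, hs2def, ← Finset.sum_sub_distrib]
  have hterm2 : ∀ j, -E ≤ a2 j i * d j := by
    intro j
    rcases ha2 j i with h | h <;> rw [h]
    · simpa using hE.le
    · simpa using (hboxd j).1
  have hsum2 : -(E * N) ≤ s2 := by
    rw [hs2def]
    calc -(E * N) = ∑ _j : Fin N, -E := by
          simp [Finset.sum_const, Finset.card_univ, mul_comm]
      _ ≤ _ := Finset.sum_le_sum fun j _ => hterm2 j
  have hu1 : 1 - c i ≤ 1 := by
    have := (hboxd i).1; rw [hi]; linarith
  have hu2 : -E ≤ 1 - c i := by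
    have := (hboxc i).2; linarith
  have hΔu : β * (s1 - s2) * (1 - c i) ≤ 8 * β * N * E := by
    nlinarith [mul_nonneg
        (by nlinarith [mul_le_mul_of_nonneg_left hdiff_up hβ.le] :
          (0:ℝ) ≤ 2 * β * N * E - β * (s1 - s2))
        (by linarith : (0:ℝ) ≤ (1 - c i) + E),
      mul_nonneg (mul_nonneg hβN hE.le) (by linarith : (0:ℝ) ≤ 1 - (1 - c i)),
      mul_nonneg (mul_nonneg hβN hE.le) (by linarith : (0:ℝ) ≤ 1 - E),
      mul_le_mul_of_nonneg_right (mul_le_mul_of_nonneg_left hdiff_lo hβ.le) hE.le]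
  have hS2E : -((α * x i + β * s2) * E) ≤ β * N * E := by
    nlinarith [mul_le_mul_of_nonneg_right
        (mul_le_mul_of_nonneg_left hsum2 hβ.le) hE.le,
      mul_nonneg (mul_nonneg hβN hE.le) (by linarith : (0:ℝ) ≤ 1 - E),
      mul_nonneg hxi hE.le]
  have hid : 1 / (δ * w i) * (α * x i + β * s1) * (1 - c i) - γ * w i * c i
      - (1 / (δ * w i) * (α * x i + β * s2) * (1 - d i) - γ * w i * d i)
      = 1 / (δ * w i) * (β * (s1 - s2) * (1 - c i) - (α * x i + β * s2) * E)
        - γ * w i * E := by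
    rw [hi]; ring
  rw [hid]
  have hbr : β * (s1 - s2) * (1 - c i) - (α * x i + β * s2) * E
      ≤ (α * x i + 9 * β * N) * E := by
    nlinarith [mul_nonneg hxi hE.le]
  have h3 : 1 / (δ * w i) * (β * (s1 - s2) * (1 - c i) - (α * x i + β * s2) * E)
      ≤ 1 / (δ * w i) * ((α * x i + 9 * β * N) * E) :=
    mul_le_mul_of_nonneg_left hbr hP.le
  have hγw : 0 ≤ γ * w i * E := mul_nonneg (mul_nonneg hγ.le (hw i).le) hE.le
  calc 1 / (δ * w i) * (β * (s1 - s2) * (1 - c i) - (α * x i + β * s2) * E) - γ * w i * E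
      ≤ 1 / (δ * w i) * ((α * x i + 9 * β * N) * E) := by linarith
    _ = 1 / (δ * w i) * (α * x i + 9 * β * N) * E := by ring

/-- Adding edges increases expected compromise probabilities: if the adjacency
matrix of `G₁` is entrywise below that of `G₂` (i.e. `E₁ ⊆ E₂`), then the solution
of the SCS model on `G₁` stays componentwise below the one on `G₂` on `[0, T]`,
for the same parameters, attack strategy and initial condition in `[0,1]^N`. -/
theorem scs_monotone_in_graph {N : ℕ} (a1 a2 : Fin N → Fin N → ℝ)
    (ha1 : ∀ i j, a1 i j = 0 ∨ a1 i j = 1) (ha2 : ∀ i j, a2 i j = 0 ∨ a2 i j = 1)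
    (hsym1 : ∀ i j, a1 i j = a1 j i) (hsym2 : ∀ i j, a2 i j = a2 j i)
    (h12 : ∀ i j, a1 i j ≤ a2 i j)
    (w x : Fin N → ℝ) (α β δ γ : ℝ)
    (hα : 0 < α) (hβ : 0 < β) (hδ : 0 < δ) (hγ : 0 < γ)
    (hx : ∀ i, 0 ≤ x i) (hw : ∀ i, 0 < w i)
    (T : ℝ) (hT : 0 < T) (C1 C2 : ℝ → Fin N → ℝ)
    (hC1 : ∀ t ∈ Set.Icc (0 : ℝ) T, HasDerivAt C1 (scsF a1 w x α β δ γ (C1 t)) t)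
    (hC2 : ∀ t ∈ Set.Icc (0 : ℝ) T, HasDerivAt C2 (scsF a2 w x α β δ γ (C2 t)) t)
    (h0 : C1 0 = C2 0) (h0box : ∀ i, C1 0 i ∈ Set.Icc (0 : ℝ) 1) :
    ∀ t ∈ Set.Icc (0 : ℝ) T, ∀ i, C1 t i ≤ C2 t i := by
  classical
  have hN : (0:ℝ) ≤ N := Nat.cast_nonneg N
  set K : ℝ := 1 + ∑ i, 1 / (δ * w i) * (α * x i + 9 * β * N) with hKdef
  have hg : ∀ i : Fin N, 0 ≤ 1 / (δ * w i) * (α * x i + 9 * β * N) := by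
    intro i
    have hδw : 0 < δ * w i := mul_pos hδ (hw i)
    apply mul_nonneg (le_of_lt (one_div_pos.mpr hδw))
    have h1 : 0 ≤ α * x i := mul_nonneg hα.le (hx i)
    nlinarith [mul_nonneg hβ.le hN]
  have hsum0 : 0 ≤ ∑ i, 1 / (δ * w i) * (α * x i + 9 * β * N) :=
    Finset.sum_nonneg (fun i _ => hg i)
  have hK1 : 1 ≤ K := by rw [hKdef]; linarith
  have hK0 : 0 < K := by linarith
  have hKi : ∀ i : Fin N, 1 / (δ * w i) * (α * x i + 9 * β * N) < K := by
    intro i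
    have h := Finset.single_le_sum (fun j (_ : j ∈ Finset.univ) => hg j) (Finset.mem_univ i)
    rw [hKdef]; linarith
  have hD1 : ∀ (i : Fin N), ∀ t ∈ Set.Icc (0:ℝ) T,
      HasDerivAt (fun u => C1 u i) (scsF a1 w x α β δ γ (C1 t) i) t :=
    fun i t ht => (hasDerivAt_pi.mp (hC1 t ht)) i
  have hD2 : ∀ (i : Fin N), ∀ t ∈ Set.Icc (0:ℝ) T,
      HasDerivAt (fun u => C2 u i) (scsF a2 w x α β δ γ (C2 t) i) t :=
    fun i t ht => (hasDerivAt_pi.mp (hC2 t ht)) i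
  have hc1 : ∀ (i : Fin N), ∀ t ∈ Set.Icc (0:ℝ) T, ContinuousAt (fun u => C1 u i) t :=
    fun i t ht => (hD1 i t ht).continuousAt
  have hc2 : ∀ (i : Fin N), ∀ t ∈ Set.Icc (0:ℝ) T, ContinuousAt (fun u => C2 u i) t :=
    fun i t ht => (hD2 i t ht).continuousAt
  -- main quantified estimate
  have key : ∀ ε : ℝ, 0 < ε → ε * Real.exp (K * T) ≤ 1 →
      ∀ t ∈ Set.Icc (0:ℝ) T, ∀ i, C1 t i ≤ C2 t i + ε * Real.exp (K * t) := by
    intro ε hε hεT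
    set e : ℝ → ℝ := fun s => ε * Real.exp (K * s) with hedef
    have hepos : ∀ s, 0 < e s := fun s => mul_pos hε (Real.exp_pos _)
    have hele : ∀ s ∈ Set.Icc (0:ℝ) T, e s ≤ 1 := by
      intro s hs
      have h1 : Real.exp (K * s) ≤ Real.exp (K * T) :=
        Real.exp_le_exp.mpr (mul_le_mul_of_nonneg_left hs.2 hK0.le)
      calc e s = ε * Real.exp (K * s) := rfl
        _ ≤ ε * Real.exp (K * T) := mul_le_mul_of_nonneg_left h1 hε.le
        _ ≤ 1 := hεT
    have hecont : Continuous e := by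
      exact continuous_const.mul (Real.continuous_exp.comp (continuous_const.mul continuous_id))
    have hde : ∀ s, HasDerivAt e (K * e s) s := by
      intro s
      have h1 : HasDerivAt (fun u : ℝ => K * u) K s := by
        simpa using (hasDerivAt_id s).const_mul K
      have h3 := h1.exp.const_mul ε
      convert h3 using 1
      rfl
      rfl
      simp [hedef]; ring
    set Q : ℝ → Prop := fun s => ∀ i : Fin N,
      C1 s i ≤ 1 + e s ∧ -(e s) ≤ C1 s i ∧ C2 s i ≤ 1 + e s ∧ -(e s) ≤ C2 s i ∧
        C1 s i ≤ C2 s i + e s with hQdef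
    set A : Set ℝ := {t | t ∈ Set.Icc (0:ℝ) T ∧ ∀ s ∈ Set.Icc (0:ℝ) t, Q s} with hAdef
    have he0 : e 0 = ε := by simp [hedef]
    have hQs0 : ∀ i : Fin N, C1 0 i < 1 + e 0 ∧ -(e 0) < C1 0 i ∧ C2 0 i < 1 + e 0 ∧
        -(e 0) < C2 0 i ∧ C1 0 i < C2 0 i + e 0 := by
      intro i
      have hb := h0box i
      have hb2 : C2 0 i = C1 0 i := by rw [h0]
      rw [he0, hb2]
      refine ⟨by linarith [hb.2], by linarith [hb.1], by linarith [hb.2],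
        by linarith [hb.1], by linarith⟩
    have hQ0 : Q 0 := by
      rw [hQdef]
      intro i
      obtain ⟨u1, u2, u3, u4, u5⟩ := hQs0 i
      exact ⟨u1.le, u2.le, u3.le, u4.le, u5.le⟩
    have hA0 : (0:ℝ) ∈ A := by
      refine ⟨⟨le_refl 0, hT.le⟩, ?_⟩
      intro s hs
      have : s = 0 := le_antisymm hs.2 hs.1
      rw [this]; exact hQ0
    have hAne : A.Nonempty := ⟨0, hA0⟩
    have hAbdd : BddAbove A := ⟨T, fun t ht => ht.1.2⟩
    set τ : ℝ := sSup A with hτdef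
    have hτ0 : 0 ≤ τ := le_csSup hAbdd hA0
    have hτT : τ ≤ T := csSup_le hAne (fun t ht => ht.1.2)
    have hτIcc : τ ∈ Set.Icc (0:ℝ) T := ⟨hτ0, hτT⟩
    have hQlt : ∀ s ∈ Set.Ico (0:ℝ) τ, Q s := by
      intro s hs
      obtain ⟨t', ht', hst⟩ := exists_lt_of_lt_csSup hAne hs.2
      exact ht'.2 s ⟨hs.1, hst.le⟩
    -- nonstrict conditions hold at τ
    have hQτ : Q τ := by
      rcases eq_or_lt_of_le hτ0 with h | hτpos
      · rw [← h]; exact hQ0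
      · rw [hQdef]
        intro i
        have hC1c : ContinuousAt (fun u => C1 u i) τ := hc1 i τ hτIcc
        have hC2c : ContinuousAt (fun u => C2 u i) τ := hc2 i τ hτIcc
        have hecont : ContinuousAt e τ := hecont.continuousAt
        refine ⟨?_, ?_, ?_, ?_, ?_⟩
        · have hle : C1 τ i - (1 + e τ) ≤ 0 :=
            scs_le_lim (f := fun s => C1 s i - (1 + e s)) hτpos (by fun_prop)
              (fun s hs => by
                have h5 := (hQlt s hs) i
                show C1 s i - (1 + e s) ≤ 0
                linarith [h5.1])
          linarith
        · have hle : -(e τ) - C1 τ i ≤ 0 :=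
            scs_le_lim (f := fun s => -(e s) - C1 s i) hτpos (by fun_prop)
              (fun s hs => by
                have h5 := (hQlt s hs) i
                show -(e s) - C1 s i ≤ 0
                linarith [h5.2.1])
          linarith
        · have hle : C2 τ i - (1 + e τ) ≤ 0 :=
            scs_le_lim (f := fun s => C2 s i - (1 + e s)) hτpos (by fun_prop)
              (fun s hs => by
                have h5 := (hQlt s hs) i
                show C2 s i - (1 + e s) ≤ 0
                linarith [h5.2.2.1])
          linarith
        · have hle : -(e τ) - C2 τ i ≤ 0 :=
            scs_le_lim (f := fun s => -(e s) - C2 s i) hτpos (by fun_prop)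
              (fun s hs => by
                have h5 := (hQlt s hs) i
                show -(e s) - C2 s i ≤ 0
                linarith [h5.2.2.2.1])
          linarith
        · have hle : C1 τ i - C2 τ i - e τ ≤ 0 :=
            scs_le_lim (f := fun s => C1 s i - C2 s i - e s) hτpos (by fun_prop)
              (fun s hs => by
                have h5 := (hQlt s hs) i
                show C1 s i - C2 s i - e s ≤ 0
                linarith [h5.2.2.2.2])
          linarith
    have hτA : τ ∈ A := by
      refine ⟨hτIcc, ?_⟩
      intro s hs
      rcases lt_or_eq_of_le hs.2 with h | h
      · exact hQlt s ⟨hs.1, h⟩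
      · rw [h]; exact hQτ
    have hEτpos : 0 < e τ := hepos τ
    have hEτ1 : e τ ≤ 1 := hele τ hτIcc
    have hbox1 : ∀ j, -(e τ) ≤ C1 τ j ∧ C1 τ j ≤ 1 + e τ :=
      fun j => ⟨(hQτ j).2.1, (hQτ j).1⟩
    have hbox2 : ∀ j, -(e τ) ≤ C2 τ j ∧ C2 τ j ≤ 1 + e τ :=
      fun j => ⟨(hQτ j).2.2.2.1, (hQτ j).2.2.1⟩
    have hcd : ∀ j, C1 τ j ≤ C2 τ j + e τ := fun j => (hQτ j).2.2.2.2
    have gen : ∀ (f : ℝ → ℝ) (d : ℝ), (∀ s ∈ Set.Ico (0:ℝ) τ, f s ≤ 0) → f τ ≤ 0 →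
        (f τ = 0 → HasDerivAt f d τ ∧ d < 0) → (τ = 0 → f 0 < 0) → f τ < 0 := by
      intro f d hle hτle himp h0f
      rcases lt_or_eq_of_le hτle with h | h
      · exact h
      · exfalso
        rcases eq_or_lt_of_le hτ0 with h0 | hτpos
        · have h1 := h0f h0.symm
          rw [← h0] at h
          linarith
        · exact scs_no_touch hτpos hle h (himp h).1 (himp h).2
    have hstrict : ∀ i : Fin N,
        C1 τ i < 1 + e τ ∧ -(e τ) < C1 τ i ∧ C2 τ i < 1 + e τ ∧ -(e τ) < C2 τ i ∧
          C1 τ i < C2 τ i + e τ := by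
      intro i
      have hKiE : 1 / (δ * w i) * (α * x i + 9 * β * N) * e τ < K * e τ :=
        mul_lt_mul_of_pos_right (hKi i) hEτpos
      refine ⟨?_, ?_, ?_, ?_, ?_⟩
      · have h := gen (fun s => C1 s i - (1 + e s))
          (scsF a1 w x α β δ γ (C1 τ) i - K * e τ)
          (fun s hs => by
            have h5 := (hQlt s hs) i
            show C1 s i - (1 + e s) ≤ 0
            linarith [h5.1])
          (by show C1 τ i - (1 + e τ) ≤ 0; linarith [(hQτ i).1])
          (fun heq => by
            have heq' : C1 τ i - (1 + e τ) = 0 := heq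
            have hub := scsF_upper_bound a1 ha1 w x α β δ γ hα hβ hδ hγ hx hw
              (C1 τ) (e τ) hEτpos hEτ1 hbox1 i (by linarith)
            exact ⟨(hD1 i τ hτIcc).sub ((hde τ).const_add 1),
              sub_neg.mpr (lt_of_le_of_lt hub hKiE)⟩)
          (fun h0τ => by
            show C1 0 i - (1 + e 0) < 0
            linarith [(hQs0 i).1])
        have h' : C1 τ i - (1 + e τ) < 0 := h
        linarith
      · have h := gen (fun s => -(e s) - C1 s i)
          (-(K * e τ) - scsF a1 w x α β δ γ (C1 τ) i)
          (fun s hs => by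
            have h5 := (hQlt s hs) i
            show -(e s) - C1 s i ≤ 0
            linarith [h5.2.1])
          (by show -(e τ) - C1 τ i ≤ 0; linarith [(hQτ i).2.1])
          (fun heq => by
            have heq' : -(e τ) - C1 τ i = 0 := heq
            have hlb := scsF_lower_bound a1 ha1 w x α β δ γ hα hβ hδ hγ hx hw
              (C1 τ) (e τ) hEτpos hEτ1 hbox1 i (by linarith)
            exact ⟨((hde τ).neg).sub (hD1 i τ hτIcc),
              sub_neg.mpr (lt_of_lt_of_le (neg_lt_neg hKiE) hlb)⟩)
          (fun h0τ => by
            show -(e 0) - C1 0 i < 0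
            linarith [(hQs0 i).2.1])
        have h' : -(e τ) - C1 τ i < 0 := h
        linarith
      · have h := gen (fun s => C2 s i - (1 + e s))
          (scsF a2 w x α β δ γ (C2 τ) i - K * e τ)
          (fun s hs => by
            have h5 := (hQlt s hs) i
            show C2 s i - (1 + e s) ≤ 0
            linarith [h5.2.2.1])
          (by show C2 τ i - (1 + e τ) ≤ 0; linarith [(hQτ i).2.2.1])
          (fun heq => by
            have heq' : C2 τ i - (1 + e τ) = 0 := heq
            have hub := scsF_upper_bound a2 ha2 w x α β δ γ hα hβ hδ hγ hx hw
              (C2 τ) (e τ) hEτpos hEτ1 hbox2 i (by linarith)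
            exact ⟨(hD2 i τ hτIcc).sub ((hde τ).const_add 1),
              sub_neg.mpr (lt_of_le_of_lt hub hKiE)⟩)
          (fun h0τ => by
            show C2 0 i - (1 + e 0) < 0
            linarith [(hQs0 i).2.2.1])
        have h' : C2 τ i - (1 + e τ) < 0 := h
        linarith
      · have h := gen (fun s => -(e s) - C2 s i)
          (-(K * e τ) - scsF a2 w x α β δ γ (C2 τ) i)
          (fun s hs => by
            have h5 := (hQlt s hs) i
            show -(e s) - C2 s i ≤ 0
            linarith [h5.2.2.2.1])
          (by show -(e τ) - C2 τ i ≤ 0; linarith [(hQτ i).2.2.2.1])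
          (fun heq => by
            have heq' : -(e τ) - C2 τ i = 0 := heq
            have hlb := scsF_lower_bound a2 ha2 w x α β δ γ hα hβ hδ hγ hx hw
              (C2 τ) (e τ) hEτpos hEτ1 hbox2 i (by linarith)
            exact ⟨((hde τ).neg).sub (hD2 i τ hτIcc),
              sub_neg.mpr (lt_of_lt_of_le (neg_lt_neg hKiE) hlb)⟩)
          (fun h0τ => by
            show -(e 0) - C2 0 i < 0
            linarith [(hQs0 i).2.2.2.1])
        have h' : -(e τ) - C2 τ i < 0 := h
        linarith
      · have h := gen (fun s => C1 s i - C2 s i - e s)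
          (scsF a1 w x α β δ γ (C1 τ) i - scsF a2 w x α β δ γ (C2 τ) i - K * e τ)
          (fun s hs => by
            have h5 := (hQlt s hs) i
            show C1 s i - C2 s i - e s ≤ 0
            linarith [h5.2.2.2.2])
          (by show C1 τ i - C2 τ i - e τ ≤ 0; linarith [(hQτ i).2.2.2.2])
          (fun heq => by
            have heq' : C1 τ i - C2 τ i - e τ = 0 := heq
            have hcb := scsF_compare_bound a1 a2 ha1 ha2 h12 w x α β δ γ
              hα hβ hδ hγ hx hw (C1 τ) (C2 τ) (e τ) hEτpos hEτ1 hbox1 hbox2 hcd i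
              (by linarith)
            exact ⟨((hD1 i τ hτIcc).sub (hD2 i τ hτIcc)).sub (hde τ),
              sub_neg.mpr (lt_of_le_of_lt hcb hKiE)⟩)
          (fun h0τ => by
            show C1 0 i - C2 0 i - e 0 < 0
            linarith [(hQs0 i).2.2.2.2])
        have h' : C1 τ i - C2 τ i - e τ < 0 := h
        linarith
    have hτeq : τ = T := by
      by_contra hne
      have hτlt : τ < T := lt_of_le_of_ne hτT hne
      have hev : ∀ᶠ s in nhds τ, ∀ i : Fin N,
          C1 s i < 1 + e s ∧ -(e s) < C1 s i ∧ C2 s i < 1 + e s ∧ -(e s) < C2 s i ∧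
            C1 s i < C2 s i + e s := by
        rw [Filter.eventually_all]
        intro i
        have hC1c : ContinuousAt (fun u => C1 u i) τ := hc1 i τ hτIcc
        have hC2c : ContinuousAt (fun u => C2 u i) τ := hc2 i τ hτIcc
        have he' : ContinuousAt e τ := hecont.continuousAt
        obtain ⟨u1, u2, u3, u4, u5⟩ := hstrict i
        have e1 : ∀ᶠ s in nhds τ, C1 s i < 1 + e s :=
          ContinuousAt.eventually_lt hC1c (by fun_prop) u1
        have e2 : ∀ᶠ s in nhds τ, -(e s) < C1 s i :=
          ContinuousAt.eventually_lt (by fun_prop) hC1c u2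
        have e3 : ∀ᶠ s in nhds τ, C2 s i < 1 + e s :=
          ContinuousAt.eventually_lt hC2c (by fun_prop) u3
        have e4 : ∀ᶠ s in nhds τ, -(e s) < C2 s i :=
          ContinuousAt.eventually_lt (by fun_prop) hC2c u4
        have e5 : ∀ᶠ s in nhds τ, C1 s i < C2 s i + e s :=
          ContinuousAt.eventually_lt hC1c (by fun_prop) u5
        filter_upwards [e1, e2, e3, e4, e5] with s f1 f2 f3 f4 f5
        exact ⟨f1, f2, f3, f4, f5⟩
      obtain ⟨r, hr0, hr⟩ := Metric.eventually_nhds_iff.mp hev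
      have ht'g : τ < min T (τ + r / 2) := lt_min hτlt (by linarith)
      have ht'A : min T (τ + r / 2) ∈ A := by
        refine ⟨⟨le_min hT.le (by linarith), min_le_left _ _⟩, ?_⟩
        intro s hs
        rcases le_or_gt s τ with h | h
        · exact hτA.2 s ⟨hs.1, h⟩
        · have hd : dist s τ < r := by
            rw [Real.dist_eq, abs_of_pos (by linarith)]
            have h6 : s ≤ τ + r / 2 := le_trans hs.2 (min_le_right _ _)
            linarith
          have h5 := hr hd
          intro i
          obtain ⟨u1, u2, u3, u4, u5⟩ := h5 i
          exact ⟨u1.le, u2.le, u3.le, u4.le, u5.le⟩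
      have hle' := le_csSup hAbdd ht'A
      rw [← hτdef] at hle'
      linarith
    intro t ht i
    have hQt : Q t := hτA.2 t ⟨ht.1, by rw [hτeq]; exact ht.2⟩
    exact (hQt i).2.2.2.2
  -- conclude by letting ε → 0
  intro t ht i
  by_contra hcon
  push_neg at hcon
  have hexp : (0:ℝ) < Real.exp (K * t) := Real.exp_pos _
  set dp := C1 t i - C2 t i with hdp
  have hdp0 : 0 < dp := by rw [hdp]; linarith
  set ε := min (Real.exp (-(K * T))) (dp / (2 * Real.exp (K * t))) with hεdef
  have hε : 0 < ε := lt_min (Real.exp_pos _) (div_pos hdp0 (by positivity))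
  have hεT : ε * Real.exp (K * T) ≤ 1 := by
    have h1 : ε ≤ Real.exp (-(K * T)) := min_le_left _ _
    have h2 := mul_le_mul_of_nonneg_right h1 (Real.exp_pos (K * T)).le
    have h3 : Real.exp (-(K * T)) * Real.exp (K * T) = 1 := by
      rw [← Real.exp_add, neg_add_cancel, Real.exp_zero]
    linarith
  have hk := key ε hε hεT t ht i
  have h3 : ε * Real.exp (K * t) ≤ dp / 2 := by
    have h1 : ε ≤ dp / (2 * Real.exp (K * t)) := min_le_right _ _
    have h2 := mul_le_mul_of_nonneg_right h1 hexp.le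
    have h4 : dp / (2 * Real.exp (K * t)) * Real.exp (K * t) = dp / 2 := by
      field_simp
    linarith
  have hdpe : dp = C1 t i - C2 t i := hdp
  linarith
end

section
/- The risk of an organization increases with the addition of new edges: if G₁ is a spanning subgraph of G₂ (same vertex set, E₁ ⊆ E₂), then R(G₁, α, β, δ, γ, T, B) ≤ R(G₂, α, β, δ, γ, T, B). -/
open Set Filter Topology

/-- First-crossing lemma: a finite family of functions positive at 0, whose derivative is
strictly positive at any point where all are nonnegative and one vanishes, stays positive. -/
lemma stay_pos {ι : Type*} [Fintype ι] (T : ℝ)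
    (f f' : ι → ℝ → ℝ)
    (hderiv : ∀ k, ∀ t ∈ Icc (0:ℝ) T, HasDerivAt (f k) (f' k t) t)
    (h0 : ∀ k, 0 < f k 0)
    (hbd : ∀ t ∈ Icc (0:ℝ) T, (∀ k, 0 ≤ f k t) → ∀ k, f k t = 0 → 0 < f' k t) :
    ∀ t ∈ Icc (0:ℝ) T, ∀ k, 0 < f k t := by
  by_contra hcon
  push_neg at hcon
  obtain ⟨t₁, ht₁, k₁, hk₁⟩ := hcon
  set A : Set ℝ := {t | t ∈ Icc (0:ℝ) T ∧ ∃ k, f k t ≤ 0} with hA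
  have hcontOn : ∀ k, ContinuousOn (f k) (Icc (0:ℝ) T) := fun k t ht =>
    ((hderiv k t ht).continuousAt).continuousWithinAt
  have hAclosed : IsClosed A := by
    have : A = ⋃ k, (Icc (0:ℝ) T ∩ f k ⁻¹' Iic 0) := by
      ext t; simp [hA, Set.mem_iUnion, and_comm, exists_and_left]
    rw [this]
    exact isClosed_iUnion_of_finite fun k =>
      (hcontOn k).preimage_isClosed_of_isClosed isClosed_Icc isClosed_Iic
  have hAne : A.Nonempty := ⟨t₁, ht₁, k₁, hk₁⟩
  have hAbdd : BddBelow A := ⟨0, fun t ht => ht.1.1⟩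
  set t₀ := sInf A with ht₀
  have ht₀A : t₀ ∈ A := hAclosed.csInf_mem hAne hAbdd
  have ht₀Icc : t₀ ∈ Icc (0:ℝ) T := ht₀A.1
  obtain ⟨k₀, hk₀⟩ := ht₀A.2
  have ht₀pos : 0 < t₀ := by
    rcases lt_or_eq_of_le ht₀Icc.1 with h | h
    · exact h
    · exfalso; rw [← h] at hk₀; exact absurd hk₀ (not_le.2 (h0 k₀))
  -- positivity before t₀
  have hpos : ∀ t, 0 ≤ t → t < t₀ → ∀ k, 0 < f k t := by
    intro t h0t htt₀ k
    by_contra h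
    push_neg at h
    have : t ∈ A := ⟨⟨h0t, le_trans htt₀.le ht₀Icc.2⟩, k, h⟩
    exact absurd (csInf_le hAbdd this) (not_le.2 htt₀)
  -- all nonneg at t₀
  have hnonneg : ∀ k, 0 ≤ f k t₀ := by
    intro k
    have hten : Tendsto (f k) (𝓝[<] t₀) (𝓝 (f k t₀)) :=
      ((hderiv k t₀ ht₀Icc).continuousAt).continuousWithinAt.tendsto
    refine ge_of_tendsto hten ?_
    filter_upwards [Ioo_mem_nhdsLT ht₀pos] with t ht
    exact (hpos t ht.1.le ht.2 k).le
  have hk₀eq : f k₀ t₀ = 0 := le_antisymm hk₀ (hnonneg k₀)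
  have hderivpos : 0 < f' k₀ t₀ := hbd t₀ ht₀Icc hnonneg k₀ hk₀eq
  -- left slope nonpositive
  have hslope : Tendsto (slope (f k₀) t₀) (𝓝[<] t₀) (𝓝 (f' k₀ t₀)) := by
    have := (hasDerivAt_iff_tendsto_slope.1 (hderiv k₀ t₀ ht₀Icc))
    exact this.mono_left (nhdsWithin_mono _ fun t ht => ne_of_lt ht)
  have : f' k₀ t₀ ≤ 0 := by
    refine le_of_tendsto hslope ?_
    filter_upwards [Ioo_mem_nhdsLT ht₀pos] with t ht
    have hft : 0 < f k₀ t := hpos t ht.1.le ht.2 k₀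
    rw [slope_def_field]
    apply le_of_lt
    apply div_neg_of_pos_of_neg
    · rw [hk₀eq]; linarith
    · linarith [ht.2]
  linarith

/-- Taking the limit as the perturbation goes to zero. -/
lemma eps_limit {y e ε₀ : ℝ} (he : 0 < e) (hε₀ : 0 < ε₀)
    (h : ∀ ε, 0 < ε → ε < ε₀ → 0 < y + ε * e) : 0 ≤ y := by
  by_contra hy
  push_neg at hy
  have hm : 0 < min (ε₀/2) (-y/e) := lt_min (half_pos hε₀) (div_pos (neg_pos.2 hy) he)
  have h1 := h (min (ε₀/2) (-y/e)) hm (lt_of_le_of_lt (min_le_left _ _) (half_lt_self hε₀))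
  have h2 : min (ε₀/2) (-y/e) * e ≤ (-y/e) * e :=
    mul_le_mul_of_nonneg_right (min_le_right _ _) he.le
  rw [div_mul_cancel₀ _ (ne_of_gt he)] at h2
  linarith
/-- Arithmetic for the lower crossing. -/
lemma cross_low (s c η γw K : ℝ) (hs : -(c*η) ≤ s) (hη0 : 0 < η) (hη1 : η ≤ 1)
    (hc : 0 ≤ c) (hγw : 0 < γw) (hK : K = 2*c+1) :
    0 < s * (1 - -η) - γw * -η + K * η := by
  subst hK
  nlinarith [mul_le_mul_of_nonneg_right hs (by linarith : (0:ℝ) ≤ 1 + η),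
    mul_nonneg (mul_nonneg hc hη0.le) (by linarith : (0:ℝ) ≤ 1 - η), mul_pos hγw hη0]

/-- Arithmetic for the upper crossing. -/
lemma cross_high (s c η γw K : ℝ) (hs : -(c*η) ≤ s) (hη0 : 0 < η) (hη1 : η ≤ 1)
    (hc : 0 ≤ c) (hγw : 0 < γw) (hK : K = 2*c+1) :
    0 < K * η - (s * (1 - (1 + η)) - γw * (1 + η)) := by
  subst hK
  nlinarith [mul_le_mul_of_nonneg_right hs hη0.le,
    mul_nonneg (mul_nonneg hc hη0.le) (by linarith : (0:ℝ) ≤ 1 - η),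
    mul_pos hγw (by linarith : (0:ℝ) < 1 + η)]

set_option maxHeartbeats 1000000 in
/-- Box invariance: solutions of the SCS model starting in `[0,1]^N` remain in `[0,1]^N`. -/
lemma scs_box {N : ℕ} (a : Fin N → Fin N → ℝ)
    (ha0 : ∀ i j, 0 ≤ a i j) (hale : ∀ i j, a i j ≤ 1)
    (w x : Fin N → ℝ) (α β δ γ T : ℝ)
    (hα : 0 < α) (hβ : 0 < β) (hδ : 0 < δ) (hγ : 0 < γ)
    (hw : ∀ i, 0 < w i) (hT : 0 < T) (hx : ∀ i, 0 ≤ x i)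
    (C0 : Fin N → ℝ) (h0box : ∀ i, C0 i ∈ Icc (0:ℝ) 1)
    (C : ℝ → Fin N → ℝ) (hC0 : C 0 = C0)
    (hCd : ∀ t ∈ Icc (0:ℝ) T, HasDerivAt C (scsF a w x α β δ γ (C t)) t) :
    ∀ t ∈ Icc (0:ℝ) T, ∀ i, C t i ∈ Icc (0:ℝ) 1 := by
  rcases Nat.eq_zero_or_pos N with hN | hN
  · intro t ht i; exact absurd i.isLt (by omega)
  haveI : Nonempty (Fin N) := Fin.pos_iff_nonempty.mp hN
  set W : ℝ := Finset.univ.inf' Finset.univ_nonempty w with hWdef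
  have hW : 0 < W := by
    rw [hWdef, Finset.lt_inf'_iff]
    exact fun i _ => hw i
  have hWle : ∀ i, W ≤ w i := fun i => Finset.inf'_le _ (Finset.mem_univ i)
  set c : ℝ := β * N / (δ * W) with hcdef
  have hc : 0 ≤ c :=
    div_nonneg (mul_nonneg hβ.le (Nat.cast_nonneg N)) (mul_pos hδ hW).le
  set K : ℝ := 2 * c + 1 with hKdef
  have hK : 0 < K := by rw [hKdef]; linarith
  -- key perturbation estimate
  have key : ∀ ε, 0 < ε → ε < Real.exp (-(K*T)) → ∀ t ∈ Icc (0:ℝ) T, ∀ i,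
      0 < C t i + ε * Real.exp (K*t) ∧ 0 < 1 + ε * Real.exp (K*t) - C t i := by
    intro ε hε0 hεT
    set f : (Fin N ⊕ Fin N) → ℝ → ℝ :=
      Sum.elim (fun i t => C t i + ε * Real.exp (K*t))
        (fun i t => 1 + ε * Real.exp (K*t) - C t i) with hfdef
    set f' : (Fin N ⊕ Fin N) → ℝ → ℝ :=
      Sum.elim (fun i t => scsF a w x α β δ γ (C t) i + ε * (Real.exp (K*t) * K))
        (fun i t => ε * (Real.exp (K*t) * K) - scsF a w x α β δ γ (C t) i) with hf'def
    have hexp : ∀ t : ℝ, HasDerivAt (fun u => ε * Real.exp (K*u)) (ε * (Real.exp (K*t) * K)) t := by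
      intro t
      have h1 : HasDerivAt (fun u : ℝ => K * u) K t := by
        simpa using (hasDerivAt_id t).const_mul K
      exact h1.exp.const_mul ε
    have hmain := stay_pos T f f'
      (by
        rintro (i | i) t ht
        · exact (hasDerivAt_pi.1 (hCd t ht) i).add (hexp t)
        · have := ((hasDerivAt_const t (1:ℝ)).add (hexp t)).sub (hasDerivAt_pi.1 (hCd t ht) i)
          simp only [zero_add] at this; exact this)
      (by
        rintro (i | i)
        · have : C 0 i = C0 i := by rw [hC0]
          simp only [hfdef, Sum.elim_inl, mul_zero, Real.exp_zero, mul_one, this]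
          linarith [(h0box i).1]
        · have : C 0 i = C0 i := by rw [hC0]
          simp only [hfdef, Sum.elim_inr, mul_zero, Real.exp_zero, mul_one, this]
          linarith [(h0box i).2])
      (by
        intro t ht hnn k hk0
        set η : ℝ := ε * Real.exp (K*t) with hηdef
        have hηpos : 0 < η := mul_pos hε0 (Real.exp_pos _)
        have hη1 : η ≤ 1 := by
          have h1 : Real.exp (K*t) ≤ Real.exp (K*T) :=
            Real.exp_le_exp.2 (mul_le_mul_of_nonneg_left ht.2 hK.le)
          have h2 : η ≤ Real.exp (-(K*T)) * Real.exp (K*T) := by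
            rw [hηdef]
            exact mul_le_mul hεT.le h1 (Real.exp_pos _).le (Real.exp_pos _).le
          rwa [← Real.exp_add, neg_add_cancel, Real.exp_zero] at h2
        have hlow : ∀ j, -η ≤ C t j := by
          intro j
          have := hnn (Sum.inl j)
          simp only [hfdef, Sum.elim_inl] at this
          linarith
        have hup : ∀ j, C t j ≤ 1 + η := by
          intro j
          have := hnn (Sum.inr j)
          simp only [hfdef, Sum.elim_inr] at this
          linarith
        have hS : ∀ i : Fin N, -((N:ℝ) * η) ≤ ∑ j, a j i * C t j := by
          intro i
          have hterm : ∀ j ∈ Finset.univ, -η ≤ a j i * C t j := by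
            intro j _
            nlinarith [ha0 j i, hale j i, hlow j, hηpos]
          calc -((N:ℝ) * η) = ∑ _j : Fin N, -η := by
                rw [Finset.sum_const, Finset.card_univ]; simp; try ring
            _ ≤ ∑ j, a j i * C t j := Finset.sum_le_sum hterm
        have hδW : 0 < δ * W := mul_pos hδ hW
        have hs : ∀ i : Fin N,
            -(c * η) ≤ (1/(δ * w i)) * (α * x i + β * ∑ j, a j i * C t j) := by
          intro i
          have hδw : 0 < δ * w i := mul_pos hδ (hw i)
          have h1 : -(β * ((N:ℝ) * η)) ≤ α * x i + β * ∑ j, a j i * C t j := by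
            nlinarith [mul_le_mul_of_nonneg_left (hS i) hβ.le, mul_nonneg hα.le (hx i)]
          have h2 : (1/(δ * w i)) * (-(β * ((N:ℝ) * η))) ≤
              (1/(δ * w i)) * (α * x i + β * ∑ j, a j i * C t j) :=
            mul_le_mul_of_nonneg_left h1 (one_div_nonneg.2 hδw.le)
          have h3 : (1/(δ * w i)) * (β * ((N:ℝ) * η)) ≤ (1/(δ * W)) * (β * ((N:ℝ) * η)) := by
            apply mul_le_mul_of_nonneg_right _ (mul_nonneg hβ.le (mul_nonneg (Nat.cast_nonneg N) hηpos.le))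
            exact one_div_le_one_div_of_le hδW (mul_le_mul_of_nonneg_left (hWle i) hδ.le)
          have h4 : (1/(δ * W)) * (β * ((N:ℝ) * η)) = c * η := by
            rw [hcdef]; field_simp
          nlinarith
        rcases k with i | i
        · -- lower crossing
          have hCti : C t i = -η := by
            have : C t i + η = 0 := by
              simpa only [hfdef, Sum.elim_inl, hηdef] using hk0
            linarith
          simp only [hf'def, Sum.elim_inl, scsF]
          have hKη : ε * (Real.exp (K*t) * K) = K * η := by rw [hηdef]; ring
          rw [hCti, hKη]
          exact cross_low _ c η (γ * w i) K (hs i) hηpos hη1 hc (mul_pos hγ (hw i)) hKdef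
        · -- upper crossing
          have hCti : C t i = 1 + η := by
            have : 1 + η - C t i = 0 := by
              simpa only [hfdef, Sum.elim_inr, hηdef] using hk0
            linarith
          simp only [hf'def, Sum.elim_inr, scsF]
          have hKη : ε * (Real.exp (K*t) * K) = K * η := by rw [hηdef]; ring
          rw [hCti, hKη]
          exact cross_high _ c η (γ * w i) K (hs i) hηpos hη1 hc (mul_pos hγ (hw i)) hKdef)
    intro t ht i
    constructor
    · have := hmain t ht (Sum.inl i)
      simpa only [hfdef, Sum.elim_inl] using this
    · have := hmain t ht (Sum.inr i)
      simpa only [hfdef, Sum.elim_inr] using this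
  -- pass to the limit ε → 0
  intro t ht i
  have hε₀ : 0 < Real.exp (-(K*T)) := Real.exp_pos _
  have he : 0 < Real.exp (K*t) := Real.exp_pos _
  constructor
  · exact eps_limit he hε₀ (fun ε h1 h2 => (key ε h1 h2 t ht i).1)
  · have : 0 ≤ 1 - C t i :=
      eps_limit he hε₀ (fun ε h1 h2 => by linarith [(key ε h1 h2 t ht i).2])
    linarith
/-- Arithmetic for the comparison crossing. -/
lemma cross_cmp (s1 s2 c η γw K u : ℝ) (hs1 : 0 ≤ s1) (hs : s1 - c*η ≤ s2)
    (hη0 : 0 < η) (hη1 : η ≤ 1) (hc : 0 ≤ c) (hγw : 0 < γw) (hK : K = 2*c+1)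
    (hu0 : 0 ≤ u) (hu1 : u ≤ 1) :
    0 < s2 * (1 - (u - η)) - γw * (u - η) - (s1 * (1 - u) - γw * u) + K * η := by
  subst hK
  nlinarith [mul_le_mul_of_nonneg_right hs (by linarith : (0:ℝ) ≤ 1 - u + η),
    mul_nonneg hs1 hη0.le,
    mul_nonneg (mul_nonneg hc hη0.le) (by linarith : (0:ℝ) ≤ 1 - η),
    mul_nonneg (mul_nonneg hc hη0.le) hu0,
    mul_pos hγw hη0]

set_option maxHeartbeats 1000000 in
/-- Comparison: adding edges (entrywise larger adjacency matrix) increases the solution. -/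
lemma scs_le {N : ℕ} (a1 a2 : Fin N → Fin N → ℝ)
    (ha10 : ∀ i j, 0 ≤ a1 i j) (ha20 : ∀ i j, 0 ≤ a2 i j) (ha2le : ∀ i j, a2 i j ≤ 1)
    (h12 : ∀ i j, a1 i j ≤ a2 i j)
    (w x : Fin N → ℝ) (α β δ γ T : ℝ)
    (hα : 0 < α) (hβ : 0 < β) (hδ : 0 < δ) (hγ : 0 < γ)
    (hw : ∀ i, 0 < w i) (hT : 0 < T) (hx : ∀ i, 0 ≤ x i)
    (C0 : Fin N → ℝ)
    (C1 C2 : ℝ → Fin N → ℝ) (hC10 : C1 0 = C0) (hC20 : C2 0 = C0)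
    (hC1d : ∀ t ∈ Icc (0:ℝ) T, HasDerivAt C1 (scsF a1 w x α β δ γ (C1 t)) t)
    (hC2d : ∀ t ∈ Icc (0:ℝ) T, HasDerivAt C2 (scsF a2 w x α β δ γ (C2 t)) t)
    (hC1box : ∀ t ∈ Icc (0:ℝ) T, ∀ i, C1 t i ∈ Icc (0:ℝ) 1)
    (hC2box : ∀ t ∈ Icc (0:ℝ) T, ∀ i, C2 t i ∈ Icc (0:ℝ) 1) :
    ∀ t ∈ Icc (0:ℝ) T, ∀ i, C1 t i ≤ C2 t i := by
  rcases Nat.eq_zero_or_pos N with hN | hN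
  · intro t ht i; exact absurd i.isLt (by omega)
  haveI : Nonempty (Fin N) := Fin.pos_iff_nonempty.mp hN
  set W : ℝ := Finset.univ.inf' Finset.univ_nonempty w with hWdef
  have hW : 0 < W := by
    rw [hWdef, Finset.lt_inf'_iff]
    exact fun i _ => hw i
  have hWle : ∀ i, W ≤ w i := fun i => Finset.inf'_le _ (Finset.mem_univ i)
  set c : ℝ := β * N / (δ * W) with hcdef
  have hc : 0 ≤ c :=
    div_nonneg (mul_nonneg hβ.le (Nat.cast_nonneg N)) (mul_pos hδ hW).le
  set K : ℝ := 2 * c + 1 with hKdef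
  have hK : 0 < K := by rw [hKdef]; linarith
  have key : ∀ ε, 0 < ε → ε < Real.exp (-(K*T)) → ∀ t ∈ Icc (0:ℝ) T, ∀ i,
      0 < C2 t i - C1 t i + ε * Real.exp (K*t) := by
    intro ε hε0 hεT
    set f : Fin N → ℝ → ℝ := fun i t => C2 t i - C1 t i + ε * Real.exp (K*t) with hfdef
    set f' : Fin N → ℝ → ℝ := fun i t =>
      scsF a2 w x α β δ γ (C2 t) i - scsF a1 w x α β δ γ (C1 t) i
        + ε * (Real.exp (K*t) * K) with hf'def
    have hexp : ∀ t : ℝ, HasDerivAt (fun u => ε * Real.exp (K*u)) (ε * (Real.exp (K*t) * K)) t := by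
      intro t
      have h1 : HasDerivAt (fun u : ℝ => K * u) K t := by
        simpa using (hasDerivAt_id t).const_mul K
      exact h1.exp.const_mul ε
    have hmain := stay_pos T f f'
      (by
        intro i t ht
        exact ((hasDerivAt_pi.1 (hC2d t ht) i).sub (hasDerivAt_pi.1 (hC1d t ht) i)).add (hexp t))
      (by
        intro i
        have e1 : C1 0 i = C0 i := by rw [hC10]
        have e2 : C2 0 i = C0 i := by rw [hC20]
        simp only [hfdef, mul_zero, Real.exp_zero, mul_one, e1, e2]
        linarith)
      (by
        intro t ht hnn k hk0
        set η : ℝ := ε * Real.exp (K*t) with hηdef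
        have hηpos : 0 < η := mul_pos hε0 (Real.exp_pos _)
        have hη1 : η ≤ 1 := by
          have h1 : Real.exp (K*t) ≤ Real.exp (K*T) :=
            Real.exp_le_exp.2 (mul_le_mul_of_nonneg_left ht.2 hK.le)
          have h2 : η ≤ Real.exp (-(K*T)) * Real.exp (K*T) := by
            rw [hηdef]
            exact mul_le_mul hεT.le h1 (Real.exp_pos _).le (Real.exp_pos _).le
          rwa [← Real.exp_add, neg_add_cancel, Real.exp_zero] at h2
        have hge : ∀ j, C1 t j - η ≤ C2 t j := by
          intro j
          have := hnn j
          simp only [hfdef] at this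
          linarith
        have hCk : C2 t k = C1 t k - η := by
          have : C2 t k - C1 t k + η = 0 := by
            simpa only [hfdef, hηdef] using hk0
          linarith
        have hδW : 0 < δ * W := mul_pos hδ hW
        have hδw : 0 < δ * w k := mul_pos hδ (hw k)
        -- sum bounds
        have hS1 : (0:ℝ) ≤ ∑ j, a1 j k * C1 t j :=
          Finset.sum_nonneg fun j _ => mul_nonneg (ha10 j k) (hC1box t ht j).1
        have hS : (∑ j, a1 j k * C1 t j) - (N:ℝ) * η ≤ ∑ j, a2 j k * C2 t j := by
          have hterm : ∀ j ∈ Finset.univ, a1 j k * C1 t j - η ≤ a2 j k * C2 t j := by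
            intro j _
            have g1 : a2 j k * (C1 t j - η) ≤ a2 j k * C2 t j :=
              mul_le_mul_of_nonneg_left (hge j) (ha20 j k)
            have g2 : a1 j k * C1 t j ≤ a2 j k * C1 t j :=
              mul_le_mul_of_nonneg_right (h12 j k) (hC1box t ht j).1
            nlinarith [ha20 j k, ha2le j k, hηpos]
          calc (∑ j, a1 j k * C1 t j) - (N:ℝ) * η
              = ∑ j, (a1 j k * C1 t j - η) := by
                rw [Finset.sum_sub_distrib, Finset.sum_const, Finset.card_univ]
                simp
            _ ≤ ∑ j, a2 j k * C2 t j := Finset.sum_le_sum hterm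
        -- bounds on the force terms
        have hs1 : (0:ℝ) ≤ (1/(δ * w k)) * (α * x k + β * ∑ j, a1 j k * C1 t j) := by
          apply mul_nonneg (one_div_nonneg.2 hδw.le)
          have := mul_nonneg hα.le (hx k)
          nlinarith [mul_le_mul_of_nonneg_left hS1 hβ.le]
        have hs : (1/(δ * w k)) * (α * x k + β * ∑ j, a1 j k * C1 t j) - c * η ≤
            (1/(δ * w k)) * (α * x k + β * ∑ j, a2 j k * C2 t j) := by
          have h1 : (α * x k + β * ∑ j, a1 j k * C1 t j) - β * ((N:ℝ) * η) ≤
              α * x k + β * ∑ j, a2 j k * C2 t j := by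
            nlinarith [mul_le_mul_of_nonneg_left hS hβ.le]
          have h2 : (1/(δ * w k)) * ((α * x k + β * ∑ j, a1 j k * C1 t j) - β * ((N:ℝ) * η)) ≤
              (1/(δ * w k)) * (α * x k + β * ∑ j, a2 j k * C2 t j) :=
            mul_le_mul_of_nonneg_left h1 (one_div_nonneg.2 hδw.le)
          have h3 : (1/(δ * w k)) * (β * ((N:ℝ) * η)) ≤ (1/(δ * W)) * (β * ((N:ℝ) * η)) := by
            apply mul_le_mul_of_nonneg_right _
              (mul_nonneg hβ.le (mul_nonneg (Nat.cast_nonneg N) hηpos.le))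
            exact one_div_le_one_div_of_le hδW (mul_le_mul_of_nonneg_left (hWle k) hδ.le)
          have h4 : (1/(δ * W)) * (β * ((N:ℝ) * η)) = c * η := by
            rw [hcdef]; field_simp
          nlinarith
        simp only [hf'def, scsF]
        have hKη : ε * (Real.exp (K*t) * K) = K * η := by rw [hηdef]; ring
        have hCk' : C1 t k = C1 t k := rfl
        rw [hCk, hKη]
        exact cross_cmp _ _ c η (γ * w k) K (C1 t k) hs1 hs hηpos hη1 hc
          (mul_pos hγ (hw k)) hKdef (hC1box t ht k).1 (hC1box t ht k).2)
    intro t ht i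
    have := hmain t ht i
    simpa only [hfdef] using this
  intro t ht i
  have hε₀ : 0 < Real.exp (-(K*T)) := Real.exp_pos _
  have he : 0 < Real.exp (K*t) := Real.exp_pos _
  have : 0 ≤ C2 t i - C1 t i :=
    eps_limit he hε₀ (fun ε h1 h2 => key ε h1 h2 t ht i)
  linarith
/-- The risk of an organization increases with the addition of new edges:
if `G₁` is a spanning subgraph of `G₂` (adjacency matrices satisfy `a1 ≤ a2`
entrywise), then `R(G₁) ≤ R(G₂)`, where `R(G) = sup_{x ∈ Ω_B} ∫₀ᵀ Σ_i w_i C_i(t) dt`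
over the admissible strategy set `Ω_B`. -/
theorem risk_monotone_in_graph {N : ℕ} (a1 a2 : Fin N → Fin N → ℝ)
    (ha1 : ∀ i j, a1 i j = 0 ∨ a1 i j = 1) (ha2 : ∀ i j, a2 i j = 0 ∨ a2 i j = 1)
    (hsym1 : ∀ i j, a1 i j = a1 j i) (hsym2 : ∀ i j, a2 i j = a2 j i)
    (h12 : ∀ i j, a1 i j ≤ a2 i j)
    (w : Fin N → ℝ) (α β δ γ T B : ℝ)
    (hα : 0 < α) (hβ : 0 < β) (hδ : 0 < δ) (hγ : 0 < γ)
    (hw : ∀ i, 0 < w i) (hT : 0 < T) (hB : 0 < B)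
    (C0 : Fin N → ℝ) (h0box : ∀ i, C0 i ∈ Set.Icc (0 : ℝ) 1)
    (sol1 sol2 : (Fin N → ℝ) → ℝ → Fin N → ℝ)
    (hsol1 : ∀ x : Fin N → ℝ, (∀ i, 0 ≤ x i) → sol1 x 0 = C0 ∧
      ∀ t ∈ Set.Icc (0 : ℝ) T, HasDerivAt (sol1 x) (scsF a1 w x α β δ γ (sol1 x t)) t)
    (hsol2 : ∀ x : Fin N → ℝ, (∀ i, 0 ≤ x i) → sol2 x 0 = C0 ∧
      ∀ t ∈ Set.Icc (0 : ℝ) T, HasDerivAt (sol2 x) (scsF a2 w x α β δ γ (sol2 x t)) t) :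
    sSup ((fun x => ∫ t in (0:ℝ)..T, ∑ i, w i * sol1 x t i) ''
        {u : Fin N → ℝ | (∀ i, 0 ≤ u i) ∧ ∑ i, u i = B}) ≤
    sSup ((fun x => ∫ t in (0:ℝ)..T, ∑ i, w i * sol2 x t i) ''
        {u : Fin N → ℝ | (∀ i, 0 ≤ u i) ∧ ∑ i, u i = B}) := by
  -- matrix entries are in [0,1]
  have ha10 : ∀ i j, 0 ≤ a1 i j := fun i j => by rcases ha1 i j with h | h <;> simp [h]
  have ha1le : ∀ i j, a1 i j ≤ 1 := fun i j => by rcases ha1 i j with h | h <;> simp [h]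
  have ha20 : ∀ i j, 0 ≤ a2 i j := fun i j => by rcases ha2 i j with h | h <;> simp [h]
  have ha2le : ∀ i j, a2 i j ≤ 1 := fun i j => by rcases ha2 i j with h | h <;> simp [h]
  rcases Nat.eq_zero_or_pos N with hN | hN
  · subst hN
    have hempty : {u : Fin 0 → ℝ | (∀ i, 0 ≤ u i) ∧ ∑ i, u i = B} = ∅ := by
      ext u
      simp only [Set.mem_setOf_eq, Set.mem_empty_iff_false, iff_false, not_and]
      intro _
      simp only [Finset.univ_eq_empty, Finset.sum_empty]
      intro h; exact absurd h (by linarith)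
    rw [hempty]
    simp
  -- continuity of the integrands
  have cont : ∀ (Cf D : ℝ → Fin N → ℝ),
      (∀ t ∈ Set.Icc (0:ℝ) T, HasDerivAt Cf (D t) t) →
      ContinuousOn (fun t => ∑ i, w i * Cf t i) (Set.Icc (0:ℝ) T) := by
    intro Cf D hd
    apply continuousOn_finset_sum
    intro i _
    exact continuousOn_const.mul
      (fun t ht => ((hasDerivAt_pi.1 (hd t ht) i).continuousAt).continuousWithinAt)
  have integ : ∀ (Cf D : ℝ → Fin N → ℝ),
      (∀ t ∈ Set.Icc (0:ℝ) T, HasDerivAt Cf (D t) t) →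
      IntervalIntegrable (fun t => ∑ i, w i * Cf t i) MeasureTheory.volume 0 T := by
    intro Cf D hd
    apply ContinuousOn.intervalIntegrable
    rw [Set.uIcc_of_le hT.le]
    exact cont Cf D hd
  -- for each admissible strategy, useful facts
  have main : ∀ u ∈ {u : Fin N → ℝ | (∀ i, 0 ≤ u i) ∧ ∑ i, u i = B},
      (∫ t in (0:ℝ)..T, ∑ i, w i * sol1 u t i) ≤ (∫ t in (0:ℝ)..T, ∑ i, w i * sol2 u t i) ∧
      (0 ≤ ∫ t in (0:ℝ)..T, ∑ i, w i * sol2 u t i) ∧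
      (∫ t in (0:ℝ)..T, ∑ i, w i * sol2 u t i) ≤ T * ∑ i, w i := by
    rintro u ⟨hu0, _⟩
    obtain ⟨h10, h1d⟩ := hsol1 u hu0
    obtain ⟨h20, h2d⟩ := hsol2 u hu0
    have box1 := scs_box a1 ha10 ha1le w u α β δ γ T hα hβ hδ hγ hw hT hu0 C0 h0box
      (sol1 u) h10 h1d
    have box2 := scs_box a2 ha20 ha2le w u α β δ γ T hα hβ hδ hγ hw hT hu0 C0 h0box
      (sol2 u) h20 h2d
    have cmp := scs_le a1 a2 ha10 ha20 ha2le h12 w u α β δ γ T hα hβ hδ hγ hw hT hu0 C0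
      (sol1 u) (sol2 u) h10 h20 h1d h2d box1 box2
    refine ⟨?_, ?_, ?_⟩
    · apply intervalIntegral.integral_mono_on hT.le (integ _ _ h1d) (integ _ _ h2d)
      intro t ht
      exact Finset.sum_le_sum fun i _ =>
        mul_le_mul_of_nonneg_left (cmp t ht i) (hw i).le
    · apply intervalIntegral.integral_nonneg hT.le
      intro t ht
      exact Finset.sum_nonneg fun i _ => mul_nonneg (hw i).le (box2 t ht i).1
    · have h1 : (∫ t in (0:ℝ)..T, ∑ i, w i * sol2 u t i) ≤
          ∫ _t in (0:ℝ)..T, ∑ i, w i := by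
        apply intervalIntegral.integral_mono_on hT.le (integ _ _ h2d)
          intervalIntegrable_const
        intro t ht
        exact Finset.sum_le_sum fun i _ => by
          nlinarith [(box2 t ht i).2, (hw i).le]
      rwa [intervalIntegral.integral_const, sub_zero, smul_eq_mul] at h1
  -- the set of admissible strategies is nonempty
  have hne : (Set.univ.pi fun _ => Set.univ : Set (Fin N → ℝ)) ≠ ∅ := by simp
  have hx₀ : (fun _ : Fin N => B / N) ∈ {u : Fin N → ℝ | (∀ i, 0 ≤ u i) ∧ ∑ i, u i = B} := by
    constructor
    · intro i
      positivity
    · rw [Finset.sum_const, Finset.card_univ, Fintype.card_fin, nsmul_eq_mul]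
      field_simp
  have hbdd : BddAbove ((fun x => ∫ t in (0:ℝ)..T, ∑ i, w i * sol2 x t i) ''
      {u : Fin N → ℝ | (∀ i, 0 ≤ u i) ∧ ∑ i, u i = B}) := by
    refine ⟨T * ∑ i, w i, ?_⟩
    rintro y ⟨u, hu, rfl⟩
    exact (main u hu).2.2
  have hsup_nonneg : 0 ≤ sSup ((fun x => ∫ t in (0:ℝ)..T, ∑ i, w i * sol2 x t i) ''
      {u : Fin N → ℝ | (∀ i, 0 ≤ u i) ∧ ∑ i, u i = B}) := by
    refine le_trans (main _ hx₀).2.1 (le_csSup hbdd ?_)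
    exact Set.mem_image_of_mem _ hx₀
  apply Real.sSup_le _ hsup_nonneg
  rintro y ⟨u, hu, rfl⟩
  exact le_trans (main u hu).1 (le_csSup hbdd (Set.mem_image_of_mem _ hu))
end

section
/- The expected loss is monotone nondecreasing in the attack coefficient: if α₁ ≤ α₂ and C^{(1)}, C^{(2)} are the solutions of the SCS model with attack coefficients α₁, α₂ respectively (all other data equal, initial condition in [0,1]^N), then C_i^{(1)}(t) ≤ C_i^{(2)}(t) for all i, t ∈ [0,T], and hence L(x; G, α₁, β, δ, γ, T) ≤ L(x; G, α₂, β, δ, γ, T). -/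
open Set Filter Topology

/-- Key Grönwall/Dini lemma: if each `e i` is differentiable with derivative `e' i t`, starts
nonpositive, and `e' i t ≤ K * ∑ⱼ (e j t)⁺` whenever `e i t ≥ 0`, then every `e i` stays
nonpositive on `[0, T]`. -/
lemma nonpos_of_dini {ι : Type*} [Fintype ι] {T K : ℝ} (hK : 0 ≤ K)
    (e e' : ι → ℝ → ℝ)
    (hd : ∀ t ∈ Set.Icc (0:ℝ) T, ∀ i, HasDerivAt (e i) (e' i t) t)
    (h0 : ∀ i, e i 0 ≤ 0)
    (hb : ∀ t ∈ Set.Ico (0:ℝ) T, ∀ i, 0 ≤ e i t → e' i t ≤ K * ∑ j, max (e j t) 0) :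
    ∀ t ∈ Set.Icc (0:ℝ) T, ∀ i, e i t ≤ 0 := by
  set φ : ℝ → ℝ := fun t => ∑ j, max (e j t) 0 with hφ
  have hφnn : ∀ t, 0 ≤ φ t := fun t =>
    Finset.sum_nonneg fun j _ => le_max_right _ _
  set M : ℝ := (Fintype.card ι : ℝ) with hM
  have hMnn : 0 ≤ M := Nat.cast_nonneg _
  have hcont : ContinuousOn φ (Set.Icc 0 T) := by
    apply continuousOn_finset_sum
    intro j _
    have hc : ContinuousOn (e j) (Set.Icc 0 T) :=
      fun t ht => ((hd t ht j).continuousAt).continuousWithinAt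
    exact hc.sup continuousOn_const
  have key : ∀ t ∈ Set.Icc (0:ℝ) T, φ t ≤ gronwallBound 0 (M*K) 0 (t - 0) := by
    apply le_gronwallBound_of_liminf_deriv_right_le (f' := fun t => (M*K) * φ t) hcont
    · -- liminf slope condition
      intro t ht r hr
      have hε' : 0 < (r - M*K*φ t) / (M+1) := by
        apply div_pos (by linarith) (by linarith)
      set ε' := (r - M*K*φ t) / (M+1) with hε'def
      have htIcc : t ∈ Set.Icc (0:ℝ) T := ⟨ht.1, ht.2.le⟩
      have hcomp : ∀ i, ∀ᶠ z in 𝓝[>] t,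
          (z - t)⁻¹ * (max (e i z) 0 - max (e i t) 0) ≤ K * φ t + ε' := by
        intro i
        rcases lt_or_ge (e i t) 0 with hneg | hpos
        · -- eventually e i z < 0, slope is 0
          have : ∀ᶠ z in 𝓝 t, e i z < 0 :=
            (hd t htIcc i).continuousAt.eventually_lt_const hneg
          filter_upwards [this.filter_mono nhdsWithin_le_nhds] with z hz
          rw [max_eq_right hz.le, max_eq_right hneg.le, sub_self, mul_zero]
          have : 0 ≤ K * φ t := mul_nonneg hK (hφnn t)
          linarith
        · -- slope of positive part ≤ max(slope, 0)
          have hslope : Filter.Tendsto (slope (e i) t) (𝓝[≠] t) (𝓝 (e' i t)) :=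
            hasDerivAt_iff_tendsto_slope.mp (hd t htIcc i)
          have hev : ∀ᶠ z in 𝓝[≠] t, slope (e i) t z < e' i t + ε' :=
            hslope.eventually_lt_const (by linarith)
          have hmono : 𝓝[>] t ≤ 𝓝[≠] t :=
            nhdsWithin_mono t fun z hz => ne_of_gt hz
          filter_upwards [hev.filter_mono hmono, self_mem_nhdsWithin] with z hz hz'
          have hzt : (0:ℝ) < z - t := sub_pos.2 hz'
          have h1 : max (e i z) 0 - max (e i t) 0 ≤ max (e i z - e i t) 0 := by
            rw [max_eq_left hpos]
            rcases le_total (e i z) 0 with h | h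
            · rw [max_eq_right h]; simp only [le_max_iff]; right; linarith
            · rw [max_eq_left h]; exact le_max_left _ _
          have h2 : (z - t)⁻¹ * (max (e i z) 0 - max (e i t) 0)
              ≤ max ((z - t)⁻¹ * (e i z - e i t)) 0 := by
            calc (z - t)⁻¹ * (max (e i z) 0 - max (e i t) 0)
                ≤ (z - t)⁻¹ * max (e i z - e i t) 0 := by
                  exact mul_le_mul_of_nonneg_left h1 (inv_nonneg.2 hzt.le)
              _ = max ((z - t)⁻¹ * (e i z - e i t)) 0 := by
                  rw [mul_max_of_nonneg _ _ (inv_nonneg.2 hzt.le), mul_zero]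
          have hslopeval : slope (e i) t z = (z - t)⁻¹ * (e i z - e i t) := by
            rw [slope_def_field]; field_simp
          rw [hslopeval] at hz
          have h3 : max ((z - t)⁻¹ * (e i z - e i t)) 0 ≤ max (e' i t + ε') 0 :=
            max_le_max hz.le le_rfl
          have h4 : e' i t ≤ K * φ t := hb t ht i hpos
          have h5 : max (e' i t + ε') 0 ≤ K * φ t + ε' := by
            have : 0 ≤ K * φ t := mul_nonneg hK (hφnn t)
            rcases max_cases (e' i t + ε') 0 with ⟨h, _⟩ | ⟨h, _⟩ <;> rw [h] <;> linarith
          linarith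
      have hall : ∀ᶠ z in 𝓝[>] t, ∀ i,
          (z - t)⁻¹ * (max (e i z) 0 - max (e i t) 0) ≤ K * φ t + ε' :=
        eventually_all.2 hcomp
      apply Filter.Eventually.frequently
      filter_upwards [hall] with z hz
      have hsum : (z - t)⁻¹ * (φ z - φ t)
          = ∑ i, (z - t)⁻¹ * (max (e i z) 0 - max (e i t) 0) := by
        rw [hφ, ← Finset.sum_sub_distrib, Finset.mul_sum]
      rw [hsum]
      calc ∑ i, (z - t)⁻¹ * (max (e i z) 0 - max (e i t) 0)
          ≤ ∑ _i : ι, (K * φ t + ε') := Finset.sum_le_sum fun i _ => hz i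
        _ = M * (K * φ t + ε') := by rw [Finset.sum_const, nsmul_eq_mul]; rfl
        _ < r := by
            have hle : M * ε' < (M+1) * ε' := by nlinarith
            have heq : (M+1) * ε' = r - M*K*φ t := by
              rw [hε'def]; field_simp
            nlinarith [mul_nonneg hMnn (mul_nonneg hK (hφnn t))]
    · -- initial condition
      simp only [hφ]
      exact Finset.sum_nonpos fun j _ => max_le (h0 j) le_rfl
    · intro t _; linarith
  intro t ht i
  have h1 : max (e i t) 0 ≤ φ t :=
    Finset.single_le_sum (f := fun j => max (e j t) 0)
      (fun j _ => le_max_right _ _) (Finset.mem_univ i)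
  have h2 := key t ht
  rw [gronwallBound_ε0_δ0] at h2
  exact le_trans (le_max_left _ _) (le_trans h1 h2)

/-- The box `[0,1]^N` is invariant for the SCS dynamics. -/
lemma scs_box_invariant {N : ℕ} (a : Fin N → Fin N → ℝ)
    (ha : ∀ i j, a i j = 0 ∨ a i j = 1)
    (w x : Fin N → ℝ) (α β δ γ T : ℝ)
    (hα : 0 ≤ α) (hβ : 0 < β) (hδ : 0 < δ) (hγ : 0 < γ)
    (hx : ∀ i, 0 ≤ x i) (hw : ∀ i, 0 < w i)
    (C : ℝ → Fin N → ℝ)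
    (hC : ∀ t ∈ Set.Icc (0:ℝ) T, HasDerivAt C (scsF a w x α β δ γ (C t)) t)
    (h0box : ∀ i, C 0 i ∈ Set.Icc (0:ℝ) 1) :
    ∀ t ∈ Set.Icc (0:ℝ) T, ∀ i, C t i ∈ Set.Icc (0:ℝ) 1 := by
  have hCd : ∀ t ∈ Set.Icc (0:ℝ) T, ∀ i,
      HasDerivAt (fun s => C s i) (scsF a w x α β δ γ (C t) i) t :=
    fun t ht i => hasDerivAt_pi.1 (hC t ht) i
  -- a uniform bound on the components
  obtain ⟨B0, hB0⟩ := (isCompact_Icc : IsCompact (Set.Icc (0:ℝ) T)).exists_bound_of_continuousOn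
    (fun t ht => (hC t ht).continuousAt.continuousWithinAt)
  set B : ℝ := max B0 0 with hBdef
  have hB : ∀ t ∈ Set.Icc (0:ℝ) T, ∀ i, |C t i| ≤ B := by
    intro t ht i
    calc |C t i| = ‖C t i‖ := rfl
      _ ≤ ‖C t‖ := norm_le_pi_norm (C t) i
      _ ≤ B0 := hB0 t ht
      _ ≤ B := le_max_left _ _
  have hBnn : 0 ≤ B := le_max_right _ _
  set W : ℝ := ∑ j, (w j)⁻¹ with hWdef
  have hWnn : 0 ≤ W := Finset.sum_nonneg fun j _ => (inv_nonneg.2 (hw j).le)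
  have hWi : ∀ i, (w i)⁻¹ ≤ W :=
    fun i => Finset.single_le_sum (f := fun j => (w j)⁻¹)
      (fun j _ => inv_nonneg.2 (hw j).le) (Finset.mem_univ i)
  set K : ℝ := (β * (1+B) / δ) * W with hKdef
  have hKnn : 0 ≤ K :=
    mul_nonneg (div_nonneg (mul_nonneg hβ.le (by linarith)) hδ.le) hWnn
  set e : (Fin N ⊕ Fin N) → ℝ → ℝ :=
    Sum.elim (fun i t => -C t i) (fun i t => C t i - 1) with hedef
  set e' : (Fin N ⊕ Fin N) → ℝ → ℝ :=
    Sum.elim (fun i t => -(scsF a w x α β δ γ (C t) i))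
             (fun i t => scsF a w x α β δ γ (C t) i) with he'def
  have hsumsplit : ∀ t, (∑ p : Fin N ⊕ Fin N, max (e p t) 0)
      = (∑ j, max (-(C t j)) 0) + (∑ j, max (C t j - 1) 0) := by
    intro t
    rw [Fintype.sum_sum_type]
    simp [hedef]
  have main := nonpos_of_dini (T := T) hKnn e e'
    (by
      intro t ht p
      rcases p with i | i
      · exact (hCd t ht i).neg
      · exact (hCd t ht i).sub_const 1)
    (by
      intro p
      rcases p with i | i
      · simpa [hedef] using (h0box i).1
      · simpa [hedef] using (h0box i).2)
    (by
      intro t ht p hpos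
      have htIcc : t ∈ Set.Icc (0:ℝ) T := ⟨ht.1, ht.2.le⟩
      rw [hsumsplit]
      set P : ℝ := ∑ j, max (-(C t j)) 0 with hPdef
      set Q : ℝ := ∑ j, max (C t j - 1) 0 with hQdef
      have hPnn : 0 ≤ P := Finset.sum_nonneg fun j _ => le_max_right _ _
      have hQnn : 0 ≤ Q := Finset.sum_nonneg fun j _ => le_max_right _ _
      -- lower bound on A i
      have hA_lb : ∀ i, -(β*P) ≤ α * x i + β * ∑ j, a j i * C t j := by
        intro i
        have hsum : -P ≤ ∑ j, a j i * C t j := by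
          have : ∑ j, -(a j i * C t j) ≤ P := by
            apply Finset.sum_le_sum
            intro j _
            rcases ha j i with h | h
            · rw [h]; simpa using le_max_right (-(C t j)) 0
            · rw [h, one_mul]; exact le_max_left _ _
          rw [Finset.sum_neg_distrib] at this
          linarith
        nlinarith [mul_nonneg hα (hx i)]
      -- the common final estimate
      have hfinal : ∀ i, (1/(δ * w i)) * (β * P * (1+B)) ≤ K * (P + Q) := by
        intro i
        have h1 : (1:ℝ)/(δ * w i) = (1/δ) * (w i)⁻¹ := by
          rw [one_div, mul_inv, one_div]
        have h2 : (1:ℝ)/(δ * w i) ≤ (1/δ) * W := by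
          rw [h1]
          exact mul_le_mul_of_nonneg_left (hWi i) (by positivity)
        have h3 : 0 ≤ β * P * (1+B) := by positivity
        calc (1/(δ * w i)) * (β * P * (1+B)) ≤ ((1/δ) * W) * (β * P * (1+B)) :=
              mul_le_mul_of_nonneg_right h2 h3
          _ = K * P := by rw [hKdef]; ring
          _ ≤ K * (P + Q) := by nlinarith
      rcases p with i | i
      · -- C t i ≤ 0
        simp only [hedef, Sum.elim_inl] at hpos
        simp only [he'def, Sum.elim_inl]
        have hCi : C t i ≤ 0 := by linarith
        have hBi : -C t i ≤ B := by
          have := hB t htIcc i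
          rw [abs_le] at this; linarith [this.1]
        set A : ℝ := α * x i + β * ∑ j, a j i * C t j with hAdef
        have hAlb := hA_lb i
        have hu1 : (1:ℝ) ≤ 1 - C t i := by linarith
        have hu2 : 1 - C t i ≤ 1 + B := by linarith
        have hprod : (-A) * (1 - C t i) ≤ β * P * (1+B) := by
          calc (-A) * (1 - C t i) ≤ (β*P) * (1 - C t i) :=
                mul_le_mul_of_nonneg_right (by linarith) (by linarith)
            _ ≤ (β*P) * (1+B) :=
                mul_le_mul_of_nonneg_left hu2 (mul_nonneg hβ.le hPnn)
            _ = β * P * (1+B) := by ring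
        have hγterm : γ * w i * C t i ≤ 0 :=
          mul_nonpos_of_nonneg_of_nonpos (mul_nonneg hγ.le (hw i).le) hCi
        have hscs : -(scsF a w x α β δ γ (C t) i)
            = (1/(δ * w i)) * ((-A) * (1 - C t i)) + γ * w i * C t i := by
          simp only [scsF, hAdef]; ring
        rw [hscs]
        have hden : (0:ℝ) ≤ 1/(δ * w i) := one_div_nonneg.2 (mul_nonneg hδ.le (hw i).le)
        calc (1/(δ * w i)) * ((-A) * (1 - C t i)) + γ * w i * C t i
            ≤ (1/(δ * w i)) * (β * P * (1+B)) + 0 := by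
              have := mul_le_mul_of_nonneg_left hprod hden
              linarith
          _ ≤ K * (P + Q) := by simpa using hfinal i
      · -- C t i ≥ 1
        simp only [hedef, Sum.elim_inr] at hpos
        simp only [he'def, Sum.elim_inr]
        have hCi : 1 ≤ C t i := by linarith
        have hBi : C t i ≤ B := by
          have := hB t htIcc i
          rw [abs_le] at this; linarith [this.2]
        set A : ℝ := α * x i + β * ∑ j, a j i * C t j with hAdef
        have hAlb := hA_lb i
        have hprod : A * (1 - C t i) ≤ β * P * (1+B) := by
          have h1 : A * (1 - C t i) ≤ (-(β*P)) * (1 - C t i) := by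
            apply mul_le_mul_of_nonpos_right hAlb (by linarith)
          have h2 : (-(β*P)) * (1 - C t i) = (β*P) * (C t i - 1) := by ring
          have h3 : (β*P) * (C t i - 1) ≤ (β*P) * (1+B) :=
            mul_le_mul_of_nonneg_left (by linarith) (mul_nonneg hβ.le hPnn)
          linarith
        have hγterm : -(γ * w i * C t i) ≤ 0 := by
          have : 0 ≤ γ * w i * C t i :=
            mul_nonneg (mul_nonneg hγ.le (hw i).le) (by linarith)
          linarith
        have hscs : scsF a w x α β δ γ (C t) i
            = (1/(δ * w i)) * (A * (1 - C t i)) + -(γ * w i * C t i) := by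
          simp only [scsF, hAdef]; ring
        rw [hscs]
        have hden : (0:ℝ) ≤ 1/(δ * w i) := one_div_nonneg.2 (mul_nonneg hδ.le (hw i).le)
        calc (1/(δ * w i)) * (A * (1 - C t i)) + -(γ * w i * C t i)
            ≤ (1/(δ * w i)) * (β * P * (1+B)) + 0 := by
              have := mul_le_mul_of_nonneg_left hprod hden
              linarith
          _ ≤ K * (P + Q) := by simpa using hfinal i)
  intro t ht i
  constructor
  · have := main t ht (Sum.inl i)
    simp only [hedef, Sum.elim_inl] at this
    linarith
  · have := main t ht (Sum.inr i)
    simp only [hedef, Sum.elim_inr] at this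
    linarith

/-- The expected loss is monotone nondecreasing in the attack coefficient:
if α₁ ≤ α₂ then the solutions satisfy C¹ ≤ C² componentwise on [0,T], and hence
L(x; G, α₁, β, δ, γ, T) ≤ L(x; G, α₂, β, δ, γ, T). -/
theorem loss_monotone_in_attack_coeff {N : ℕ} (a : Fin N → Fin N → ℝ)
    (ha : ∀ i j, a i j = 0 ∨ a i j = 1)
    (w x : Fin N → ℝ) (α₁ α₂ β δ γ T : ℝ)
    (hα₁ : 0 < α₁) (hα : α₁ ≤ α₂) (hβ : 0 < β) (hδ : 0 < δ) (hγ : 0 < γ)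
    (hx : ∀ i, 0 ≤ x i) (hw : ∀ i, 0 < w i) (hT : 0 < T)
    (C1 C2 : ℝ → Fin N → ℝ)
    (hC1 : ∀ t ∈ Set.Icc (0 : ℝ) T, HasDerivAt C1 (scsF a w x α₁ β δ γ (C1 t)) t)
    (hC2 : ∀ t ∈ Set.Icc (0 : ℝ) T, HasDerivAt C2 (scsF a w x α₂ β δ γ (C2 t)) t)
    (h0 : C1 0 = C2 0) (h0box : ∀ i, C1 0 i ∈ Set.Icc (0 : ℝ) 1) :
    (∀ t ∈ Set.Icc (0 : ℝ) T, ∀ i, C1 t i ≤ C2 t i) ∧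
    (∫ t in (0:ℝ)..T, ∑ i, w i * C1 t i) ≤ ∫ t in (0:ℝ)..T, ∑ i, w i * C2 t i := by
  have h0box2 : ∀ i, C2 0 i ∈ Set.Icc (0:ℝ) 1 := by rw [← h0]; exact h0box
  have hbox1 := scs_box_invariant a ha w x α₁ β δ γ T hα₁.le hβ hδ hγ hx hw C1 hC1 h0box
  have hbox2 := scs_box_invariant a ha w x α₂ β δ γ T (hα₁.le.trans hα) hβ hδ hγ hx hw
    C2 hC2 h0box2
  have hC1d : ∀ t ∈ Set.Icc (0:ℝ) T, ∀ i,
      HasDerivAt (fun s => C1 s i) (scsF a w x α₁ β δ γ (C1 t) i) t :=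
    fun t ht i => hasDerivAt_pi.1 (hC1 t ht) i
  have hC2d : ∀ t ∈ Set.Icc (0:ℝ) T, ∀ i,
      HasDerivAt (fun s => C2 s i) (scsF a w x α₂ β δ γ (C2 t) i) t :=
    fun t ht i => hasDerivAt_pi.1 (hC2 t ht) i
  set W : ℝ := ∑ j, (w j)⁻¹ with hWdef
  have hWnn : 0 ≤ W := Finset.sum_nonneg fun j _ => (inv_nonneg.2 (hw j).le)
  have hWi : ∀ i, (w i)⁻¹ ≤ W :=
    fun i => Finset.single_le_sum (f := fun j => (w j)⁻¹)
      (fun j _ => inv_nonneg.2 (hw j).le) (Finset.mem_univ i)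
  set K2 : ℝ := (β / δ) * W with hK2def
  have hK2nn : 0 ≤ K2 := mul_nonneg (div_nonneg hβ.le hδ.le) hWnn
  have comp := nonpos_of_dini (T := T) hK2nn
    (fun i t => C1 t i - C2 t i)
    (fun i t => scsF a w x α₁ β δ γ (C1 t) i - scsF a w x α₂ β δ γ (C2 t) i)
    (fun t ht i => (hC1d t ht i).sub (hC2d t ht i))
    (fun i => by rw [h0]; simp)
    (by
      intro t ht i hpos
      have htIcc : t ∈ Set.Icc (0:ℝ) T := ⟨ht.1, ht.2.le⟩
      have hb1 := hbox1 t htIcc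
      have hb2 := hbox2 t htIcc
      set S : ℝ := ∑ j, max (C1 t j - C2 t j) 0 with hSdef
      have hSnn : 0 ≤ S := Finset.sum_nonneg fun j _ => le_max_right _ _
      set A1 : ℝ := α₁ * x i + β * ∑ j, a j i * C1 t j with hA1def
      set A2 : ℝ := α₂ * x i + β * ∑ j, a j i * C2 t j with hA2def
      set A1' : ℝ := α₁ * x i + β * ∑ j, a j i * C2 t j with hA1'def
      have hsum1nn : 0 ≤ ∑ j, a j i * C1 t j := by
        apply Finset.sum_nonneg
        intro j _
        rcases ha j i with h | h
        · rw [h, zero_mul]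
        · rw [h, one_mul]; exact (hb1 j).1
      have hA1nn : 0 ≤ A1 :=
        add_nonneg (mul_nonneg hα₁.le (hx i)) (mul_nonneg hβ.le hsum1nn)
      have hA1'leA2 : A1' ≤ A2 := by
        have := mul_le_mul_of_nonneg_right hα (hx i)
        simp only [hA1'def, hA2def]; linarith
      set D : ℝ := ∑ j, a j i * (C1 t j - C2 t j) with hDdef
      have hDsplit : A1 - A1' = β * D := by
        simp only [hA1def, hA1'def, hDdef]
        rw [show (∑ j, a j i * (C1 t j - C2 t j))
            = ∑ j, (a j i * C1 t j - a j i * C2 t j) from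
          Finset.sum_congr rfl fun j _ => by ring]
        rw [Finset.sum_sub_distrib]
        ring
      have hDleS : D ≤ S := by
        apply Finset.sum_le_sum
        intro j _
        rcases ha j i with h | h
        · rw [h, zero_mul]; exact le_max_right _ _
        · rw [h, one_mul]; exact le_max_left _ _
      have hc2 : 0 ≤ 1 - C2 t i := by linarith [(hb2 i).2]
      have hc2' : 1 - C2 t i ≤ 1 := by linarith [(hb2 i).1]
      have hDc : D * (1 - C2 t i) ≤ S := by
        nlinarith [mul_nonneg (sub_nonneg.2 hDleS) hc2,
          mul_nonneg hSnn (by linarith [(hb2 i).1] : (0:ℝ) ≤ C2 t i)]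
      have hmid : A1 * (1 - C1 t i) - A2 * (1 - C2 t i) ≤ β * S := by
        have h1 : A1' * (1 - C2 t i) ≤ A2 * (1 - C2 t i) :=
          mul_le_mul_of_nonneg_right hA1'leA2 hc2
        have h2 : A1 * (1 - C1 t i) - A1' * (1 - C2 t i)
            = -(A1 * (C1 t i - C2 t i)) + (A1 - A1') * (1 - C2 t i) := by ring
        have h3 : 0 ≤ A1 * (C1 t i - C2 t i) := mul_nonneg hA1nn hpos
        have h4 : (A1 - A1') * (1 - C2 t i) ≤ β * S := by
          rw [hDsplit, mul_assoc]
          exact mul_le_mul_of_nonneg_left hDc hβ.le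
        linarith
      have hγterm : -(γ * w i * (C1 t i - C2 t i)) ≤ 0 := by
        have : 0 ≤ γ * w i * (C1 t i - C2 t i) :=
          mul_nonneg (mul_nonneg hγ.le (hw i).le) hpos
        linarith
      have hscs : scsF a w x α₁ β δ γ (C1 t) i - scsF a w x α₂ β δ γ (C2 t) i
          = (1/(δ * w i)) * (A1 * (1 - C1 t i) - A2 * (1 - C2 t i))
            + -(γ * w i * (C1 t i - C2 t i)) := by
        simp only [scsF, hA1def, hA2def]; ring
      rw [hscs]
      have hden : (0:ℝ) ≤ 1/(δ * w i) := one_div_nonneg.2 (mul_nonneg hδ.le (hw i).le)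
      have hstep : (1/(δ * w i)) * (A1 * (1 - C1 t i) - A2 * (1 - C2 t i))
          ≤ (1/(δ * w i)) * (β * S) := mul_le_mul_of_nonneg_left hmid hden
      have hfin : (1/(δ * w i)) * (β * S) ≤ K2 * S := by
        have h1 : (1:ℝ)/(δ * w i) ≤ (1/δ) * W := by
          rw [one_div, mul_inv, ← one_div]
          exact mul_le_mul_of_nonneg_left (hWi i) (by positivity)
        have h2 : 0 ≤ β * S := mul_nonneg hβ.le hSnn
        calc (1/(δ * w i)) * (β * S) ≤ ((1/δ) * W) * (β * S) :=
              mul_le_mul_of_nonneg_right h1 h2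
          _ = K2 * S := by rw [hK2def]; ring
      linarith)
  have hle : ∀ t ∈ Set.Icc (0:ℝ) T, ∀ i, C1 t i ≤ C2 t i := by
    intro t ht i
    have := comp t ht i
    simpa [sub_nonpos] using this
  refine ⟨hle, ?_⟩
  have hcont1 : ContinuousOn (fun t => ∑ i, w i * C1 t i) (Set.Icc 0 T) := by
    apply continuousOn_finset_sum
    intro i _
    exact continuousOn_const.mul fun t ht => ((hC1d t ht i).continuousAt).continuousWithinAt
  have hcont2 : ContinuousOn (fun t => ∑ i, w i * C2 t i) (Set.Icc 0 T) := by
    apply continuousOn_finset_sum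
    intro i _
    exact continuousOn_const.mul fun t ht => ((hC2d t ht i).continuousAt).continuousWithinAt
  have h1i : IntervalIntegrable (fun t => ∑ i, w i * C1 t i) MeasureTheory.volume 0 T :=
    (by rwa [Set.uIcc_of_le hT.le] : ContinuousOn _ (Set.uIcc 0 T)).intervalIntegrable
  have h2i : IntervalIntegrable (fun t => ∑ i, w i * C2 t i) MeasureTheory.volume 0 T :=
    (by rwa [Set.uIcc_of_le hT.le] : ContinuousOn _ (Set.uIcc 0 T)).intervalIntegrable
  apply intervalIntegral.integral_mono_on hT.le h1i h2i
  intro t ht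
  exact Finset.sum_le_sum fun i _ =>
    mul_le_mul_of_nonneg_left (hle t ht i) (hw i).le
end

section
/- The expected loss is monotone nondecreasing in the infection coefficient: if 0 < β₁ ≤ β₂, then componentwise C^{(β₁)}(t) ≤ C^{(β₂)}(t) on [0,T] for solutions of the SCS model with the same initial condition in [0,1]^N, and consequently L(x; G, α, β₁, δ, γ, T) ≤ L(x; G, α, β₂, δ, γ, T). -/
open Set Filter

lemma deriv_nonpos_of_left_min (f : ℝ → ℝ) {f' a t0 : ℝ} (h : HasDerivAt f f' t0)
    (ha : a < t0) (hmin : ∀ t, a ≤ t → t < t0 → f t0 ≤ f t) : f' ≤ 0 := by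
  have hd : HasDerivWithinAt f f' (Set.Ioo a t0) t0 := h.hasDerivWithinAt
  rw [hasDerivWithinAt_iff_tendsto_slope] at hd
  have hs : Set.Ioo a t0 \ {t0} = Set.Ioo a t0 := by
    rw [Set.diff_singleton_eq_self]; simp
  rw [hs] at hd
  have hne : (nhdsWithin t0 (Set.Ioo a t0)).NeBot := by
    rw [← mem_closure_iff_nhdsWithin_neBot, closure_Ioo ha.ne]
    exact ⟨ha.le, le_refl _⟩
  refine le_of_tendsto hd ?_
  filter_upwards [self_mem_nhdsWithin] with t ht
  have h1 : f t0 ≤ f t := hmin t ht.1.le ht.2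
  have h2 : t - t0 < 0 := by linarith [ht.2]
  rw [slope_def_field]
  exact div_nonpos_of_nonneg_of_nonpos (by linarith) h2.le

lemma barrier {ι : Type*} [Fintype ι] [Nonempty ι] {T : ℝ} (hT : 0 < T)
    (g g' : ℝ → ι → ℝ)
    (hderiv : ∀ t ∈ Set.Icc (0:ℝ) T, ∀ k, HasDerivAt (fun s => g s k) (g' t k) t)
    (h0 : ∀ k, 0 < g 0 k)
    (hstep : ∀ t ∈ Set.Icc (0:ℝ) T, (∀ k, 0 ≤ g t k) → ∀ i, g t i = 0 → 0 < g' t i) :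
    ∀ t ∈ Set.Icc (0:ℝ) T, ∀ k, 0 < g t k := by
  by_contra hcon
  push_neg at hcon
  obtain ⟨t1, ht1, k1, hk1⟩ := hcon
  set S : Set ℝ := ⋃ k : ι, {t ∈ Set.Icc (0:ℝ) T | g t k ≤ 0} with hS
  have hsub : S ⊆ Set.Icc (0:ℝ) T := by
    intro t ht; simp only [hS, Set.mem_iUnion, Set.mem_setOf_eq] at ht
    obtain ⟨k, hk, _⟩ := ht; exact hk
  have hcont : ∀ k, ContinuousOn (fun t => g t k) (Set.Icc (0:ℝ) T) :=
    fun k t ht => ((hderiv t ht k).continuousAt).continuousWithinAt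
  have hScl : IsClosed S := by
    apply isClosed_iUnion_of_finite
    intro k
    have : {t ∈ Set.Icc (0:ℝ) T | g t k ≤ 0}
        = Set.Icc (0:ℝ) T ∩ (fun t => g t k) ⁻¹' Set.Iic 0 := by
      ext t; simp only [Set.mem_setOf_eq, Set.mem_inter_iff, Set.mem_preimage, Set.mem_Iic]
    rw [this]
    exact (hcont k).preimage_isClosed_of_isClosed isClosed_Icc isClosed_Iic
  have hSne : S.Nonempty := ⟨t1, by
    simp only [hS, Set.mem_iUnion, Set.mem_setOf_eq]; exact ⟨k1, ht1, hk1⟩⟩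
  have hbdd : BddBelow S := ⟨0, fun t ht => (hsub ht).1⟩
  set t0 := sInf S with ht0
  have ht0S : t0 ∈ S := hScl.csInf_mem hSne hbdd
  have ht0Icc : t0 ∈ Set.Icc (0:ℝ) T := hsub ht0S
  have hbefore : ∀ t, 0 ≤ t → t < t0 → ∀ k, 0 < g t k := by
    intro t htn htl k
    by_contra hle
    push_neg at hle
    have : t ∈ S := by
      simp only [hS, Set.mem_iUnion, Set.mem_setOf_eq]
      exact ⟨k, ⟨htn, htl.le.trans ht0Icc.2⟩, hle⟩
    exact absurd (csInf_le hbdd this) (not_le.mpr htl)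
  have ht0pos : 0 < t0 := by
    rcases lt_or_eq_of_le ht0Icc.1 with h | h
    · exact h
    · exfalso
      simp only [hS, Set.mem_iUnion, Set.mem_setOf_eq, ← h] at ht0S
      obtain ⟨k, _, hk⟩ := ht0S
      exact absurd hk (not_le.mpr (h ▸ h0 k))
  have hge : ∀ k, 0 ≤ g t0 k := by
    intro k
    have hc : Filter.Tendsto (fun t => g t k) (nhdsWithin t0 (Set.Iio t0)) (nhds (g t0 k)) :=
      ((hderiv t0 ht0Icc k).continuousAt).continuousWithinAt.tendsto
    refine ge_of_tendsto hc ?_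
    filter_upwards [Ioo_mem_nhdsLT_of_mem (Set.mem_Ioc.mpr ⟨ht0pos, le_refl _⟩)] with t ht
    exact (hbefore t ht.1.le ht.2 k).le
  simp only [hS, Set.mem_iUnion, Set.mem_setOf_eq] at ht0S
  obtain ⟨i, _, hi⟩ := ht0S
  have hzero : g t0 i = 0 := le_antisymm hi (hge i)
  have hpos := hstep t0 ht0Icc hge i hzero
  have hnp : g' t0 i ≤ 0 := by
    refine deriv_nonpos_of_left_min (fun t => g t i) (hderiv t0 ht0Icc i) ht0pos ?_
    intro t h1 h2
    simp only [hzero]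
    exact (hbefore t h1 h2 i).le
  linarith


lemma inv_low_aux (P B M E K G : ℝ) (hP : 0 < P) (hB : -(M * E) ≤ B)
    (hM : 0 ≤ M) (hE : 0 < E) (hE1 : E ≤ 1) (hG : 0 ≤ G) (hK : 2 * M * P < K) :
    0 < P * B * (1 - -E) - G * -E + K * E := by
  have hq1 : 0 ≤ (B + M * E) * (1 + E) := mul_nonneg (by nlinarith) (by linarith)
  have hq2 : 0 ≤ M * E * (1 - E) := mul_nonneg (mul_nonneg hM hE.le) (by linarith)
  have hprod : -(2 * M * E) ≤ B * (1 + E) := by nlinarith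
  have hf1 := mul_le_mul_of_nonneg_left hprod hP.le
  have hKE := mul_pos (sub_pos.mpr hK) hE
  nlinarith [mul_nonneg hG hE.le]

lemma inv_high_aux (P B M E K G : ℝ) (hP : 0 < P) (hB : -(M * E) ≤ B)
    (hM : 0 ≤ M) (hE : 0 < E) (hE1 : E ≤ 1) (hG : 0 ≤ G) (hK : 2 * M * P < K) :
    0 < K * E - (P * B * (1 - (1 + E)) - G * (1 + E)) := by
  have hprod : B * (-E) ≤ M * E := by
    nlinarith [mul_nonneg (by nlinarith : (0:ℝ) ≤ B + M * E) hE.le,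
      mul_nonneg (mul_nonneg hM hE.le) (by linarith : (0:ℝ) ≤ 1 - E)]
  have hf1 := mul_le_mul_of_nonneg_left hprod hP.le
  have hKE := mul_pos (sub_pos.mpr hK) hE
  nlinarith [mul_nonneg hG (by linarith : (0:ℝ) ≤ 1 + E),
    mul_nonneg (mul_nonneg hM hP.le) hE.le]

lemma comp_aux (P A S1 S2 c1 c2 E K G Nr b1 b2 : ℝ)
    (hP : 0 < P) (hA : 0 ≤ A) (hS2 : 0 ≤ S2) (hS1 : 0 ≤ S1) (hS1N : S1 ≤ Nr)
    (hz : -(Nr * E) ≤ S2 - S1) (hc2a : 0 ≤ c2) (hc2b : c2 ≤ 1) (hc1b : c1 ≤ 1)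
    (hdiff : c2 - c1 = -E) (hE : 0 < E) (hb1 : 0 < b1) (hb : b1 ≤ b2) (hG : 0 ≤ G)
    (hK : b1 * Nr * P < K) :
    0 < (P * (A + b2 * S2) * (1 - c2) - G * c2) - (P * (A + b1 * S1) * (1 - c1) - G * c1)
        + K * E := by
  have hNr : 0 ≤ Nr := le_trans hS1 hS1N
  have hm : 0 ≤ 1 - c2 := by linarith
  have ht1 : 0 ≤ (b2 - b1) * S2 * (1 - c2) := mul_nonneg (mul_nonneg (by linarith) hS2) hm
  have ht2 : -(b1 * Nr * E) ≤ b1 * (S2 - S1) * (1 - c2) := by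
    nlinarith [mul_nonneg (mul_nonneg hb1.le (by linarith : (0:ℝ) ≤ S2 - S1 + Nr * E)) hm,
      mul_nonneg (mul_nonneg hb1.le (mul_nonneg hNr hE.le)) hc2a]
  have ht3 : 0 ≤ (A + b1 * S1) * E := mul_nonneg (by nlinarith) hE.le
  have hKE := mul_pos (sub_pos.mpr hK) hE
  have hf2 := mul_le_mul_of_nonneg_left ht2 hP.le
  have hf1 := mul_le_mul_of_nonneg_left ht1 hP.le
  have hf3 := mul_le_mul_of_nonneg_left ht3 hP.le
  have hGE : 0 ≤ G * E := mul_nonneg hG hE.le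
  have hid : (P * (A + b2 * S2) * (1 - c2) - G * c2)
      - (P * (A + b1 * S1) * (1 - c1) - G * c1) + K * E
      = P * ((b2 - b1) * S2 * (1 - c2)) + P * (b1 * (S2 - S1) * (1 - c2))
        + P * ((A + b1 * S1) * E) + G * E + K * E := by
    have hc1 : c1 = c2 + E := by linarith
    rw [hc1]; ring
  rw [hid]
  nlinarith

lemma scs_invariant {N : ℕ} (a : Fin N → Fin N → ℝ)
    (ha : ∀ i j, a i j = 0 ∨ a i j = 1)
    (w x : Fin N → ℝ) (α β δ γ T : ℝ)
    (hα : 0 < α) (hβ : 0 < β) (hδ : 0 < δ) (hγ : 0 < γ)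
    (hx : ∀ i, 0 ≤ x i) (hw : ∀ i, 0 < w i) (hT : 0 < T)
    (C : ℝ → Fin N → ℝ)
    (hC : ∀ t ∈ Set.Icc (0:ℝ) T, HasDerivAt C (scsF a w x α β δ γ (C t)) t)
    (h0box : ∀ i, C 0 i ∈ Set.Icc (0:ℝ) 1) :
    ∀ t ∈ Set.Icc (0:ℝ) T, ∀ i, C t i ∈ Set.Icc (0:ℝ) 1 := by
  rcases Nat.eq_zero_or_pos N with hN | hN
  · subst hN; intro t ht i; exact i.elim0
  haveI hne : Nonempty (Fin N) := ⟨⟨0, hN⟩⟩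
  -- choose K
  obtain ⟨K, hKpos, hKbd⟩ : ∃ K : ℝ, 0 < K ∧ ∀ i, 2 * (β * ↑N) * (1 / (δ * w i)) < K := by
    set Wmin : ℝ := Finset.univ.inf' Finset.univ_nonempty w with hWmin
    have hWpos : 0 < Wmin := (Finset.lt_inf'_iff _).mpr (fun i _ => hw i)
    have hWle : ∀ i, Wmin ≤ w i := fun i => Finset.inf'_le _ (Finset.mem_univ i)
    refine ⟨1 + 2 * (β * ↑N) * (1 / (δ * Wmin)), ?_, ?_⟩
    · have h1 : 0 ≤ 2 * (β * ↑N) * (1 / (δ * Wmin)) :=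
        mul_nonneg (by nlinarith [Nat.cast_nonneg (α := ℝ) N] : (0:ℝ) ≤ 2 * (β * ↑N)) (le_of_lt (one_div_pos.mpr (mul_pos hδ hWpos)))
      linarith
    · intro i
      have h0 : 0 ≤ 2 * (β * (N:ℝ)) := by nlinarith [Nat.cast_nonneg (α := ℝ) N]
      have h1 : 1 / (δ * w i) ≤ 1 / (δ * Wmin) :=
        one_div_le_one_div_of_le (mul_pos hδ hWpos) (mul_le_mul_of_nonneg_left (hWle i) hδ.le)
      nlinarith [mul_le_mul_of_nonneg_left h1 h0]
  -- main ε-barrier claim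
  have main : ∀ ε : ℝ, 0 < ε → ε ≤ Real.exp (-(K*T)) → ∀ t ∈ Set.Icc (0:ℝ) T, ∀ i,
      0 < C t i + ε * Real.exp (K*t) ∧ 0 < 1 + ε * Real.exp (K*t) - C t i := by
    intro ε hε hε0
    set E : ℝ → ℝ := fun t => ε * Real.exp (K * t) with hEdef
    have hE : ∀ t, HasDerivAt E (K * E t) t := by
      intro t
      have h1 : HasDerivAt (fun s : ℝ => K * s) (K * 1) t := (hasDerivAt_id t).const_mul K
      have h2 := (h1.exp).const_mul ε
      exact h2.congr_deriv (by simp only [hEdef]; ring)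
    have hEpos : ∀ t, 0 < E t := fun t => mul_pos hε (Real.exp_pos _)
    have hE1 : ∀ t ∈ Set.Icc (0:ℝ) T, E t ≤ 1 := by
      intro t ht
      have h1 : Real.exp (K*t) ≤ Real.exp (K*T) :=
        Real.exp_le_exp.mpr (by nlinarith [ht.2, hKpos])
      calc E t ≤ Real.exp (-(K*T)) * Real.exp (K*T) :=
            mul_le_mul hε0 h1 (Real.exp_pos _).le (Real.exp_pos _).le
        _ = 1 := by rw [← Real.exp_add]; simp
    have hCi : ∀ t ∈ Set.Icc (0:ℝ) T, ∀ i,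
        HasDerivAt (fun s => C s i) (scsF a w x α β δ γ (C t) i) t :=
      fun t ht i => (hasDerivAt_pi.mp (hC t ht)) i
    set g : ℝ → (Fin N ⊕ Fin N) → ℝ := fun t k =>
      Sum.elim (fun i => C t i + E t) (fun i => 1 + E t - C t i) k with hg
    set g' : ℝ → (Fin N ⊕ Fin N) → ℝ := fun t k =>
      Sum.elim (fun i => scsF a w x α β δ γ (C t) i + K * E t)
        (fun i => K * E t - scsF a w x α β δ γ (C t) i) k with hg'
    have hres := barrier hT g g' ?_ ?_ ?_
    · intro t ht i
      exact ⟨by simpa [hg] using hres t ht (Sum.inl i),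
             by simpa [hg] using hres t ht (Sum.inr i)⟩
    · intro t ht k
      rcases k with i | i
      · exact (hCi t ht i).add (hE t)
      · exact ((hE t).const_add 1).sub (hCi t ht i)
    · intro k
      rcases k with i | i
      · simp only [hg, Sum.elim_inl, hEdef]
        nlinarith [(h0box i).1, mul_pos hε (Real.exp_pos (K*0))]
      · simp only [hg, Sum.elim_inr, hEdef]
        nlinarith [(h0box i).2, mul_pos hε (Real.exp_pos (K*0))]
    · intro t ht hall k hk0
      have hbox : ∀ j, -(E t) ≤ C t j ∧ C t j ≤ 1 + E t := by
        intro j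
        constructor
        · have := hall (Sum.inl j); simp only [hg, Sum.elim_inl] at this; linarith
        · have := hall (Sum.inr j); simp only [hg, Sum.elim_inr] at this; linarith
      have hEp := hEpos t
      have hEle := hE1 t ht
      have hSlb : ∀ i, -((N:ℝ) * E t) ≤ ∑ j, a j i * C t j := by
        intro i
        have h1 : ∀ j ∈ Finset.univ, -(E t) ≤ a j i * C t j := by
          intro j _
          rcases ha j i with h | h
          · rw [h]; simp; linarith [hEp]
          · rw [h]; simpa using (hbox j).1
        have h2 := Finset.sum_le_sum h1
        simp only [Finset.sum_const, Finset.card_univ, Fintype.card_fin,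
          nsmul_eq_mul] at h2
        calc -((N:ℝ) * E t) = (N:ℝ) * (-(E t)) := by ring
          _ ≤ _ := h2
      have hBlb : ∀ i, -(β * ↑N * E t) ≤ α * x i + β * ∑ j, a j i * C t j := by
        intro i
        have h1 : 0 ≤ α * x i := mul_nonneg hα.le (hx i)
        have h2 := mul_le_mul_of_nonneg_left (hSlb i) hβ.le
        nlinarith
      rcases k with i | i
      · simp only [hg, Sum.elim_inl] at hk0
        simp only [hg', Sum.elim_inl, scsF]
        have hCval : C t i = -(E t) := by linarith
        rw [hCval]
        exact inv_low_aux _ _ (β * ↑N) _ _ _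
          (one_div_pos.mpr (mul_pos hδ (hw i))) (hBlb i)
          (by nlinarith [Nat.cast_nonneg (α := ℝ) N] : (0:ℝ) ≤ β * ↑N) hEp hEle (mul_nonneg hγ.le (hw i).le) (hKbd i)
      · simp only [hg, Sum.elim_inr] at hk0
        simp only [hg', Sum.elim_inr, scsF]
        have hCval : C t i = 1 + E t := by linarith
        rw [hCval]
        exact inv_high_aux _ _ (β * ↑N) _ _ _
          (one_div_pos.mpr (mul_pos hδ (hw i))) (hBlb i)
          (by nlinarith [Nat.cast_nonneg (α := ℝ) N] : (0:ℝ) ≤ β * ↑N) hEp hEle (mul_nonneg hγ.le (hw i).le) (hKbd i)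
  -- pass to the limit ε → 0
  intro t ht i
  have hexp : 0 < Real.exp (K * t) := Real.exp_pos _
  constructor
  · by_contra hlt
    push_neg at hlt
    set ε : ℝ := min (Real.exp (-(K*T))) (-(C t i) / (2 * Real.exp (K*t))) with hεd
    have hεpos : 0 < ε := lt_min (Real.exp_pos _) (div_pos (by linarith) (by positivity))
    have h1 := (main ε hεpos (min_le_left _ _) t ht i).1
    have h2 : ε * Real.exp (K*t) ≤ -(C t i) / 2 := by
      have hm := min_le_right (Real.exp (-(K*T))) (-(C t i) / (2 * Real.exp (K*t)))
      calc ε * Real.exp (K*t) ≤ (-(C t i) / (2 * Real.exp (K*t))) * Real.exp (K*t) :=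
            mul_le_mul_of_nonneg_right hm hexp.le
        _ = -(C t i) / 2 := by field_simp
    linarith
  · by_contra hgt
    push_neg at hgt
    set ε : ℝ := min (Real.exp (-(K*T))) ((C t i - 1) / (2 * Real.exp (K*t))) with hεd
    have hεpos : 0 < ε := lt_min (Real.exp_pos _) (div_pos (by linarith) (by positivity))
    have h1 := (main ε hεpos (min_le_left _ _) t ht i).2
    have h2 : ε * Real.exp (K*t) ≤ (C t i - 1) / 2 := by
      have hm := min_le_right (Real.exp (-(K*T))) ((C t i - 1) / (2 * Real.exp (K*t)))
      calc ε * Real.exp (K*t) ≤ ((C t i - 1) / (2 * Real.exp (K*t))) * Real.exp (K*t) :=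
            mul_le_mul_of_nonneg_right hm hexp.le
        _ = (C t i - 1) / 2 := by field_simp
    linarith


/-- The expected loss is monotone nondecreasing in the infection coefficient:
if 0 < β₁ ≤ β₂ then componentwise C^{(β₁)} ≤ C^{(β₂)} on [0,T], and consequently
L(x; G, α, β₁, δ, γ, T) ≤ L(x; G, α, β₂, δ, γ, T). -/
theorem loss_monotone_in_infection_coeff {N : ℕ} (a : Fin N → Fin N → ℝ)
    (ha : ∀ i j, a i j = 0 ∨ a i j = 1)
    (w x : Fin N → ℝ) (α β₁ β₂ δ γ T : ℝ)
    (hα : 0 < α) (hβ₁ : 0 < β₁) (hβ : β₁ ≤ β₂) (hδ : 0 < δ) (hγ : 0 < γ)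
    (hx : ∀ i, 0 ≤ x i) (hw : ∀ i, 0 < w i) (hT : 0 < T)
    (C1 C2 : ℝ → Fin N → ℝ)
    (hC1 : ∀ t ∈ Set.Icc (0 : ℝ) T, HasDerivAt C1 (scsF a w x α β₁ δ γ (C1 t)) t)
    (hC2 : ∀ t ∈ Set.Icc (0 : ℝ) T, HasDerivAt C2 (scsF a w x α β₂ δ γ (C2 t)) t)
    (h0 : C1 0 = C2 0) (h0box : ∀ i, C1 0 i ∈ Set.Icc (0 : ℝ) 1) :
    (∀ t ∈ Set.Icc (0 : ℝ) T, ∀ i, C1 t i ≤ C2 t i) ∧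
    (∫ t in (0:ℝ)..T, ∑ i, w i * C1 t i) ≤ ∫ t in (0:ℝ)..T, ∑ i, w i * C2 t i := by
  have hβ₂ : 0 < β₂ := lt_of_lt_of_le hβ₁ hβ
  rcases Nat.eq_zero_or_pos N with hN | hN
  · subst hN
    exact ⟨fun t _ i => i.elim0, by simp⟩
  haveI hne : Nonempty (Fin N) := ⟨⟨0, hN⟩⟩
  have h0box2 : ∀ i, C2 0 i ∈ Set.Icc (0:ℝ) 1 := by
    intro i; rw [← h0]; exact h0box i
  have hinv1 := scs_invariant a ha w x α β₁ δ γ T hα hβ₁ hδ hγ hx hw hT C1 hC1 h0box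
  have hinv2 := scs_invariant a ha w x α β₂ δ γ T hα hβ₂ hδ hγ hx hw hT C2 hC2 h0box2
  have hC1i : ∀ t ∈ Set.Icc (0:ℝ) T, ∀ i,
      HasDerivAt (fun s => C1 s i) (scsF a w x α β₁ δ γ (C1 t) i) t :=
    fun t ht i => (hasDerivAt_pi.mp (hC1 t ht)) i
  have hC2i : ∀ t ∈ Set.Icc (0:ℝ) T, ∀ i,
      HasDerivAt (fun s => C2 s i) (scsF a w x α β₂ δ γ (C2 t) i) t :=
    fun t ht i => (hasDerivAt_pi.mp (hC2 t ht)) i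
  -- choose K
  obtain ⟨K, hKbd⟩ : ∃ K : ℝ, ∀ i, β₁ * ↑N * (1 / (δ * w i)) < K := by
    set Wmin : ℝ := Finset.univ.inf' Finset.univ_nonempty w with hWmin
    have hWpos : 0 < Wmin := (Finset.lt_inf'_iff _).mpr (fun i _ => hw i)
    have hWle : ∀ i, Wmin ≤ w i := fun i => Finset.inf'_le _ (Finset.mem_univ i)
    refine ⟨1 + β₂ * ↑N * (1 / (δ * Wmin)), fun i => ?_⟩
    have h1 : 1 / (δ * w i) ≤ 1 / (δ * Wmin) :=
      one_div_le_one_div_of_le (mul_pos hδ hWpos) (mul_le_mul_of_nonneg_left (hWle i) hδ.le)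
    have h2 : β₁ * (N:ℝ) ≤ β₂ * (N:ℝ) :=
      mul_le_mul_of_nonneg_right hβ (Nat.cast_nonneg N)
    have h3 : β₁ * ↑N * (1 / (δ * w i)) ≤ β₂ * ↑N * (1 / (δ * Wmin)) :=
      mul_le_mul h2 h1 (le_of_lt (one_div_pos.mpr (mul_pos hδ (hw i))))
        (by nlinarith [Nat.cast_nonneg (α := ℝ) N])
    linarith
  -- barrier claim for the difference
  have main2 : ∀ ε : ℝ, 0 < ε → ∀ t ∈ Set.Icc (0:ℝ) T, ∀ i,
      0 < C2 t i - C1 t i + ε * Real.exp (K*t) := by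
    intro ε hε
    set E : ℝ → ℝ := fun t => ε * Real.exp (K * t) with hEdef
    have hE : ∀ t, HasDerivAt E (K * E t) t := by
      intro t
      have h1 : HasDerivAt (fun s : ℝ => K * s) (K * 1) t := (hasDerivAt_id t).const_mul K
      have h2 := (h1.exp).const_mul ε
      exact h2.congr_deriv (by simp only [hEdef]; ring)
    have hEpos : ∀ t, 0 < E t := fun t => mul_pos hε (Real.exp_pos _)
    set g : ℝ → Fin N → ℝ := fun t i => C2 t i - C1 t i + E t with hg
    set g' : ℝ → Fin N → ℝ := fun t i =>
      scsF a w x α β₂ δ γ (C2 t) i - scsF a w x α β₁ δ γ (C1 t) i + K * E t with hg'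
    have hres := barrier hT g g' ?_ ?_ ?_
    · intro t ht i; exact hres t ht i
    · intro t ht i
      exact ((hC2i t ht i).sub (hC1i t ht i)).add (hE t)
    · intro i
      have h00 : C2 0 i = C1 0 i := by rw [h0]
      simp only [hg, h00]
      have := hEpos 0
      linarith
    · intro t ht hall i hk0
      simp only [hg] at hk0 hall
      have hdiff : C2 t i - C1 t i = -(E t) := by linarith
      have hEp := hEpos t
      simp only [hg', scsF]
      refine comp_aux (1 / (δ * w i)) (α * x i) (∑ j, a j i * C1 t j)
        (∑ j, a j i * C2 t j) (C1 t i) (C2 t i) (E t) K (γ * w i) (N:ℝ) β₁ β₂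
        (one_div_pos.mpr (mul_pos hδ (hw i))) (mul_nonneg hα.le (hx i))
        ?_ ?_ ?_ ?_ (hinv2 t ht i).1 (hinv2 t ht i).2 (hinv1 t ht i).2
        hdiff hEp hβ₁ hβ (mul_nonneg hγ.le (hw i).le) (hKbd i)
      · exact Finset.sum_nonneg fun j _ => by
          rcases ha j i with h | h
          · rw [h, zero_mul]
          · rw [h, one_mul]; exact (hinv2 t ht j).1
      · exact Finset.sum_nonneg fun j _ => by
          rcases ha j i with h | h
          · rw [h, zero_mul]
          · rw [h, one_mul]; exact (hinv1 t ht j).1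
      · calc (∑ j, a j i * C1 t j) ≤ ∑ _j : Fin N, (1:ℝ) := by
              refine Finset.sum_le_sum fun j _ => ?_
              rcases ha j i with h | h
              · rw [h, zero_mul]; norm_num
              · rw [h, one_mul]; exact (hinv1 t ht j).2
          _ = (N:ℝ) := by simp
      · rw [← Finset.sum_sub_distrib]
        have h1 : ∀ j ∈ Finset.univ, -(E t) ≤ a j i * C2 t j - a j i * C1 t j := by
          intro j _
          rcases ha j i with h | h
          · rw [h, zero_mul, zero_mul]; linarith
          · rw [h, one_mul, one_mul]; linarith [hall j]
        have h2 := Finset.sum_le_sum h1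
        simp only [Finset.sum_const, Finset.card_univ, Fintype.card_fin,
          nsmul_eq_mul] at h2
        calc -((N:ℝ) * E t) = (N:ℝ) * (-(E t)) := by ring
          _ ≤ _ := h2
  -- first conclusion
  have hcomp : ∀ t ∈ Set.Icc (0:ℝ) T, ∀ i, C1 t i ≤ C2 t i := by
    intro t ht i
    by_contra hlt
    push_neg at hlt
    have hexp : 0 < Real.exp (K * t) := Real.exp_pos _
    set ε : ℝ := (C1 t i - C2 t i) / (2 * Real.exp (K * t)) with hεd
    have hεpos : 0 < ε := div_pos (by linarith) (by positivity)
    have h1 := main2 ε hεpos t ht i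
    have h2 : ε * Real.exp (K*t) = (C1 t i - C2 t i) / 2 := by
      rw [hεd]; field_simp
    rw [h2] at h1
    linarith
  refine ⟨hcomp, ?_⟩
  -- integrability
  have hcont : ∀ (C : ℝ → Fin N → ℝ),
      (∀ t ∈ Set.Icc (0:ℝ) T, ∀ i, ContinuousAt (fun s => C s i) t) →
      IntervalIntegrable (fun t => ∑ i, w i * C t i) MeasureTheory.volume 0 T := by
    intro C hCc
    apply ContinuousOn.intervalIntegrable
    rw [Set.uIcc_of_le hT.le]
    apply continuousOn_finset_sum
    intro i _
    exact continuousOn_const.mul (fun t ht => (hCc t ht i).continuousWithinAt)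
  have hi1 := hcont C1 (fun t ht i => (hC1i t ht i).continuousAt)
  have hi2 := hcont C2 (fun t ht i => (hC2i t ht i).continuousAt)
  refine intervalIntegral.integral_mono_on hT.le hi1 hi2 ?_
  intro t ht
  exact Finset.sum_le_sum fun i _ =>
    mul_le_mul_of_nonneg_left (hcomp t ht i) (hw i).le
end

section
/- The expected loss is monotone nonincreasing in the prevention coefficient: if 0 < δ₁ ≤ δ₂, then componentwise C^{(δ₂)}(t) ≤ C^{(δ₁)}(t) on [0,T] for solutions of the SCS model with the same initial condition in [0,1]^N, and consequently L(x; G, α, β, δ₂, γ, T) ≤ L(x; G, α, β, δ₁, γ, T). -/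
open Set Filter Topology

lemma scs_deriv_nonneg_of_max {D : ℝ → ℝ} {d τ a : ℝ} (h : HasDerivAt D d τ) (haτ : a < τ)
    (hle : ∀ s ∈ Set.Ioo a τ, D s ≤ D τ) : 0 ≤ d := by
  have hs := hasDerivAt_iff_tendsto_slope.mp h
  have h2 : Tendsto (slope D τ) (𝓝[<] τ) (𝓝 d) :=
    hs.mono_left (nhdsWithin_mono _ fun s hs => ne_of_lt hs)
  refine ge_of_tendsto h2 ?_
  filter_upwards [Ioo_mem_nhdsLT_of_mem ⟨haτ, le_refl τ⟩] with s hs'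
  have h3 := hle s hs'
  have h4 : s - τ < 0 := sub_neg.2 hs'.2
  have h5 : D s - D τ ≤ 0 := by linarith
  rw [slope_def_field]
  exact div_nonneg_of_nonpos h5 h4.le

lemma scs_proj_hasDerivAt {N : ℕ} {f : ℝ → Fin N → ℝ} {f' : Fin N → ℝ} {t : ℝ}
    (h : HasDerivAt f f' t) (i : Fin N) : HasDerivAt (fun s => f s i) (f' i) t := by
  have h2 := ((ContinuousLinearMap.proj (R := ℝ) (φ := fun _ : Fin N => ℝ)
    i).hasFDerivAt).comp t h.hasFDerivAt
  exact hasDerivAt_pi.mp h i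

lemma scs_sum_const_fin (N : ℕ) (c : ℝ) : ∑ _j : Fin N, c = (N:ℝ) * c := by
  simp [Finset.sum_const, Finset.card_univ, nsmul_eq_mul]

set_option maxHeartbeats 4000000 in
lemma scs_main {N : ℕ} (a : Fin N → Fin N → ℝ)
    (ha : ∀ i j, a i j = 0 ∨ a i j = 1)
    (w x : Fin N → ℝ) (α β δ₁ δ₂ γ T : ℝ)
    (hα : 0 < α) (hβ : 0 < β) (hδ₁ : 0 < δ₁) (hδ : δ₁ ≤ δ₂) (hγ : 0 < γ)
    (hx : ∀ i, 0 ≤ x i) (hw : ∀ i, 0 < w i) (hT : 0 < T)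
    (C1 C2 : ℝ → Fin N → ℝ)
    (hC1 : ∀ t ∈ Set.Icc (0 : ℝ) T, HasDerivAt C1 (scsF a w x α β δ₁ γ (C1 t)) t)
    (hC2 : ∀ t ∈ Set.Icc (0 : ℝ) T, HasDerivAt C2 (scsF a w x α β δ₂ γ (C2 t)) t)
    (h0 : C1 0 = C2 0) (h0box : ∀ i, C1 0 i ∈ Set.Icc (0 : ℝ) 1)
    (S X K : ℝ)
    (hS : S = ∑ i, 1 / (δ₁ * w i)) (hX : X = ∑ i, x i)
    (hK : K = 1 + S * (α * X + 12 * β * N + 1))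
    (ε : ℝ) (hε : 0 < ε) (hε1 : ε * Real.exp (K * T) ≤ 1) :
    ∀ t ∈ Set.Icc (0:ℝ) T, ∀ i,
      0 < C1 t i + ε * Real.exp (K * t) ∧
      0 < 1 + ε * Real.exp (K * t) - C1 t i ∧
      0 < C2 t i + ε * Real.exp (K * t) ∧
      0 < 1 + ε * Real.exp (K * t) - C2 t i ∧
      0 < ε * Real.exp (K * t) - (C2 t i - C1 t i) := by
  have hS0 : 0 ≤ S := by
    rw [hS]; exact Finset.sum_nonneg fun i _ => one_div_nonneg.2 (mul_nonneg hδ₁.le (hw i).le)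
  have hX0 : 0 ≤ X := by
    rw [hX]; exact Finset.sum_nonneg fun i _ => hx i
  have hN0 : (0:ℝ) ≤ (N:ℝ) := Nat.cast_nonneg N
  have hK1 : 1 ≤ K := by
    rw [hK]; nlinarith [mul_nonneg hα.le hX0, mul_nonneg hβ.le hN0]
  have hK0 : 0 ≤ K := by linarith
  -- the bad set
  set B : Set ℝ := ⋃ i : Fin N,
    ({t | t ∈ Set.Icc (0:ℝ) T ∧ C1 t i + ε * Real.exp (K * t) ≤ 0} ∪
     {t | t ∈ Set.Icc (0:ℝ) T ∧ 1 + ε * Real.exp (K * t) - C1 t i ≤ 0} ∪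
     {t | t ∈ Set.Icc (0:ℝ) T ∧ C2 t i + ε * Real.exp (K * t) ≤ 0} ∪
     {t | t ∈ Set.Icc (0:ℝ) T ∧ 1 + ε * Real.exp (K * t) - C2 t i ≤ 0} ∪
     {t | t ∈ Set.Icc (0:ℝ) T ∧ ε * Real.exp (K * t) - (C2 t i - C1 t i) ≤ 0})
    with hBdef
  -- continuity facts
  have hcE : Continuous (fun t : ℝ => ε * Real.exp (K * t)) := by fun_prop
  have hc1 : ∀ i, ∀ t ∈ Set.Icc (0:ℝ) T, ContinuousAt (fun s => C1 s i) t :=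
    fun i t ht => (scs_proj_hasDerivAt (hC1 t ht) i).continuousAt
  have hc2 : ∀ i, ∀ t ∈ Set.Icc (0:ℝ) T, ContinuousAt (fun s => C2 s i) t :=
    fun i t ht => (scs_proj_hasDerivAt (hC2 t ht) i).continuousAt
  have hsepcl : ∀ (f : ℝ → ℝ), (∀ t ∈ Set.Icc (0:ℝ) T, ContinuousAt f t) →
      IsClosed {t | t ∈ Set.Icc (0:ℝ) T ∧ f t ≤ 0} := by
    intro f hf
    have hfc : ContinuousOn f (Set.Icc (0:ℝ) T) :=
      fun t ht => (hf t ht).continuousWithinAt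
    have h2 := hfc.preimage_isClosed_of_isClosed isClosed_Icc (isClosed_Iic (a := (0:ℝ)))
    have heq : {t | t ∈ Set.Icc (0:ℝ) T ∧ f t ≤ 0} = Set.Icc (0:ℝ) T ∩ f ⁻¹' Set.Iic 0 := rfl
    rw [heq]; exact h2
  have hBclosed : IsClosed B := by
    rw [hBdef]
    refine isClosed_iUnion_of_finite fun i => ?_
    refine (((( hsepcl _ ?_).union (hsepcl _ ?_)).union (hsepcl _ ?_)).union
      (hsepcl _ ?_)).union (hsepcl _ ?_) <;> intro t ht
    · exact (hc1 i t ht).add (hcE.continuousAt)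
    · exact ((continuousAt_const.add hcE.continuousAt).sub (hc1 i t ht))
    · exact (hc2 i t ht).add (hcE.continuousAt)
    · exact ((continuousAt_const.add hcE.continuousAt).sub (hc2 i t ht))
    · exact (hcE.continuousAt.sub ((hc2 i t ht).sub (hc1 i t ht)))
  have hBsub : B ⊆ Set.Icc (0:ℝ) T := by
    intro s hs
    simp only [hBdef, Set.mem_iUnion, Set.mem_union, Set.mem_setOf_eq] at hs
    obtain ⟨i, h⟩ := hs
    rcases h with ((((h|h)|h)|h)|h) <;> exact h.1
  -- main claim : B is empty
  have hBempty : ∀ t ∈ Set.Icc (0:ℝ) T, t ∉ B := by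
    intro t₀ ht₀ ht₀B
    have hBne : B.Nonempty := ⟨t₀, ht₀B⟩
    have hBbdd : BddBelow B := (bddBelow_Icc : BddBelow (Set.Icc (0:ℝ) T)).mono hBsub
    set τ := sInf B with hτdef
    have hτB : τ ∈ B := hBclosed.csInf_mem hBne hBbdd
    have hstrict : ∀ s ∈ Set.Ico (0:ℝ) τ, s ∉ B := by
      intro s hs hsB
      have h1 := csInf_le hBbdd hsB
      rw [← hτdef] at h1
      exact absurd h1 (not_le.2 hs.2)
    clear_value τ
    have hτIcc : τ ∈ Set.Icc (0:ℝ) T := hBsub hτB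
    have h0notB : (0:ℝ) ∉ B := by
      simp only [hBdef, Set.mem_iUnion, Set.mem_union, Set.mem_setOf_eq, not_exists, not_or,
        not_and]
      intro i
      have hb := h0box i
      have hb2 : C2 0 i = C1 0 i := by rw [h0]
      simp only [mul_zero, Real.exp_zero, mul_one, not_le]
      exact ⟨⟨⟨⟨fun _ => by nlinarith [hb.1], fun _ => by nlinarith [hb.2]⟩,
        fun _ => by nlinarith [hb.1]⟩, fun _ => by nlinarith [hb.2]⟩,
        fun _ => by nlinarith⟩
    have hτpos : 0 < τ := by
      rcases lt_or_eq_of_le hτIcc.1 with h | h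
      · exact h
      · exact absurd (h ▸ hτB) h0notB
    have hstrict' : ∀ s ∈ Set.Ico (0:ℝ) τ, ∀ i,
        0 < C1 s i + ε * Real.exp (K * s) ∧
        0 < 1 + ε * Real.exp (K * s) - C1 s i ∧
        0 < C2 s i + ε * Real.exp (K * s) ∧
        0 < 1 + ε * Real.exp (K * s) - C2 s i ∧
        0 < ε * Real.exp (K * s) - (C2 s i - C1 s i) := by
      intro s hs i
      have hsIcc : s ∈ Set.Icc (0:ℝ) T := ⟨hs.1, le_trans hs.2.le hτIcc.2⟩
      have h := hstrict s hs
      simp only [hBdef, Set.mem_iUnion, Set.mem_union, Set.mem_setOf_eq, not_exists, not_or,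
        not_and, not_le] at h
      obtain ⟨⟨⟨⟨h1, h2⟩, h3⟩, h4⟩, h5⟩ := h i
      exact ⟨h1 hsIcc, h2 hsIcc, h3 hsIcc, h4 hsIcc, h5 hsIcc⟩
    -- limits at τ from the left
    have hcl : ∀ (f : ℝ → ℝ), ContinuousAt f τ → (∀ s ∈ Set.Ico (0:ℝ) τ, 0 < f s) →
        0 ≤ f τ := by
      intro f hf hpos
      have h2 : Tendsto f (𝓝[<] τ) (𝓝 (f τ)) := hf.tendsto.mono_left nhdsWithin_le_nhds
      refine ge_of_tendsto h2 ?_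
      filter_upwards [Ioo_mem_nhdsLT_of_mem ⟨hτpos, le_refl τ⟩] with s hs
      exact (hpos s ⟨hs.1.le, hs.2⟩).le
    have hclall : ∀ i,
        0 ≤ C1 τ i + ε * Real.exp (K * τ) ∧
        0 ≤ 1 + ε * Real.exp (K * τ) - C1 τ i ∧
        0 ≤ C2 τ i + ε * Real.exp (K * τ) ∧
        0 ≤ 1 + ε * Real.exp (K * τ) - C2 τ i ∧
        0 ≤ ε * Real.exp (K * τ) - (C2 τ i - C1 τ i) := by
      intro i
      refine ⟨hcl _ ((hc1 i τ hτIcc).add hcE.continuousAt)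
          (fun s hs => (hstrict' s hs i).1),
        hcl _ ((continuousAt_const.add hcE.continuousAt).sub (hc1 i τ hτIcc))
          (fun s hs => (hstrict' s hs i).2.1),
        hcl _ ((hc2 i τ hτIcc).add hcE.continuousAt)
          (fun s hs => (hstrict' s hs i).2.2.1),
        hcl _ ((continuousAt_const.add hcE.continuousAt).sub (hc2 i τ hτIcc))
          (fun s hs => (hstrict' s hs i).2.2.2.1),
        hcl _ (hcE.continuousAt.sub (((hc2 i τ hτIcc)).sub (hc1 i τ hτIcc)))
          (fun s hs => (hstrict' s hs i).2.2.2.2)⟩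
    -- abbreviations at time τ
    set e := ε * Real.exp (K * τ) with hedef
    have he : 0 < e := mul_pos hε (Real.exp_pos _)
    have he1 : e ≤ 1 := by
      have h1 : K * τ ≤ K * T := mul_le_mul_of_nonneg_left hτIcc.2 hK0
      have h2 : Real.exp (K * τ) ≤ Real.exp (K * T) := Real.exp_le_exp.2 h1
      calc e ≤ ε * Real.exp (K * T) := by
              exact mul_le_mul_of_nonneg_left h2 hε.le
        _ ≤ 1 := hε1
    clear_value e
    have hbox : ∀ j, -e ≤ C1 τ j ∧ C1 τ j ≤ 1 + e ∧ -e ≤ C2 τ j ∧ C2 τ j ≤ 1 + e ∧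
        C2 τ j - C1 τ j ≤ e := by
      intro j
      obtain ⟨h1, h2, h3, h4, h5⟩ := hclall j
      exact ⟨by linarith, by linarith, by linarith, by linarith, by linarith⟩
    -- derivative of the envelope
    have hE' : HasDerivAt (fun t : ℝ => ε * Real.exp (K * t)) (K * e) τ := by
      have h1 : HasDerivAt (fun t : ℝ => K * t) K τ := by
        simpa using (hasDerivAt_id τ).const_mul K
      have h2 := (h1.exp).const_mul ε
      have hKe : K * e = ε * (Real.exp (K * τ) * K) := by rw [hedef]; ring
      rw [hKe]; exact h2
    have hd1 : ∀ i, HasDerivAt (fun t => C1 t i) (scsF a w x α β δ₁ γ (C1 τ) i) τ :=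
      fun i => scs_proj_hasDerivAt (hC1 τ hτIcc) i
    have hd2 : ∀ i, HasDerivAt (fun t => C2 t i) (scsF a w x α β δ₂ γ (C2 τ) i) τ :=
      fun i => scs_proj_hasDerivAt (hC2 τ hτIcc) i
    -- the active constraint at τ
    simp only [hBdef, Set.mem_iUnion, Set.mem_union, Set.mem_setOf_eq] at hτB
    obtain ⟨i₀, hcase⟩ := hτB
    -- common bounds for index i₀
    have hp1 : 0 < 1 / (δ₁ * w i₀) := one_div_pos.2 (mul_pos hδ₁ (hw i₀))
    have hp1S : 1 / (δ₁ * w i₀) ≤ S := by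
      rw [hS]
      exact Finset.single_le_sum (f := fun j => 1 / (δ₁ * w j))
        (fun j _ => one_div_nonneg.2 (mul_nonneg hδ₁.le (hw j).le)) (Finset.mem_univ i₀)
    have hp2 : 0 < 1 / (δ₂ * w i₀) :=
      one_div_pos.2 (mul_pos (lt_of_lt_of_le hδ₁ hδ) (hw i₀))
    have hp21 : 1 / (δ₂ * w i₀) ≤ 1 / (δ₁ * w i₀) := by
      apply one_div_le_one_div_of_le (mul_pos hδ₁ (hw i₀))
      exact mul_le_mul_of_nonneg_right hδ (hw i₀).le
    have hxX : x i₀ ≤ X := by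
      rw [hX]
      exact Finset.single_le_sum (fun j _ => hx j) (Finset.mem_univ i₀)
    -- sum bounds
    have hsum1low : (N:ℝ) * (-e) ≤ ∑ j, a j i₀ * C1 τ j := by
      rw [← scs_sum_const_fin N (-e)]
      refine Finset.sum_le_sum (fun j _ => ?_)
      rcases ha j i₀ with h | h
      · rw [h]; simp; linarith
      · rw [h]; simp; linarith [(hbox j).1]
    have hsum1high : ∑ j, a j i₀ * C1 τ j ≤ (N:ℝ) * 2 := by
      rw [← scs_sum_const_fin N 2]
      refine Finset.sum_le_sum (fun j _ => ?_)
      rcases ha j i₀ with h | h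
      · rw [h]; simp
      · rw [h]; simp; nlinarith [(hbox j).2.1]
    have hsum2low : (N:ℝ) * (-e) ≤ ∑ j, a j i₀ * C2 τ j := by
      rw [← scs_sum_const_fin N (-e)]
      refine Finset.sum_le_sum (fun j _ => ?_)
      rcases ha j i₀ with h | h
      · rw [h]; simp; linarith
      · rw [h]; simp; linarith [(hbox j).2.2.1]
    have hsum2high : ∑ j, a j i₀ * C2 τ j ≤ (N:ℝ) * 2 := by
      rw [← scs_sum_const_fin N 2]
      refine Finset.sum_le_sum (fun j _ => ?_)
      rcases ha j i₀ with h | h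
      · rw [h]; simp
      · rw [h]; simp; nlinarith [(hbox j).2.2.2.1]
    have hsumdhigh : ∑ j, a j i₀ * C2 τ j - ∑ j, a j i₀ * C1 τ j ≤ (N:ℝ) * e := by
      rw [← Finset.sum_sub_distrib, ← scs_sum_const_fin N e]
      refine Finset.sum_le_sum (fun j _ => ?_)
      rcases ha j i₀ with h | h
      · rw [h]; simp; linarith
      · rw [h]; simp; linarith [(hbox j).2.2.2.2]
    have hsumdlow : (N:ℝ) * (-3) ≤ ∑ j, a j i₀ * C2 τ j - ∑ j, a j i₀ * C1 τ j := by
      rw [← Finset.sum_sub_distrib, ← scs_sum_const_fin N (-3)]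
      refine Finset.sum_le_sum (fun j _ => ?_)
      rcases ha j i₀ with h | h
      · rw [h]; simp
      · rw [h]; simp; nlinarith [(hbox j).2.2.1, (hbox j).2.1]
    obtain ⟨hb1, hb2, hb3, hb4, hb5⟩ := hclall i₀
    rcases hcase with ((((hc | hc) | hc) | hc) | hc)
    · -- C1 hits the lower barrier : C1 τ i₀ = -e
      have heq : C1 τ i₀ = -e := by
        have := hc.2; rw [← hedef] at this; linarith
      have hD : HasDerivAt (fun t => -(C1 t i₀) - ε * Real.exp (K * t))
          (-(scsF a w x α β δ₁ γ (C1 τ) i₀) - K * e) τ := (hd1 i₀).neg.sub hE'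
      have hd0 : 0 ≤ -(scsF a w x α β δ₁ γ (C1 τ) i₀) - K * e := by
        refine scs_deriv_nonneg_of_max hD hτpos (fun s hs => ?_)
        have h1 := (hstrict' s ⟨hs.1.le, hs.2⟩ i₀).1
        have h2 : -(C1 τ i₀) - ε * Real.exp (K * τ) = 0 := by rw [heq, ← hedef]; ring
        simp only [h2]; linarith
      have hdlt : -(scsF a w x α β δ₁ γ (C1 τ) i₀) - K * e < 0 := by
        simp only [scsF, heq]
        set s1 : ℝ := ∑ j, a j i₀ * C1 τ j with hs1
        set p : ℝ := 1 / (δ₁ * w i₀) with hp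
        clear_value s1 p
        rw [hK]
        have hpS : p ≤ S := hp1S
        have hβN : 0 ≤ β * ((N:ℝ) * e) :=
          mul_nonneg hβ.le (mul_nonneg hN0 he.le)
        have hg : 0 ≤ (α * x i₀ + β * s1) + β * ((N:ℝ) * e) := by
          linarith only [mul_nonneg hα.le (hx i₀),
            mul_le_mul_of_nonneg_left hsum1low hβ.le]
        have h1 : 0 ≤ p * (((α * x i₀ + β * s1) + β * ((N:ℝ) * e)) * (1 + e)) :=
          mul_nonneg hp1.le (mul_nonneg hg (by linarith only [he]))
        have h2 : p * (β * ((N:ℝ) * e) * (1 + e)) ≤ S * (β * ((N:ℝ) * e) * (1 + e)) :=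
          mul_le_mul_of_nonneg_right hpS (mul_nonneg hβN (by linarith only [he]))
        have h3 : S * (β * ((N:ℝ) * e) * (1 + e)) ≤ S * (β * ((N:ℝ) * e) * 2) := by
          nlinarith only [mul_nonneg hS0 hβN, he1]
        nlinarith only [h1, h2, h3, mul_pos (mul_pos hγ (hw i₀)) he,
          mul_nonneg (mul_nonneg hS0 (mul_nonneg hα.le hX0)) he.le,
          mul_nonneg hS0 he.le, he,
          mul_nonneg (mul_nonneg hS0 (mul_nonneg hβ.le hN0)) he.le]
      linarith
    · -- C1 hits the upper barrier : C1 τ i₀ = 1 + e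
      have heq : C1 τ i₀ = 1 + e := by
        have := hc.2; rw [← hedef] at this; linarith
      have hD : HasDerivAt (fun t => C1 t i₀ - (1 + ε * Real.exp (K * t)))
          (scsF a w x α β δ₁ γ (C1 τ) i₀ - K * e) τ := by
        have := (hd1 i₀).sub ((hE').const_add 1)
        exact this
      have hd0 : 0 ≤ scsF a w x α β δ₁ γ (C1 τ) i₀ - K * e := by
        refine scs_deriv_nonneg_of_max hD hτpos (fun s hs => ?_)
        have h1 := (hstrict' s ⟨hs.1.le, hs.2⟩ i₀).2.1
        have h2 : C1 τ i₀ - (1 + ε * Real.exp (K * τ)) = 0 := by rw [heq, ← hedef]; ring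
        simp only [h2]; linarith
      have hdlt : scsF a w x α β δ₁ γ (C1 τ) i₀ - K * e < 0 := by
        simp only [scsF, heq]
        set s1 : ℝ := ∑ j, a j i₀ * C1 τ j with hs1
        set p : ℝ := 1 / (δ₁ * w i₀) with hp
        clear_value s1 p
        rw [hK]
        have hpS : p ≤ S := hp1S
        have hβN : 0 ≤ β * ((N:ℝ) * e) :=
          mul_nonneg hβ.le (mul_nonneg hN0 he.le)
        have hg : 0 ≤ (α * x i₀ + β * s1) + β * ((N:ℝ) * e) := by
          linarith only [mul_nonneg hα.le (hx i₀),
            mul_le_mul_of_nonneg_left hsum1low hβ.le]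
        have h1 : 0 ≤ p * (((α * x i₀ + β * s1) + β * ((N:ℝ) * e)) * e) :=
          mul_nonneg hp1.le (mul_nonneg hg he.le)
        have h2 : p * (β * ((N:ℝ) * e) * e) ≤ S * (β * ((N:ℝ) * e) * e) :=
          mul_le_mul_of_nonneg_right hpS (mul_nonneg hβN he.le)
        have h3 : S * (β * ((N:ℝ) * e) * e) ≤ S * (β * ((N:ℝ) * e) * 1) := by
          nlinarith only [mul_nonneg hS0 hβN, he1]
        nlinarith only [h1, h2, h3,
          mul_pos (mul_pos hγ (hw i₀)) (by linarith only [he] : (0:ℝ) < 1 + e),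
          mul_nonneg (mul_nonneg hS0 (mul_nonneg hα.le hX0)) he.le,
          mul_nonneg hS0 he.le, he,
          mul_nonneg (mul_nonneg hS0 (mul_nonneg hβ.le hN0)) he.le]
      linarith
    · -- C2 hits the lower barrier
      have heq : C2 τ i₀ = -e := by
        have := hc.2; rw [← hedef] at this; linarith
      have hD : HasDerivAt (fun t => -(C2 t i₀) - ε * Real.exp (K * t))
          (-(scsF a w x α β δ₂ γ (C2 τ) i₀) - K * e) τ := (hd2 i₀).neg.sub hE'
      have hd0 : 0 ≤ -(scsF a w x α β δ₂ γ (C2 τ) i₀) - K * e := by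
        refine scs_deriv_nonneg_of_max hD hτpos (fun s hs => ?_)
        have h1 := (hstrict' s ⟨hs.1.le, hs.2⟩ i₀).2.2.1
        have h2 : -(C2 τ i₀) - ε * Real.exp (K * τ) = 0 := by rw [heq, ← hedef]; ring
        simp only [h2]; linarith
      have hdlt : -(scsF a w x α β δ₂ γ (C2 τ) i₀) - K * e < 0 := by
        simp only [scsF, heq]
        set s2 : ℝ := ∑ j, a j i₀ * C2 τ j with hs2
        set p : ℝ := 1 / (δ₂ * w i₀) with hp
        clear_value s2 p
        rw [hK]
        have hpS : p ≤ S := le_trans hp21 hp1S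
        have hβN : 0 ≤ β * ((N:ℝ) * e) :=
          mul_nonneg hβ.le (mul_nonneg hN0 he.le)
        have hg : 0 ≤ (α * x i₀ + β * s2) + β * ((N:ℝ) * e) := by
          linarith only [mul_nonneg hα.le (hx i₀),
            mul_le_mul_of_nonneg_left hsum2low hβ.le]
        have h1 : 0 ≤ p * (((α * x i₀ + β * s2) + β * ((N:ℝ) * e)) * (1 + e)) :=
          mul_nonneg hp2.le (mul_nonneg hg (by linarith only [he]))
        have h2 : p * (β * ((N:ℝ) * e) * (1 + e)) ≤ S * (β * ((N:ℝ) * e) * (1 + e)) :=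
          mul_le_mul_of_nonneg_right hpS (mul_nonneg hβN (by linarith only [he]))
        have h3 : S * (β * ((N:ℝ) * e) * (1 + e)) ≤ S * (β * ((N:ℝ) * e) * 2) := by
          nlinarith only [mul_nonneg hS0 hβN, he1]
        nlinarith only [h1, h2, h3, mul_pos (mul_pos hγ (hw i₀)) he,
          mul_nonneg (mul_nonneg hS0 (mul_nonneg hα.le hX0)) he.le,
          mul_nonneg hS0 he.le, he,
          mul_nonneg (mul_nonneg hS0 (mul_nonneg hβ.le hN0)) he.le]
      linarith
    · -- C2 hits the upper barrier
      have heq : C2 τ i₀ = 1 + e := by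
        have := hc.2; rw [← hedef] at this; linarith
      have hD : HasDerivAt (fun t => C2 t i₀ - (1 + ε * Real.exp (K * t)))
          (scsF a w x α β δ₂ γ (C2 τ) i₀ - K * e) τ := by
        have := (hd2 i₀).sub ((hE').const_add 1)
        exact this
      have hd0 : 0 ≤ scsF a w x α β δ₂ γ (C2 τ) i₀ - K * e := by
        refine scs_deriv_nonneg_of_max hD hτpos (fun s hs => ?_)
        have h1 := (hstrict' s ⟨hs.1.le, hs.2⟩ i₀).2.2.2.1
        have h2 : C2 τ i₀ - (1 + ε * Real.exp (K * τ)) = 0 := by rw [heq, ← hedef]; ring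
        simp only [h2]; linarith
      have hdlt : scsF a w x α β δ₂ γ (C2 τ) i₀ - K * e < 0 := by
        simp only [scsF, heq]
        set s2 : ℝ := ∑ j, a j i₀ * C2 τ j with hs2
        set p : ℝ := 1 / (δ₂ * w i₀) with hp
        clear_value s2 p
        rw [hK]
        have hpS : p ≤ S := le_trans hp21 hp1S
        have hβN : 0 ≤ β * ((N:ℝ) * e) :=
          mul_nonneg hβ.le (mul_nonneg hN0 he.le)
        have hg : 0 ≤ (α * x i₀ + β * s2) + β * ((N:ℝ) * e) := by
          linarith only [mul_nonneg hα.le (hx i₀),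
            mul_le_mul_of_nonneg_left hsum2low hβ.le]
        have h1 : 0 ≤ p * (((α * x i₀ + β * s2) + β * ((N:ℝ) * e)) * e) :=
          mul_nonneg hp2.le (mul_nonneg hg he.le)
        have h2 : p * (β * ((N:ℝ) * e) * e) ≤ S * (β * ((N:ℝ) * e) * e) :=
          mul_le_mul_of_nonneg_right hpS (mul_nonneg hβN he.le)
        have h3 : S * (β * ((N:ℝ) * e) * e) ≤ S * (β * ((N:ℝ) * e) * 1) := by
          nlinarith only [mul_nonneg hS0 hβN, he1]
        nlinarith only [h1, h2, h3,
          mul_pos (mul_pos hγ (hw i₀)) (by linarith only [he] : (0:ℝ) < 1 + e),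
          mul_nonneg (mul_nonneg hS0 (mul_nonneg hα.le hX0)) he.le,
          mul_nonneg hS0 he.le, he,
          mul_nonneg (mul_nonneg hS0 (mul_nonneg hβ.le hN0)) he.le]
      linarith
    · -- the difference hits the barrier : C2 τ i₀ - C1 τ i₀ = e
      have heq : C2 τ i₀ - C1 τ i₀ = e := by
        have := hc.2; rw [← hedef] at this; linarith
      have hD : HasDerivAt (fun t => C2 t i₀ - C1 t i₀ - ε * Real.exp (K * t))
          (scsF a w x α β δ₂ γ (C2 τ) i₀ - scsF a w x α β δ₁ γ (C1 τ) i₀ - K * e) τ :=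
        ((hd2 i₀).sub (hd1 i₀)).sub hE'
      have hd0 : 0 ≤ scsF a w x α β δ₂ γ (C2 τ) i₀ - scsF a w x α β δ₁ γ (C1 τ) i₀
          - K * e := by
        refine scs_deriv_nonneg_of_max hD hτpos (fun s hs => ?_)
        have h1 := (hstrict' s ⟨hs.1.le, hs.2⟩ i₀).2.2.2.2
        have h2 : C2 τ i₀ - C1 τ i₀ - ε * Real.exp (K * τ) = 0 := by
          rw [← hedef]; linarith
        simp only [h2]; linarith
      have hdlt : scsF a w x α β δ₂ γ (C2 τ) i₀ - scsF a w x α β δ₁ γ (C1 τ) i₀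
          - K * e < 0 := by
        simp only [scsF]
        obtain ⟨hc1l, hc1h, hc2l, hc2h, _⟩ := hbox i₀
        set s1 : ℝ := ∑ j, a j i₀ * C1 τ j with hs1
        set s2 : ℝ := ∑ j, a j i₀ * C2 τ j with hs2
        set p1 : ℝ := 1 / (δ₁ * w i₀) with hpd1
        set p2 : ℝ := 1 / (δ₂ * w i₀) with hpd2
        set c1 : ℝ := C1 τ i₀ with hcd1
        set c2 : ℝ := C2 τ i₀ with hcd2
        clear_value s1 s2 p1 p2 c1 c2
        clear hd0 hD hd1 hd2 hE' hcl hclall hstrict' hbox hc hτIcc h0notB hτdef hBne hBbdd hBclosed hBsub hsepcl hc1 hc2 hcE hC1 hC2 h0 h0box ht₀ ht₀B hstrict hBdef B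
        rw [hK]
        have hβN : 0 ≤ β * ((N:ℝ) * e) :=
          mul_nonneg hβ.le (mul_nonneg hN0 he.le)
        have hNe : 0 ≤ (N:ℝ) * e := mul_nonneg hN0 he.le
        have hαX5 : 0 ≤ α * X + 5 * (β * (N:ℝ)) :=
          add_nonneg (mul_nonneg hα.le hX0)
            (mul_nonneg (by norm_num) (mul_nonneg hβ.le hN0))
        have hg1low : 0 ≤ (α * x i₀ + β * s1) + β * ((N:ℝ) * e) := by
          linarith only [mul_nonneg hα.le (hx i₀),
            mul_le_mul_of_nonneg_left hsum1low hβ.le]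
        have hg2low : 0 ≤ (α * x i₀ + β * s2) + β * ((N:ℝ) * e) := by
          linarith only [mul_nonneg hα.le (hx i₀),
            mul_le_mul_of_nonneg_left hsum2low hβ.le]
        have hg2high : α * x i₀ + β * s2 ≤ α * X + 2 * (β * (N:ℝ)) := by
          linarith only [mul_le_mul_of_nonneg_left hsum2high hβ.le,
            mul_le_mul_of_nonneg_left hxX hα.le]
        -- lower bound for the g2 * (1 - c2) term
        have hA : -((α * x i₀ + β * s2) * (1 - c2)) ≤ (α * X + 5 * (β * (N:ℝ))) * e := by
          nlinarith only [mul_nonneg hg2low (by linarith only [hc2h] : (0:ℝ) ≤ 1 - c2 + e),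
            mul_le_mul_of_nonneg_right hg2high he.le,
            mul_le_mul_of_nonneg_left (by linarith only [hc2l] : 1 - c2 ≤ 1 + e) hβN,
            mul_nonneg hβN he.le, he1, he.le, hβN]
        -- upper bound for the difference of interaction terms
        have hsd6 : (s2 - s1) * (1 - c2) ≤ 6 * ((N:ℝ) * e) := by
          nlinarith only [
            mul_nonneg (sub_nonneg.2 hsumdhigh)
              (by linarith only [hc2h] : (0:ℝ) ≤ 1 - c2 + e),
            mul_le_mul_of_nonneg_right
              (by linarith only [hsumdlow] : (N:ℝ) * (-3) ≤ s2 - s1) he.le,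
            mul_le_mul_of_nonneg_left (by linarith only [hc2l] : 1 - c2 ≤ 1 + e) hNe,
            mul_nonneg hNe he.le, he1, hNe]
        have hsd6' : β * ((s2 - s1) * (1 - c2)) ≤ β * (6 * ((N:ℝ) * e)) :=
          mul_le_mul_of_nonneg_left hsd6 hβ.le
        have hg1e : -(α * x i₀ + β * s1) * e ≤ β * ((N:ℝ) * e) := by
          nlinarith only [mul_le_mul_of_nonneg_right (by linarith only [hg1low] :
            -(α * x i₀ + β * s1) ≤ β * ((N:ℝ) * e)) he.le, hβN, he1]
        have hident : (α * x i₀ + β * s2) * (1 - c2) - (α * x i₀ + β * s1) * (1 - c1)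
            = β * ((s2 - s1) * (1 - c2)) + (-(α * x i₀ + β * s1) * e) := by
          linear_combination (-(α * x i₀ + β * s1)) * heq
        have hXY : (α * x i₀ + β * s2) * (1 - c2) - (α * x i₀ + β * s1) * (1 - c1)
            ≤ 7 * (β * ((N:ℝ) * e)) := by
          rw [hident]; linarith only [hsd6', hg1e]
        -- assemble
        have h5b : (p1 - p2) * (-((α * x i₀ + β * s2) * (1 - c2)))
            ≤ (p1 - p2) * ((α * X + 5 * (β * (N:ℝ))) * e) :=
          mul_le_mul_of_nonneg_left hA (sub_nonneg.2 hp21)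
        have h5c : (p1 - p2) * ((α * X + 5 * (β * (N:ℝ))) * e)
            ≤ S * ((α * X + 5 * (β * (N:ℝ))) * e) :=
          mul_le_mul_of_nonneg_right (by linarith only [hp2, hp1S] : p1 - p2 ≤ S)
            (mul_nonneg hαX5 he.le)
        have h5d : p1 * ((α * x i₀ + β * s2) * (1 - c2) - (α * x i₀ + β * s1) * (1 - c1))
            ≤ p1 * (7 * (β * ((N:ℝ) * e))) := mul_le_mul_of_nonneg_left hXY hp1.le
        have h5e : p1 * (7 * (β * ((N:ℝ) * e))) ≤ S * (7 * (β * ((N:ℝ) * e))) :=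
          mul_le_mul_of_nonneg_right hp1S (by linarith only [hβN])
        have hγe : γ * w i₀ * (c2 - c1) = γ * w i₀ * e := by rw [heq]
        nlinarith only [h5b, h5c, h5d, h5e, hγe,
          mul_pos (mul_pos hγ (hw i₀)) he,
          mul_nonneg hS0 he.le, he,
          mul_nonneg (mul_nonneg hS0 (mul_nonneg hα.le hX0)) he.le,
          mul_nonneg (mul_nonneg hS0 (mul_nonneg hβ.le hN0)) he.le]
      linarith
  -- unpack emptiness of B
  intro t ht i
  have h := hBempty t ht
  simp only [hBdef, Set.mem_iUnion, Set.mem_union, Set.mem_setOf_eq, not_exists, not_or,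
    not_and, not_le] at h
  obtain ⟨⟨⟨⟨h1, h2⟩, h3⟩, h4⟩, h5⟩ := h i
  exact ⟨h1 ht, h2 ht, h3 ht, h4 ht, h5 ht⟩

/-- The expected loss is monotone nonincreasing in the prevention coefficient:
if 0 < δ₁ ≤ δ₂ then componentwise C^{(δ₂)} ≤ C^{(δ₁)} on [0,T], and consequently
L(x; G, α, β, δ₂, γ, T) ≤ L(x; G, α, β, δ₁, γ, T). -/
theorem loss_antitone_in_prevention_coeff {N : ℕ} (a : Fin N → Fin N → ℝ)
    (ha : ∀ i j, a i j = 0 ∨ a i j = 1)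
    (w x : Fin N → ℝ) (α β δ₁ δ₂ γ T : ℝ)
    (hα : 0 < α) (hβ : 0 < β) (hδ₁ : 0 < δ₁) (hδ : δ₁ ≤ δ₂) (hγ : 0 < γ)
    (hx : ∀ i, 0 ≤ x i) (hw : ∀ i, 0 < w i) (hT : 0 < T)
    (C1 C2 : ℝ → Fin N → ℝ)
    (hC1 : ∀ t ∈ Set.Icc (0 : ℝ) T, HasDerivAt C1 (scsF a w x α β δ₁ γ (C1 t)) t)
    (hC2 : ∀ t ∈ Set.Icc (0 : ℝ) T, HasDerivAt C2 (scsF a w x α β δ₂ γ (C2 t)) t)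
    (h0 : C1 0 = C2 0) (h0box : ∀ i, C1 0 i ∈ Set.Icc (0 : ℝ) 1) :
    (∀ t ∈ Set.Icc (0 : ℝ) T, ∀ i, C2 t i ≤ C1 t i) ∧
    (∫ t in (0:ℝ)..T, ∑ i, w i * C2 t i) ≤ ∫ t in (0:ℝ)..T, ∑ i, w i * C1 t i := by
  set S : ℝ := ∑ i, 1 / (δ₁ * w i) with hSdef
  set X : ℝ := ∑ i, x i with hXdef
  set K : ℝ := 1 + S * (α * X + 12 * β * N + 1) with hKdef
  have hK0 : 0 ≤ K := by
    have hS0 : 0 ≤ S := Finset.sum_nonneg fun i _ => one_div_nonneg.2 (mul_nonneg hδ₁.le (hw i).le)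
    have hX0 : 0 ≤ X := Finset.sum_nonneg fun i _ => hx i
    have hN0 : (0:ℝ) ≤ (N:ℝ) := Nat.cast_nonneg N
    nlinarith [mul_nonneg hα.le hX0, mul_nonneg hβ.le hN0]
  have hcomp : ∀ t ∈ Set.Icc (0 : ℝ) T, ∀ i, C2 t i ≤ C1 t i := by
    intro t ht i
    by_contra hgt
    push_neg at hgt
    have hcpos : 0 < C2 t i - C1 t i := by linarith
    have hexp : 0 < Real.exp (K * T) := Real.exp_pos _
    set ε := min ((C2 t i - C1 t i) / (2 * Real.exp (K * T))) (1 / Real.exp (K * T)) with hεdef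
    have hε : 0 < ε := lt_min (by positivity) (by positivity)
    have h1 : ε * Real.exp (K * T) ≤ 1 := by
      calc ε * Real.exp (K * T) ≤ (1 / Real.exp (K * T)) * Real.exp (K * T) :=
            mul_le_mul_of_nonneg_right (min_le_right _ _) hexp.le
        _ = 1 := by field_simp
    have h2 := (scs_main a ha w x α β δ₁ δ₂ γ T hα hβ hδ₁ hδ hγ hx hw hT C1 C2 hC1 hC2
      h0 h0box S X K hSdef hXdef hKdef ε hε h1 t ht i).2.2.2.2
    have h3 : ε * Real.exp (K * t) ≤ ε * Real.exp (K * T) :=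
      mul_le_mul_of_nonneg_left (Real.exp_le_exp.2 (mul_le_mul_of_nonneg_left ht.2 hK0)) hε.le
    have h4 : ε * Real.exp (K * T) ≤ (C2 t i - C1 t i) / 2 := by
      calc ε * Real.exp (K * T)
          ≤ ((C2 t i - C1 t i) / (2 * Real.exp (K * T))) * Real.exp (K * T) :=
            mul_le_mul_of_nonneg_right (min_le_left _ _) hexp.le
        _ = (C2 t i - C1 t i) / 2 := by field_simp
    linarith
  refine ⟨hcomp, ?_⟩
  have houter : Continuous (fun v : Fin N → ℝ => ∑ i, w i * v i) := by
    continuity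
  have hci1 : ContinuousOn (fun t => ∑ i, w i * C1 t i) (Set.uIcc (0:ℝ) T) := by
    rw [Set.uIcc_of_le hT.le]
    exact fun t ht => (houter.continuousAt.comp (hC1 t ht).continuousAt).continuousWithinAt
  have hci2 : ContinuousOn (fun t => ∑ i, w i * C2 t i) (Set.uIcc (0:ℝ) T) := by
    rw [Set.uIcc_of_le hT.le]
    exact fun t ht => (houter.continuousAt.comp (hC2 t ht).continuousAt).continuousWithinAt
  refine intervalIntegral.integral_mono_on hT.le hci2.intervalIntegrable
    hci1.intervalIntegrable (fun t ht => ?_)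
  exact Finset.sum_le_sum fun i _ => mul_le_mul_of_nonneg_left (hcomp t ht i) (hw i).le
end
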